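/- arXiv:2405.20368 — 6 statements merged into one kernel-verified Lean document; each statement's English description precedes it below -/
import Mathlib

section
/- For every λ > 0, the pair (1 − 1/(q−1), λ) is not in the unique regime; that is, sup_{d≥0} limsup_{n→∞} f_{1−1/(q−1),λ,d}(n) > 1. -/
open scoped Classical

/-- The normalized second eigenvalue of a `d`-regular graph `G`, defined via the
Courant–Fischer characterization (the supremum of Rayleigh quotients over nonzero
vectors orthogonal to the all-ones vector).  By convention, a `0`-regular
(empty) graph has normalized second eigenvalue `1`. -/
noncomputable def normSecondEig {V : Type*} [Fintype V] (d : ℕ) (G : SimpleGraph V) : ℝ :=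
  if d = 0 then 1
  else sSup {r : ℝ | ∃ x : V → ℝ, x ≠ 0 ∧ (∑ i, x i) = 0 ∧
    r = (∑ i, ∑ j, (if G.Adj i j then (d : ℝ)⁻¹ else 0) * x i * x j) / ∑ i, (x i) ^ 2}

/-- `X` is a proper `q`-coloring of `G`. -/
def IsProperColoring {V : Type*} {q : ℕ} (G : SimpleGraph V) (X : V → Fin q) : Prop :=
  ∀ ⦃u v : V⦄, G.Adj u v → X u ≠ X v

/-- The distance between two `q`-colorings: the minimum Hamming distance between
`X` and `σ ∘ Y` over all permutations `σ` of the colors. -/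
noncomputable def colDist {V : Type*} [Fintype V] {q : ℕ} (X Y : V → Fin q) : ℕ :=
  ⨅ σ : Equiv.Perm (Fin q), hammingDist X (σ ∘ Y)

/-- `C` is a `δ`-distinct set of proper `q`-colorings of `G`: every member is a proper
coloring and every pair of distinct members has distance at least `δ * |V|`. -/
def IsDistinctSet {V : Type*} [Fintype V] {q : ℕ} (G : SimpleGraph V) (δ : ℝ)
    (C : Finset (V → Fin q)) : Prop :=
  (∀ X ∈ C, IsProperColoring G X) ∧
  ∀ X ∈ C, ∀ Y ∈ C, X ≠ Y → δ * (Fintype.card V : ℝ) ≤ (colDist X Y : ℝ)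

/-- `f_{δ,λ,d}(n)`: the maximum size of a `δ`-distinct set of proper `q`-colorings of a
`d`-regular graph on at most `n` vertices with normalized second eigenvalue at most `lam`
(`0` if there is no such graph). -/
noncomputable def colorCount (q : ℕ) (δ lam : ℝ) (d n : ℕ) : ℕ :=
  sSup {m : ℕ | ∃ k ≤ n, ∃ G : SimpleGraph (Fin k),
    G.IsRegularOfDegree d ∧ normSecondEig d G ≤ lam ∧
    ∃ C : Finset (Fin k → Fin q), IsDistinctSet G δ C ∧ C.card = m}

/-- `(δ, lam)` is in the exponential regime. -/
noncomputable def ExponentialRegime (q : ℕ) (δ lam : ℝ) : Prop :=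
  0 < ⨆ d : ℕ, Filter.limsup (fun n : ℕ => Real.log (colorCount q δ lam d n) / n) Filter.atTop

/-- `(δ, lam)` is in the constant regime. -/
noncomputable def ConstantRegime (q : ℕ) (δ lam : ℝ) : Prop :=
  (⨆ d : ℕ, Filter.limsup (fun n : ℕ => (colorCount q δ lam d n : ENNReal)) Filter.atTop) < ⊤

/-- `(δ, lam)` is in the unique regime. -/
noncomputable def UniqueRegime (q : ℕ) (δ lam : ℝ) : Prop :=
  (⨆ d : ℕ, Filter.limsup (fun n : ℕ => (colorCount q δ lam d n : ENNReal)) Filter.atTop) = 1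

/-! ### Auxiliary constructions for the proof -/

private lemma card_filter_lt' (N p : ℕ) (h : p ≤ N) :
    (Finset.univ.filter (fun j : Fin N => j.val < p)).card = p := by
  have hall : ∀ m ∈ Finset.range p, m < N := fun m hm =>
    lt_of_lt_of_le (Finset.mem_range.mp hm) h
  have : Finset.univ.filter (fun j : Fin N => j.val < p)
      = (Finset.range p).attachFin hall := by
    ext a
    simp [Finset.mem_attachFin, Finset.mem_range]
  rw [this, Finset.card_attachFin, Finset.card_range]

private lemma card_filter_ge' (N p : ℕ) (h : p ≤ N) :
    (Finset.univ.filter (fun j : Fin N => p ≤ j.val)).card = N - p := by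
  have h1 := Finset.card_filter_add_card_filter_not
    (s := (Finset.univ : Finset (Fin N))) (p := fun j => j.val < p)
  rw [card_filter_lt' N p h] at h1
  have h2 : (Finset.univ.filter (fun j : Fin N => ¬ j.val < p))
      = Finset.univ.filter (fun j : Fin N => p ≤ j.val) := by
    apply Finset.filter_congr; intro j _; constructor <;> omega
  rw [h2] at h1
  have h3 : (Finset.univ : Finset (Fin N)).card = N := by simp
  omega

/-- The complete bipartite graph on `Fin (2*p)` with sides `{0,…,p-1}` and `{p,…,2p-1}`. -/
private def myG (p : ℕ) : SimpleGraph (Fin (2 * p)) where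
  Adj i j := (i.val < p ∧ p ≤ j.val) ∨ (j.val < p ∧ p ≤ i.val)
  symm := ⟨fun i j h => h.symm⟩
  loopless := ⟨fun i h => by rcases h with ⟨h1, h2⟩ | ⟨h1, h2⟩ <;> omega⟩

private lemma myG_regular (p : ℕ) : (myG p).IsRegularOfDegree p := by
  intro v
  classical
  rw [← SimpleGraph.card_neighborFinset_eq_degree, SimpleGraph.neighborFinset_eq_filter]
  by_cases hv : v.val < p
  · have : (Finset.univ.filter ((myG p).Adj v))
        = Finset.univ.filter (fun j : Fin (2*p) => p ≤ j.val) := by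
      apply Finset.filter_congr; intro j _
      show ((v.val < p ∧ p ≤ j.val) ∨ (j.val < p ∧ p ≤ v.val)) ↔ p ≤ j.val
      constructor <;> intro h' <;> [skip; exact Or.inl ⟨hv, h'⟩] <;> omega
    rw [this, card_filter_ge' (2*p) p (by omega)]; omega
  · have : (Finset.univ.filter ((myG p).Adj v))
        = Finset.univ.filter (fun j : Fin (2*p) => j.val < p) := by
      apply Finset.filter_congr; intro j _
      show ((v.val < p ∧ p ≤ j.val) ∨ (j.val < p ∧ p ≤ v.val)) ↔ j.val < p
      constructor <;> intro h' <;> [skip; exact Or.inr ⟨h', by omega⟩] <;> omega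
    rw [this, card_filter_lt' (2*p) p (by omega)]

private lemma myG_eig (p : ℕ) (hp : p ≠ 0) (lam : ℝ) (hlam : 0 ≤ lam) :
    normSecondEig p (myG p) ≤ lam := by
  rw [normSecondEig, if_neg hp]
  apply Real.sSup_le _ hlam
  rintro r ⟨x, hx0, hsum, rfl⟩
  set c : ℝ := ((p : ℕ) : ℝ)⁻¹ with hc
  have hcpos : 0 ≤ c := by positivity
  set L := Finset.univ.filter (fun i : Fin (2*p) => i.val < p) with hLdef
  set R := Finset.univ.filter (fun i : Fin (2*p) => ¬ i.val < p) with hRdef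
  set SL := ∑ i ∈ L, x i with hSL
  set SR := ∑ i ∈ R, x i with hSR
  have hsplitx : SL + SR = 0 := by
    rw [hSL, hSR, hLdef, hRdef, Finset.sum_filter_add_sum_filter_not]
    exact hsum
  have hinner : ∀ i : Fin (2*p),
      (∑ j, (if (myG p).Adj i j then c else 0) * x i * x j)
        = if i.val < p then c * x i * SR else c * x i * SL := by
    intro i
    by_cases hi : i.val < p
    · rw [if_pos hi]
      have hfilt : Finset.univ.filter ((myG p).Adj i) = R := by
        rw [hRdef]; apply Finset.filter_congr; intro j _
        show ((i.val < p ∧ p ≤ j.val) ∨ (j.val < p ∧ p ≤ i.val)) ↔ ¬ j.val < p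
        constructor <;> intro h' <;> [omega; exact Or.inl ⟨hi, by omega⟩]
      calc (∑ j, (if (myG p).Adj i j then c else 0) * x i * x j)
          = ∑ j, (if (myG p).Adj i j then c * x i * x j else 0) := by
            apply Finset.sum_congr rfl; intro j _; split <;> simp
        _ = ∑ j ∈ Finset.univ.filter ((myG p).Adj i), c * x i * x j := by
            rw [Finset.sum_filter]
        _ = c * x i * SR := by rw [hfilt, hSR, Finset.mul_sum]
    · rw [if_neg hi]
      have hfilt : Finset.univ.filter ((myG p).Adj i) = L := by
        rw [hLdef]; apply Finset.filter_congr; intro j _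
        show ((i.val < p ∧ p ≤ j.val) ∨ (j.val < p ∧ p ≤ i.val)) ↔ j.val < p
        constructor <;> intro h' <;> [omega; exact Or.inr ⟨h', by omega⟩]
      calc (∑ j, (if (myG p).Adj i j then c else 0) * x i * x j)
          = ∑ j, (if (myG p).Adj i j then c * x i * x j else 0) := by
            apply Finset.sum_congr rfl; intro j _; split <;> simp
        _ = ∑ j ∈ Finset.univ.filter ((myG p).Adj i), c * x i * x j := by
            rw [Finset.sum_filter]
        _ = c * x i * SL := by rw [hfilt, hSL, Finset.mul_sum]
  have hnum : (∑ i, ∑ j, (if (myG p).Adj i j then c else 0) * x i * x j)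
      = c * SL * SR + c * SR * SL := by
    calc (∑ i, ∑ j, (if (myG p).Adj i j then c else 0) * x i * x j)
        = ∑ i : Fin (2*p), (if i.val < p then c * x i * SR else c * x i * SL) := by
          apply Finset.sum_congr rfl; intro i _; exact hinner i
      _ = (∑ i ∈ L, (c * x i * SR)) + (∑ i ∈ R, (c * x i * SL)) := by
          rw [hLdef, hRdef,
            ← Finset.sum_filter_add_sum_filter_not Finset.univ
              (fun i : Fin (2*p) => i.val < p)
              (fun i => if i.val < p then c * x i * SR else c * x i * SL)]
          congr 1
          · apply Finset.sum_congr rfl; intro i hi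
            simp only [Finset.mem_filter] at hi
            rw [if_pos hi.2]
          · apply Finset.sum_congr rfl; intro i hi
            simp only [Finset.mem_filter] at hi
            rw [if_neg hi.2]
      _ = c * SL * SR + c * SR * SL := by
          rw [← Finset.sum_mul, ← Finset.mul_sum, ← Finset.sum_mul, ← Finset.mul_sum,
            ← hSL, ← hSR]
  rw [hnum]
  have hden : 0 ≤ ∑ i, (x i)^2 := Finset.sum_nonneg fun i _ => sq_nonneg _
  have hSRneg : SR = -SL := by linarith
  have hnn : c * SL * SR + c * SR * SL ≤ 0 := by rw [hSRneg]; nlinarith [sq_nonneg SL]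
  exact le_trans (div_nonpos_iff.mpr (Or.inr ⟨hnn, hden⟩)) hlam

private lemma ham_ge {N q : ℕ} (p : ℕ) (Z W : Fin N → Fin q)
    (hL : ∀ v w : Fin N, v.val < p → w.val < p → Z v = W v → Z w = W w → v = w)
    (hR : ∀ v w : Fin N, ¬ v.val < p → ¬ w.val < p → Z v = W v → Z w = W w → v = w) :
    N - 2 ≤ hammingDist Z W := by
  classical
  set A : Finset (Fin N) := Finset.univ.filter (fun i => Z i = W i) with hA
  have hsplit := Finset.card_filter_add_card_filter_not
    (s := A) (p := fun i : Fin N => i.val < p)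
  have c1 : (A.filter (fun i : Fin N => i.val < p)).card ≤ 1 := by
    apply Finset.card_le_one.mpr
    intro a ha b hb
    simp only [hA, Finset.mem_filter, Finset.mem_univ, true_and] at ha hb
    exact hL a b ha.2 hb.2 ha.1 hb.1
  have c2 : (A.filter (fun i : Fin N => ¬ i.val < p)).card ≤ 1 := by
    apply Finset.card_le_one.mpr
    intro a ha b hb
    simp only [hA, Finset.mem_filter, Finset.mem_univ, true_and] at ha hb
    exact hR a b ha.2 hb.2 ha.1 hb.1
  have hAcard : A.card ≤ 2 := by omega
  have htot := Finset.card_filter_add_card_filter_not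
    (s := (Finset.univ : Finset (Fin N))) (p := fun i : Fin N => Z i ≠ W i)
  have hAeq : (Finset.univ.filter (fun i : Fin N => ¬ Z i ≠ W i)) = A := by
    simp [hA]
  rw [hAeq] at htot
  have huniv : (Finset.univ : Finset (Fin N)).card = N := by simp
  have : hammingDist Z W = (Finset.univ.filter (fun i : Fin N => Z i ≠ W i)).card := rfl
  omega

/-- First coloring: color `0` on the left side, colors `1,…,q-1` (injectively) on the right. -/
private def colX (q : ℕ) (hq : 3 ≤ q) : Fin (2*(q-1)) → Fin q := fun v =>
  if v.val < q - 1 then ⟨0, by omega⟩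
  else ⟨v.val - (q-1) + 1, by have := v.isLt; omega⟩

/-- Second coloring: colors `1,…,q-1` (injectively) on the left side, color `0` on the right. -/
private def colY (q : ℕ) (hq : 3 ≤ q) : Fin (2*(q-1)) → Fin q := fun v =>
  if h : v.val < q - 1 then ⟨v.val + 1, by omega⟩
  else ⟨0, by omega⟩

private lemma colX_proper (q : ℕ) (hq : 3 ≤ q) :
    IsProperColoring (myG (q-1)) (colX q hq) := by
  intro u v huv
  rcases huv with ⟨h1, h2⟩ | ⟨h1, h2⟩
  · simp only [colX]
    rw [if_pos h1, if_neg (by omega)]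
    refine Fin.ne_of_val_ne ?_
    show (0 : ℕ) ≠ v.val - (q-1) + 1
    omega
  · simp only [colX]
    rw [if_neg (by omega), if_pos h1]
    refine Fin.ne_of_val_ne ?_
    show u.val - (q-1) + 1 ≠ (0 : ℕ)
    omega

private lemma colY_proper (q : ℕ) (hq : 3 ≤ q) :
    IsProperColoring (myG (q-1)) (colY q hq) := by
  intro u v huv
  rcases huv with ⟨h1, h2⟩ | ⟨h1, h2⟩
  · simp only [colY]
    rw [dif_pos h1, dif_neg (by omega : ¬ v.val < q - 1)]
    refine Fin.ne_of_val_ne ?_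
    show u.val + 1 ≠ (0 : ℕ)
    omega
  · simp only [colY]
    rw [dif_neg (by omega : ¬ u.val < q - 1), dif_pos h1]
    refine Fin.ne_of_val_ne ?_
    show (0 : ℕ) ≠ v.val + 1
    omega

private lemma ham_XY (q : ℕ) (hq : 3 ≤ q) (σ : Equiv.Perm (Fin q)) :
    2*(q-1) - 2 ≤ hammingDist (colX q hq) (σ ∘ colY q hq) := by
  apply ham_ge (q-1)
  · intro v w hv hw h1 h2
    have e1 : colX q hq v = colX q hq w := by
      simp only [colX]; rw [if_pos hv, if_pos hw]
    have e2 : colY q hq v = colY q hq w := by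
      apply σ.injective
      exact h1.symm.trans (e1.trans h2)
    simp only [colY, dif_pos hv, dif_pos hw, Fin.mk.injEq] at e2
    exact Fin.ext (by omega)
  · intro v w hv hw h1 h2
    have e2 : σ (colY q hq v) = σ (colY q hq w) := by
      congr 1
      simp only [colY]; rw [dif_neg hv, dif_neg hw]
    have e1 : colX q hq v = colX q hq w := by
      exact h1.trans (e2.trans h2.symm)
    simp only [colX, if_neg hv, if_neg hw, Fin.mk.injEq] at e1
    exact Fin.ext (by omega)

private lemma ham_YX (q : ℕ) (hq : 3 ≤ q) (σ : Equiv.Perm (Fin q)) :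
    2*(q-1) - 2 ≤ hammingDist (colY q hq) (σ ∘ colX q hq) := by
  apply ham_ge (q-1)
  · intro v w hv hw h1 h2
    have e2 : σ (colX q hq v) = σ (colX q hq w) := by
      congr 1
      simp only [colX]; rw [if_pos hv, if_pos hw]
    have e1 : colY q hq v = colY q hq w := by
      exact h1.trans (e2.trans h2.symm)
    simp only [colY, dif_pos hv, dif_pos hw, Fin.mk.injEq] at e1
    exact Fin.ext (by omega)
  · intro v w hv hw h1 h2
    have e1 : colY q hq v = colY q hq w := by
      simp only [colY]; rw [dif_neg hv, dif_neg hw]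
    have e2 : colX q hq v = colX q hq w := by
      apply σ.injective
      exact h1.symm.trans (e1.trans h2)
    simp only [colX, if_neg hv, if_neg hw, Fin.mk.injEq] at e2
    exact Fin.ext (by omega)

private lemma colX_ne_colY (q : ℕ) (hq : 3 ≤ q) : colX q hq ≠ colY q hq := by
  intro h
  have := congrFun h ⟨0, by omega⟩
  simp only [colX, colY, if_pos (show (0:ℕ) < q - 1 by omega),
    dif_pos (show ((⟨0, by omega⟩ : Fin (2*(q-1))).val) < q - 1 by simp; omega), Fin.mk.injEq] at this
  omega

private lemma distinct_set (q : ℕ) (hq : 3 ≤ q) :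
    IsDistinctSet (myG (q-1)) (1 - 1 / ((q : ℝ) - 1)) {colX q hq, colY q hq} := by
  have hq1 : ((q : ℝ) - 1) ≠ 0 := by
    have : (3:ℝ) ≤ (q:ℝ) := by exact_mod_cast hq
    linarith
  have hcard : ((Fintype.card (Fin (2*(q-1)))) : ℝ) = 2*((q:ℝ)-1) := by
    rw [Fintype.card_fin]
    push_cast [Nat.cast_sub (by omega : 1 ≤ q)]
    ring
  have hδ : (1 - 1 / ((q : ℝ) - 1)) * (2*((q:ℝ)-1)) = 2*(q:ℝ) - 4 := by
    field_simp
    ring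
  have hbound : ∀ X Y : Fin (2*(q-1)) → Fin q,
      (∀ σ : Equiv.Perm (Fin q), 2*(q-1) - 2 ≤ hammingDist X (σ ∘ Y)) →
      (1 - 1 / ((q : ℝ) - 1)) * ((Fintype.card (Fin (2*(q-1)))) : ℝ) ≤ (colDist X Y : ℝ) := by
    intro X Y h
    have h1 : (2*(q-1) - 2 : ℕ) ≤ colDist X Y := le_ciInf h
    have h2 : ((2*(q-1) - 2 : ℕ) : ℝ) = 2*(q:ℝ) - 4 := by
      push_cast [Nat.cast_sub (by omega : 1 ≤ q), Nat.cast_sub (by omega : 2 ≤ 2*(q-1))]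
      ring
    rw [hcard, hδ, ← h2]
    exact_mod_cast h1
  constructor
  · intro X hX
    rcases Finset.mem_insert.mp hX with h | h
    · rw [h]; exact colX_proper q hq
    · rw [Finset.mem_singleton.mp h]; exact colY_proper q hq
  · intro X hX Y hY hXY
    rcases Finset.mem_insert.mp hX with h | h <;>
      rcases Finset.mem_insert.mp hY with h' | h' <;>
        [skip; skip; skip; skip] <;>
        first
        | (exfalso; apply hXY;
           first
           | exact h.trans h'.symm
           | exact h.trans (Finset.mem_singleton.mp h').symm
           | exact (Finset.mem_singleton.mp h).trans h'.symm
           | exact (Finset.mem_singleton.mp h).trans (Finset.mem_singleton.mp h').symm)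
        | (rw [h, Finset.mem_singleton.mp h']; exact hbound _ _ (ham_XY q hq))
        | (rw [Finset.mem_singleton.mp h, h']; exact hbound _ _ (ham_YX q hq))

/-- For every `lam > 0`, the pair `(1 - 1/(q-1), lam)` is not in the unique
regime: `sup_{d ≥ 0} limsup_{n → ∞} f_{1-1/(q-1), lam, d}(n) > 1`. -/
theorem not_uniqueRegime_at_threshold (q : ℕ) (hq : 3 ≤ q) :
    ∀ lam : ℝ, 0 < lam →
      1 < ⨆ d : ℕ, Filter.limsup
        (fun n : ℕ => (colorCount q (1 - 1 / ((q : ℝ) - 1)) lam d n : ENNReal))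
        Filter.atTop := by
  intro lam hlam
  have key : ∀ n, 2*(q-1) ≤ n → 2 ≤ colorCount q (1 - 1 / ((q : ℝ) - 1)) lam (q-1) n := by
    intro n hn
    have hbdd : BddAbove {m : ℕ | ∃ k ≤ n, ∃ G : SimpleGraph (Fin k),
        G.IsRegularOfDegree (q-1) ∧ normSecondEig (q-1) G ≤ lam ∧
        ∃ C : Finset (Fin k → Fin q),
          IsDistinctSet G (1 - 1 / ((q : ℝ) - 1)) C ∧ C.card = m} := by
      refine ⟨q ^ n, ?_⟩
      rintro m ⟨k, hk, G, _, _, C, _, hC⟩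
      subst hC
      calc C.card ≤ Fintype.card (Fin k → Fin q) := Finset.card_le_univ C
        _ = q ^ k := by simp [Fintype.card_fun]
        _ ≤ q ^ n := Nat.pow_le_pow_right (by omega) hk
    have hmem : 2 ∈ {m : ℕ | ∃ k ≤ n, ∃ G : SimpleGraph (Fin k),
        G.IsRegularOfDegree (q-1) ∧ normSecondEig (q-1) G ≤ lam ∧
        ∃ C : Finset (Fin k → Fin q),
          IsDistinctSet G (1 - 1 / ((q : ℝ) - 1)) C ∧ C.card = m} := by
      refine ⟨2*(q-1), hn, myG (q-1), myG_regular (q-1),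
        myG_eig (q-1) (by omega) lam hlam.le,
        {colX q hq, colY q hq}, distinct_set q hq, ?_⟩
      exact Finset.card_pair (colX_ne_colY q hq)
    exact le_csSup hbdd hmem
  have hfreq : ∃ᶠ n in Filter.atTop,
      (2 : ENNReal) ≤ ((colorCount q (1 - 1 / ((q : ℝ) - 1)) lam (q-1) n : ℕ) : ENNReal) := by
    apply Filter.Eventually.frequently
    rw [Filter.eventually_atTop]
    exact ⟨2*(q-1), fun n hn => by exact_mod_cast key n hn⟩
  have h2 : (2 : ENNReal) ≤ Filter.limsup
      (fun n : ℕ => (colorCount q (1 - 1 / ((q : ℝ) - 1)) lam (q-1) n : ENNReal))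
      Filter.atTop := Filter.le_limsup_of_frequently_le' hfreq
  refine lt_of_lt_of_le (by norm_num : (1:ENNReal) < 2) (le_trans h2 ?_)
  exact le_iSup (fun d => Filter.limsup
    (fun n : ℕ => (colorCount q (1 - 1 / ((q : ℝ) - 1)) lam d n : ENNReal))
    Filter.atTop) (q-1)
end

section
/- For every ε > 0, the pair (1 − 1/q, 1/(q−1)² − ε) is in the unique regime. -/
open scoped Classical

set_option maxHeartbeats 1000000
open Finset

lemma permCard {q : ℕ} (a b a' b' : Fin q) :
    (univ.filter (fun σ : Equiv.Perm (Fin q) => σ a = b)).card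
      = (univ.filter (fun σ : Equiv.Perm (Fin q) => σ a' = b')).card := by
  apply Finset.card_bij' (fun σ _ => Equiv.swap b b' * σ * Equiv.swap a a')
    (fun σ _ => Equiv.swap b b' * σ * Equiv.swap a a')
  · intro σ hσ
    simp only [mem_filter, mem_univ, true_and] at hσ ⊢
    simp [Equiv.Perm.mul_apply, Equiv.swap_apply_right, hσ]
  · intro σ hσ
    simp only [mem_filter, mem_univ, true_and] at hσ ⊢
    simp [Equiv.Perm.mul_apply, Equiv.swap_apply_right, hσ, Equiv.swap_apply_left]
  · intro σ _; group; ext v; simp [Equiv.Perm.mul_apply, Equiv.swap_apply_self]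
  · intro σ _; group; ext v; simp [Equiv.Perm.mul_apply, Equiv.swap_apply_self]

lemma pair_sum {q : ℕ} (hq : 0 < q) (x x' : Fin q) :
    ∑ a : Fin q, ((if x = a then (1:ℝ) else 0) - 1/q) * ((if x' = a then 1 else 0) - 1/q)
      = (if x = x' then 1 else 0) - 1/q := by
  have hsum : ∑ a : Fin q, ((if x = a then (1:ℝ) else 0) * (if x' = a then 1 else 0))
      = (if x = x' then 1 else 0) := by
    rcases eq_or_ne x x' with h | h
    · subst h
      simp [ite_and]
    · rw [if_neg h]
      apply Finset.sum_eq_zero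
      intro a _
      rcases eq_or_ne x a with h1 | h1
      · subst h1; simp [Ne.symm h]
      · simp [h1]
  have h1 : ∑ a : Fin q, (if x = a then (1:ℝ) else 0) = 1 := by simp
  have h2 : ∑ a : Fin q, (if x' = a then (1:ℝ) else 0) = 1 := by simp
  have hqne : (q:ℝ) ≠ 0 := Nat.cast_ne_zero.mpr hq.ne'
  calc ∑ a : Fin q, ((if x = a then (1:ℝ) else 0) - 1/q) * ((if x' = a then 1 else 0) - 1/q)
      = ∑ a : Fin q, ((if x = a then (1:ℝ) else 0) * (if x' = a then 1 else 0)
          - (1/q) * (if x' = a then 1 else 0) - (if x = a then (1:ℝ) else 0) * (1/q)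
          + (1/q)*(1/q)) := by
        apply Finset.sum_congr rfl; intro a _; ring
    _ = (if x = x' then 1 else 0) - 1/q := by
        rw [Finset.sum_add_distrib, Finset.sum_sub_distrib, Finset.sum_sub_distrib,
          hsum, ← Finset.mul_sum, ← Finset.sum_mul, h1, h2]
        simp only [Finset.sum_const, card_univ, Fintype.card_fin, nsmul_eq_mul]
        field_simp
        ring

lemma key (q : ℕ) (hq : 3 ≤ q) (lam : ℝ) (hlam : lam < 1/((q:ℝ)-1)^2)
    {k d : ℕ} (G : SimpleGraph (Fin k)) (hreg : G.IsRegularOfDegree d)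
    (heig : normSecondEig d G ≤ lam)
    (X Y : Fin k → Fin q) (hX : IsProperColoring G X) (hY : IsProperColoring G Y)
    (hne : X ≠ Y) (hdist : (1 - 1/(q:ℝ)) * k ≤ (colDist X Y : ℝ)) : False := by
  have hq0 : 0 < q := by omega
  have hqR : (3:ℝ) ≤ (q:ℝ) := by exact_mod_cast hq
  have hqne : (q:ℝ) ≠ 0 := by positivity
  -- d ≠ 0
  have hlam1 : lam < 1 := by
    have h2 : (1:ℝ) ≤ ((q:ℝ)-1)^2 := by nlinarith
    have : 1/((q:ℝ)-1)^2 ≤ 1 := by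
      rw [div_le_one (by nlinarith)]; exact h2
    linarith
  have hd : d ≠ 0 := by
    intro h
    rw [normSecondEig, if_pos h] at heig
    linarith
  have hdR : (0:ℝ) < d := by
    have : 0 < d := Nat.pos_of_ne_zero hd
    exact_mod_cast this
  -- k > 0
  obtain ⟨v₀, hv₀⟩ := Function.ne_iff.mp hne
  have hk0 : 0 < k := v₀.pos
  have hkR : (0:ℝ) < k := by exact_mod_cast hk0
  -- indicator helpers
  set y : Fin k → Fin q → ℝ := fun v a => (if X v = a then 1 else 0) - 1/q with hy
  set z : Fin k → Fin q → ℝ := fun v b => (if Y v = b then 1 else 0) - 1/q with hz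
  set N : Fin q → Fin q → ℝ :=
    fun a b => ∑ v, (if X v = a then (1:ℝ) else 0) * (if Y v = b then 1 else 0) with hN
  -- agreement counts
  have hA : ∀ σ : Equiv.Perm (Fin q), ∑ b, N (σ b) b
      = ∑ v, (if X v = σ (Y v) then (1:ℝ) else 0) := by
    intro σ
    have hinner : ∀ v : Fin k, ∑ b, (if X v = σ b then (1:ℝ) else 0) * (if Y v = b then 1 else 0)
        = (if X v = σ (Y v) then (1:ℝ) else 0) := by
      intro v
      rw [Finset.sum_eq_single (Y v)]
      · simp
      · intro b _ hb; simp [Ne.symm hb]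
      · intro h; exact absurd (Finset.mem_univ _) h
    calc ∑ b, N (σ b) b
        = ∑ b, ∑ v, (if X v = σ b then (1:ℝ) else 0) * (if Y v = b then 1 else 0) := by
          simp only [hN]
      _ = ∑ v, ∑ b, (if X v = σ b then (1:ℝ) else 0) * (if Y v = b then 1 else 0) :=
          Finset.sum_comm
      _ = ∑ v, (if X v = σ (Y v) then (1:ℝ) else 0) :=
          Finset.sum_congr rfl fun v _ => hinner v
  have hAle : ∀ σ : Equiv.Perm (Fin q),
      ∑ v, (if X v = σ (Y v) then (1:ℝ) else 0) ≤ k/q := by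
    intro σ
    have h1 : colDist X Y ≤ hammingDist X (σ ∘ Y) := ciInf_le (OrderBot.bddBelow _) σ
    have h2 : ((1:ℝ) - 1/q) * k ≤ (hammingDist X (σ ∘ Y) : ℝ) := by
      refine le_trans hdist ?_
      exact_mod_cast h1
    have h4 : (univ.filter (fun v => X v = σ (Y v))).card + hammingDist X (σ ∘ Y) = k := by
      simp only [hammingDist]
      have heq : (univ.filter (fun v : Fin k => X v ≠ (⇑σ ∘ Y) v))
          = (univ.filter (fun v => ¬ (X v = σ (Y v)))) := by
        apply Finset.filter_congr; intro v _; simp [Function.comp]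
      rw [heq, Finset.card_filter_add_card_filter_not]
      simp
    have h5 : ∑ v, (if X v = σ (Y v) then (1:ℝ) else 0)
        = ((univ.filter (fun v => X v = σ (Y v))).card : ℝ) := by
      rw [Finset.sum_boole]
    rw [h5]
    have h6 : ((univ.filter (fun v => X v = σ (Y v))).card : ℝ)
        = (k : ℝ) - (hammingDist X (σ ∘ Y) : ℝ) := by
      have := h4
      push_cast [← this]
      ring
    rw [h6]
    have hq1 : (1:ℝ) ≤ q := by linarith
    have h7 : ((1:ℝ) - 1/q) * k = k - k/q := by ring
    linarith
  have hAeq : ∀ σ : Equiv.Perm (Fin q),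
      ∑ v, (if X v = σ (Y v) then (1:ℝ) else 0) = k/q := by
    set a₀ : Fin q := ⟨0, hq0⟩ with ha₀
    set c₀ : ℕ := (univ.filter (fun σ : Equiv.Perm (Fin q) => σ a₀ = a₀)).card with hc₀
    have hc : ∀ v : Fin k,
        (univ.filter (fun σ : Equiv.Perm (Fin q) => X v = σ (Y v))).card = c₀ := by
      intro v
      have heq : (univ.filter (fun σ : Equiv.Perm (Fin q) => X v = σ (Y v)))
          = (univ.filter (fun σ : Equiv.Perm (Fin q) => σ (Y v) = X v)) := by
        apply Finset.filter_congr; intro σ _; exact eq_comm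
      rw [heq, hc₀]
      exact permCard (Y v) (X v) a₀ a₀
    have hcardP : (Fintype.card (Equiv.Perm (Fin q)) : ℝ) = (q : ℝ) * c₀ := by
      have h1 : Fintype.card (Equiv.Perm (Fin q))
          = ∑ b : Fin q, (univ.filter (fun σ : Equiv.Perm (Fin q) => σ a₀ = b)).card := by
        rw [← Finset.card_univ]
        exact Finset.card_eq_sum_card_fiberwise (fun σ _ => Finset.mem_univ (σ a₀))
      have h2 : ∀ b : Fin q,
          (univ.filter (fun σ : Equiv.Perm (Fin q) => σ a₀ = b)).card = c₀ := fun b =>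
        permCard a₀ b a₀ a₀
      rw [h1, Finset.sum_congr rfl (fun b _ => h2 b)]
      push_cast [Finset.sum_const]
      simp only [Finset.card_univ, Fintype.card_fin, smul_eq_mul]
      norm_cast
    have hsum : ∑ σ : Equiv.Perm (Fin q), ∑ v, (if X v = σ (Y v) then (1:ℝ) else 0)
        = (k : ℝ) * c₀ := by
      rw [Finset.sum_comm]
      have h1 : ∀ v : Fin k, ∑ σ : Equiv.Perm (Fin q), (if X v = σ (Y v) then (1:ℝ) else 0)
          = (c₀ : ℝ) := by
        intro v
        rw [Finset.sum_boole, hc v]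
      rw [Finset.sum_congr rfl (fun v _ => h1 v)]
      push_cast [Finset.sum_const]
      simp only [Finset.card_univ, Fintype.card_fin]
      ring
    have h0 : ∑ σ : Equiv.Perm (Fin q),
        ((k:ℝ)/q - ∑ v, (if X v = σ (Y v) then (1:ℝ) else 0)) = 0 := by
      rw [Finset.sum_sub_distrib, hsum, Finset.sum_const, Finset.card_univ, nsmul_eq_mul]
      rw [show ((Fintype.card (Equiv.Perm (Fin q)) : ℝ)) * ((k:ℝ)/q) - (k:ℝ) * c₀
          = 0 from by rw [hcardP]; field_simp; ring]
    have hterm := (Finset.sum_eq_zero_iff_of_nonneg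
      (fun σ _ => sub_nonneg.mpr (hAle σ))).mp h0
    intro σ
    have := hterm σ (Finset.mem_univ σ)
    linarith
  have hrel : ∀ σ : Equiv.Perm (Fin q), ∑ b, N (σ b) b = k/q := fun σ =>
    (hA σ).trans (hAeq σ)
  -- additive structure
  have hadd : ∀ i j c e : Fin q, i ≠ j → c ≠ e →
      N i c + N j e = N i e + N j c := by
    intro i j c e hij hce
    set σ₁ : Equiv.Perm (Fin q) := Equiv.swap i c with hσ₁
    have hσ₁c : σ₁ c = i := Equiv.swap_apply_right i c
    set j' : Fin q := σ₁ e with hj'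
    have hj'i : j' ≠ i := by
      rw [hj', ← hσ₁c]
      intro h
      exact hce (σ₁.injective h).symm
    set σ : Equiv.Perm (Fin q) := Equiv.swap j j' * σ₁ with hσ
    have hσc : σ c = i := by
      rw [hσ, Equiv.Perm.mul_apply, hσ₁c]
      exact Equiv.swap_apply_of_ne_of_ne hij (Ne.symm hj'i)
    have hσe : σ e = j := by
      rw [hσ, Equiv.Perm.mul_apply, ← hj']
      exact Equiv.swap_apply_right j j'
    set σ' : Equiv.Perm (Fin q) := σ * Equiv.swap c e with hσ'
    have hσ'c : σ' c = j := by
      rw [hσ', Equiv.Perm.mul_apply, Equiv.swap_apply_left, hσe]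
    have hσ'e : σ' e = i := by
      rw [hσ', Equiv.Perm.mul_apply, Equiv.swap_apply_right, hσc]
    have hsame : ∀ b : Fin q, b ≠ c → b ≠ e → σ' b = σ b := by
      intro b hbc hbe
      rw [hσ', Equiv.Perm.mul_apply, Equiv.swap_apply_of_ne_of_ne hbc hbe]
    have hzero : ∀ b ∈ (univ : Finset (Fin q)), b ∉ ({c, e} : Finset (Fin q)) →
        N (σ b) b - N (σ' b) b = 0 := by
      intro b _ hb
      simp only [Finset.mem_insert, Finset.mem_singleton, not_or] at hb
      rw [hsame b hb.1 hb.2, sub_self]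
    have hsplit : ∑ b ∈ ({c, e} : Finset (Fin q)), (N (σ b) b - N (σ' b) b)
        = ∑ b : Fin q, (N (σ b) b - N (σ' b) b) :=
      Finset.sum_subset (Finset.subset_univ _) hzero
    have htotal : ∑ b : Fin q, (N (σ b) b - N (σ' b) b) = 0 := by
      rw [Finset.sum_sub_distrib, hrel σ, hrel σ', sub_self]
    rw [htotal] at hsplit
    rw [Finset.sum_pair hce] at hsplit
    rw [hσc, hσ'c, hσe, hσ'e] at hsplit
    linarith
  have htot : ∑ i, ∑ e, N i e = k := by
    simp only [hN]
    calc ∑ i : Fin q, ∑ e : Fin q, ∑ v, (if X v = i then (1:ℝ) else 0) * (if Y v = e then 1 else 0)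
        = ∑ i : Fin q, ∑ v, ∑ e : Fin q, (if X v = i then (1:ℝ) else 0) * (if Y v = e then 1 else 0) :=
          Finset.sum_congr rfl fun i _ => Finset.sum_comm
      _ = ∑ v, ∑ i : Fin q, ∑ e : Fin q, (if X v = i then (1:ℝ) else 0) * (if Y v = e then 1 else 0) :=
          Finset.sum_comm
      _ = ∑ v : Fin k, (1:ℝ) := by
          apply Finset.sum_congr rfl
          intro v _
          rw [← Finset.sum_mul_sum]
          simp
      _ = k := by simp
  have hconst : ∀ i j c e : Fin q, i ≠ j → N i c - N j c = N i e - N j e := by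
    intro i j c e hij
    rcases eq_or_ne c e with rfl | hce
    · rfl
    · have := hadd i j c e hij hce
      linarith
  have hrc : ∀ i j c : Fin q, N i c - (∑ e, N i e)/q = N j c - (∑ e, N j e)/q := by
    intro i j c
    rcases eq_or_ne i j with rfl | hij
    · rfl
    · have hsum : ∑ e, (N i e - N j e) = (q:ℝ) * (N i c - N j c) := by
        rw [Finset.sum_congr rfl (fun e (_ : e ∈ univ) => (hconst i j c e hij).symm)]
        rw [Finset.sum_const, Finset.card_univ, Fintype.card_fin, nsmul_eq_mul]
      rw [Finset.sum_sub_distrib] at hsum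
      field_simp
      linarith
  have hM : ∀ a b : Fin q, N a b = (∑ e, N a e)/q + (∑ i, N i b)/q - k/q^2 := by
    intro a b
    have hsum : ∑ i, (N i b - (∑ e, N i e)/q) = (q:ℝ) * (N a b - (∑ e, N a e)/q) := by
      rw [Finset.sum_congr rfl (fun i (_ : i ∈ univ) => hrc i a b)]
      rw [Finset.sum_const, Finset.card_univ, Fintype.card_fin, nsmul_eq_mul]
    rw [Finset.sum_sub_distrib, ← Finset.sum_div, htot] at hsum
    have e1 : (q:ℝ) * (N a b - (∑ e, N a e)/q) = q * N a b - ∑ e, N a e := by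
      field_simp
    rw [e1] at hsum
    have e2 : N a b = ((∑ i, N i b) - k/q + (∑ e, N a e))/q := by
      rw [eq_div_iff hqne]; linarith
    rw [e2]
    field_simp
    ring
  have hrow : ∀ a : Fin q, ∑ v, (if X v = a then (1:ℝ) else 0) = ∑ e, N a e := by
    intro a
    simp only [hN]
    rw [Finset.sum_comm]
    apply Finset.sum_congr rfl
    intro v _
    rw [← Finset.mul_sum]
    simp
  have hcol : ∀ b : Fin q, ∑ v, (if Y v = b then (1:ℝ) else 0) = ∑ i, N i b := by
    intro b
    simp only [hN]
    rw [Finset.sum_comm]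
    apply Finset.sum_congr rfl
    intro v _
    rw [← Finset.sum_mul]
    simp
  have horth : ∀ a b : Fin q, ∑ v, y v a * z v b = 0 := by
    intro a b
    have hexp : ∑ v, y v a * z v b
        = N a b - (1/q) * (∑ i, N i b) - (∑ e, N a e) * (1/q) + k * ((1/q)*(1/q)) := by
      calc ∑ v, y v a * z v b
          = ∑ v, ((if X v = a then (1:ℝ) else 0) * (if Y v = b then 1 else 0)
              - (1/q) * (if Y v = b then 1 else 0)
              - (if X v = a then (1:ℝ) else 0) * (1/q) + (1/q)*(1/q)) := by
            apply Finset.sum_congr rfl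
            intro v _
            simp only [hy, hz]
            ring
        _ = N a b - (1/q) * (∑ i, N i b) - (∑ e, N a e) * (1/q) + k * ((1/q)*(1/q)) := by
            rw [Finset.sum_add_distrib, Finset.sum_sub_distrib, Finset.sum_sub_distrib,
              ← Finset.mul_sum, ← Finset.sum_mul, hrow, hcol, Finset.sum_const,
              Finset.card_univ, Fintype.card_fin, nsmul_eq_mul]
            try simp only [hN]
    rw [hexp, hM a b]
    field_simp
    try ring
  -- Rayleigh quotient bounds
  have hrowB : ∀ i, ∑ j, (if G.Adj i j then (d:ℝ)⁻¹ else 0) = 1 := by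
    intro i
    rw [← Finset.sum_filter]
    have hnb : univ.filter (fun j => G.Adj i j) = G.neighborFinset i := by
      ext j; simp [SimpleGraph.mem_neighborFinset]
    rw [hnb, Finset.sum_const]
    have hdeg : (G.neighborFinset i).card = d := hreg i
    rw [hdeg, nsmul_eq_mul]
    exact mul_inv_cancel₀ (ne_of_gt hdR)
  have hray : ∀ a b : Fin q,
      (∑ i, ∑ j, (if G.Adj i j then (d:ℝ)⁻¹ else 0) * (y i a * z i b) * (y j a * z j b))
        ≤ lam * ∑ v, (y v a * z v b)^2 := by
    -- the set of Rayleigh quotients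
    have heig' : sSup {r : ℝ | ∃ x : Fin k → ℝ, x ≠ 0 ∧ (∑ i, x i) = 0 ∧
        r = (∑ i, ∑ j, (if G.Adj i j then (d : ℝ)⁻¹ else 0) * x i * x j) / ∑ i, (x i) ^ 2}
        ≤ lam := by
      rw [normSecondEig, if_neg hd] at heig
      exact heig
    have hcolB : ∀ j, ∑ i, (if G.Adj i j then (d:ℝ)⁻¹ else 0) = 1 := by
      intro j
      rw [← hrowB j]
      apply Finset.sum_congr rfl
      intro i _
      rw [SimpleGraph.adj_comm]
    have hub : ∀ r ∈ {r : ℝ | ∃ x : Fin k → ℝ, x ≠ 0 ∧ (∑ i, x i) = 0 ∧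
        r = (∑ i, ∑ j, (if G.Adj i j then (d : ℝ)⁻¹ else 0) * x i * x j) / ∑ i, (x i) ^ 2},
        r ≤ 1 := by
      rintro r ⟨x, hxne, -, rfl⟩
      obtain ⟨i₀, hi₀⟩ := Function.ne_iff.mp hxne
      have hden : 0 < ∑ i, (x i)^2 := by
        apply Finset.sum_pos' (fun i _ => sq_nonneg (x i))
        exact ⟨i₀, Finset.mem_univ i₀, lt_of_le_of_ne (sq_nonneg _)
          (Ne.symm (pow_ne_zero 2 hi₀))⟩
      rw [div_le_one hden]
      have key2 : ∀ i, ∑ j, (if G.Adj i j then (d:ℝ)⁻¹ else 0) * ((x i^2 + x j^2)/2)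
          = x i^2/2 + (1/2) * ∑ j, (if G.Adj i j then (d:ℝ)⁻¹ else 0) * x j^2 := by
        intro i
        have hterm : ∀ j, (if G.Adj i j then (d:ℝ)⁻¹ else 0) * ((x i^2 + x j^2)/2)
            = (x i^2/2) * (if G.Adj i j then (d:ℝ)⁻¹ else 0)
              + (1/2) * ((if G.Adj i j then (d:ℝ)⁻¹ else 0) * x j^2) := fun j => by ring
        rw [Finset.sum_congr rfl (fun j _ => hterm j), Finset.sum_add_distrib,
          ← Finset.mul_sum, ← Finset.mul_sum, hrowB i]
        ring
      have key3 : ∑ i, ∑ j, (if G.Adj i j then (d:ℝ)⁻¹ else 0) * x j^2 = ∑ j, x j^2 := by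
        rw [Finset.sum_comm]
        apply Finset.sum_congr rfl
        intro j _
        rw [← Finset.sum_mul, hcolB j, one_mul]
      calc ∑ i, ∑ j, (if G.Adj i j then (d:ℝ)⁻¹ else 0) * x i * x j
          ≤ ∑ i, ∑ j, (if G.Adj i j then (d:ℝ)⁻¹ else 0) * ((x i^2 + x j^2)/2) := by
            apply Finset.sum_le_sum
            intro i _
            apply Finset.sum_le_sum
            intro j _
            have hB : (0:ℝ) ≤ (if G.Adj i j then (d:ℝ)⁻¹ else 0) := by
              split
              · positivity
              · exact le_refl 0
            rw [mul_assoc]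
            apply mul_le_mul_of_nonneg_left _ hB
            nlinarith [sq_nonneg (x i - x j)]
        _ = ∑ i, (x i^2/2 + (1/2) * ∑ j, (if G.Adj i j then (d:ℝ)⁻¹ else 0) * x j^2) :=
            Finset.sum_congr rfl (fun i _ => key2 i)
        _ = (∑ i, x i^2/2) + (1/2) * ∑ i, ∑ j, (if G.Adj i j then (d:ℝ)⁻¹ else 0) * x j^2 := by
            rw [Finset.sum_add_distrib, ← Finset.mul_sum]
        _ = ∑ i, (x i)^2 := by
            rw [key3, ← Finset.sum_div]
            ring
    have hbdd : BddAbove {r : ℝ | ∃ x : Fin k → ℝ, x ≠ 0 ∧ (∑ i, x i) = 0 ∧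
        r = (∑ i, ∑ j, (if G.Adj i j then (d : ℝ)⁻¹ else 0) * x i * x j) / ∑ i, (x i) ^ 2} :=
      ⟨1, hub⟩
    have hquot : ∀ x : Fin k → ℝ, (∑ i, x i) = 0 →
        (∑ i, ∑ j, (if G.Adj i j then (d:ℝ)⁻¹ else 0) * x i * x j) ≤ lam * ∑ i, (x i)^2 := by
      intro x hx0
      rcases eq_or_ne x 0 with rfl | hxne
      · simp
      · obtain ⟨i₀, hi₀⟩ := Function.ne_iff.mp hxne
        have hden : 0 < ∑ i, (x i)^2 := by
          apply Finset.sum_pos' (fun i _ => sq_nonneg (x i))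
          exact ⟨i₀, Finset.mem_univ i₀, lt_of_le_of_ne (sq_nonneg _)
            (Ne.symm (pow_ne_zero 2 hi₀))⟩
        have hmem : (∑ i, ∑ j, (if G.Adj i j then (d:ℝ)⁻¹ else 0) * x i * x j) / (∑ i, (x i)^2)
            ∈ {r : ℝ | ∃ x : Fin k → ℝ, x ≠ 0 ∧ (∑ i, x i) = 0 ∧
              r = (∑ i, ∑ j, (if G.Adj i j then (d : ℝ)⁻¹ else 0) * x i * x j) / ∑ i, (x i) ^ 2} :=
          ⟨x, hxne, hx0, rfl⟩
        have hle : (∑ i, ∑ j, (if G.Adj i j then (d:ℝ)⁻¹ else 0) * x i * x j) / (∑ i, (x i)^2)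
            ≤ lam := le_trans (le_csSup hbdd hmem) heig'
        rw [div_le_iff₀ hden] at hle
        linarith [hle, mul_comm lam (∑ i, (x i)^2)]
    intro a b
    have h := hquot (fun v => y v a * z v b) (horth a b)
    exact h
  -- summing
  have hLHS : ∑ a, ∑ b,
      (∑ i, ∑ j, (if G.Adj i j then (d:ℝ)⁻¹ else 0) * (y i a * z i b) * (y j a * z j b))
      = k/q^2 := by
    have hpair : ∀ i j : Fin k, ∑ a, ∑ b, (y i a * z i b) * (y j a * z j b)
        = ((if X i = X j then (1:ℝ) else 0) - 1/q) * ((if Y i = Y j then (1:ℝ) else 0) - 1/q) := by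
      intro i j
      have h1 : ∀ a, ∑ b, (y i a * z i b) * (y j a * z j b)
          = (y i a * y j a) * ∑ b, z i b * z j b := by
        intro a
        rw [Finset.mul_sum]
        apply Finset.sum_congr rfl
        intro b _
        ring
      rw [Finset.sum_congr rfl (fun a (_ : a ∈ univ) => h1 a), ← Finset.sum_mul]
      have h2 : ∑ a, y i a * y j a = (if X i = X j then (1:ℝ) else 0) - 1/q := by
        simp only [hy]; exact pair_sum hq0 (X i) (X j)
      have h3 : ∑ b, z i b * z j b = (if Y i = Y j then (1:ℝ) else 0) - 1/q := by
        simp only [hz]; exact pair_sum hq0 (Y i) (Y j)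
      rw [h2, h3]
    calc ∑ a, ∑ b, ∑ i, ∑ j,
            (if G.Adj i j then (d:ℝ)⁻¹ else 0) * (y i a * z i b) * (y j a * z j b)
        = ∑ a, ∑ i, ∑ b, ∑ j,
            (if G.Adj i j then (d:ℝ)⁻¹ else 0) * (y i a * z i b) * (y j a * z j b) :=
          Finset.sum_congr rfl (fun a _ => Finset.sum_comm)
      _ = ∑ i, ∑ a, ∑ b, ∑ j,
            (if G.Adj i j then (d:ℝ)⁻¹ else 0) * (y i a * z i b) * (y j a * z j b) :=
          Finset.sum_comm
      _ = ∑ i, ∑ a, ∑ j, ∑ b,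
            (if G.Adj i j then (d:ℝ)⁻¹ else 0) * (y i a * z i b) * (y j a * z j b) :=
          Finset.sum_congr rfl (fun i _ => Finset.sum_congr rfl (fun a _ => Finset.sum_comm))
      _ = ∑ i, ∑ j, ∑ a, ∑ b,
            (if G.Adj i j then (d:ℝ)⁻¹ else 0) * (y i a * z i b) * (y j a * z j b) :=
          Finset.sum_congr rfl (fun i _ => Finset.sum_comm)
      _ = ∑ i, ∑ j, (if G.Adj i j then (d:ℝ)⁻¹ else 0)
            * (∑ a, ∑ b, (y i a * z i b) * (y j a * z j b)) := by
          apply Finset.sum_congr rfl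
          intro i _
          apply Finset.sum_congr rfl
          intro j _
          rw [Finset.mul_sum]
          apply Finset.sum_congr rfl
          intro a _
          rw [Finset.mul_sum]
          apply Finset.sum_congr rfl
          intro b _
          ring
      _ = ∑ i, ∑ j, (if G.Adj i j then (d:ℝ)⁻¹ else 0) * ((1/q) * (1/q)) := by
          apply Finset.sum_congr rfl
          intro i _
          apply Finset.sum_congr rfl
          intro j _
          rw [hpair i j]
          by_cases hadj : G.Adj i j
          · rw [if_neg (hX hadj), if_neg (hY hadj)]
            ring
          · rw [if_neg hadj]
            ring
      _ = ∑ i : Fin k, (1/(q:ℝ)) * (1/q) := by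
          apply Finset.sum_congr rfl
          intro i _
          rw [← Finset.sum_mul, hrowB i, one_mul]
      _ = k/q^2 := by
          rw [Finset.sum_const, Finset.card_univ, Fintype.card_fin, nsmul_eq_mul]
          ring
  have hRHS : ∑ a, ∑ b, ∑ v, (y v a * z v b)^2 = k*(1-1/(q:ℝ))^2 := by
    have hyy : ∀ v, ∑ a, y v a * y v a = 1 - 1/(q:ℝ) := by
      intro v
      simp only [hy]
      rw [pair_sum hq0 (X v) (X v), if_pos rfl]
    have hzz : ∀ v, ∑ b, z v b * z v b = 1 - 1/(q:ℝ) := by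
      intro v
      simp only [hz]
      rw [pair_sum hq0 (Y v) (Y v), if_pos rfl]
    calc ∑ a, ∑ b, ∑ v, (y v a * z v b)^2
        = ∑ a, ∑ v, ∑ b, (y v a * z v b)^2 :=
          Finset.sum_congr rfl (fun a _ => Finset.sum_comm)
      _ = ∑ v, ∑ a, ∑ b, (y v a * z v b)^2 := Finset.sum_comm
      _ = ∑ v, (∑ a, y v a * y v a) * (∑ b, z v b * z v b) := by
          apply Finset.sum_congr rfl
          intro v _
          rw [Finset.sum_mul_sum]
          apply Finset.sum_congr rfl
          intro a _
          apply Finset.sum_congr rfl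
          intro b _
          ring
      _ = ∑ v : Fin k, ((1:ℝ) - 1/q) * ((1:ℝ) - 1/q) := by
          apply Finset.sum_congr rfl
          intro v _
          rw [hyy v, hzz v]
      _ = k*(1-1/(q:ℝ))^2 := by
          rw [Finset.sum_const, Finset.card_univ, Fintype.card_fin, nsmul_eq_mul]
          ring
  have hfin : (k:ℝ)/q^2 ≤ lam * (k*(1-1/(q:ℝ))^2) := by
    rw [← hLHS, ← hRHS, Finset.mul_sum]
    apply Finset.sum_le_sum
    intro a _
    rw [Finset.mul_sum]
    exact Finset.sum_le_sum fun b _ => hray a b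
  -- contradiction
  have hq1 : (1:ℝ) < q := by linarith
  have h1 : ((q:ℝ)-1)^2 > 0 := by nlinarith
  have h2 : lam * ((q:ℝ)-1)^2 < 1 := by
    calc lam * ((q:ℝ)-1)^2 < (1/((q:ℝ)-1)^2) * ((q:ℝ)-1)^2 :=
          mul_lt_mul_of_pos_right hlam h1
      _ = 1 := by rw [one_div, inv_mul_cancel₀ (ne_of_gt h1)]
  have h3 : (1-1/(q:ℝ))^2 = ((q:ℝ)-1)^2/q^2 := by field_simp
  rw [h3] at hfin
  have hq2 : (0:ℝ) < (q:ℝ)^2 := by positivity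
  rw [div_le_iff₀ hq2] at hfin
  have h4 : lam * ((k:ℝ) * (((q:ℝ) - 1) ^ 2 / (q:ℝ) ^ 2)) * (q:ℝ) ^ 2
      = (lam * ((q:ℝ)-1)^2) * k := by field_simp
  rw [h4] at hfin
  have h5 := mul_lt_mul_of_pos_right h2 hkR
  linarith

lemma count_le_one (q : ℕ) (hq : 3 ≤ q) (lam : ℝ) (hlam : lam < 1/((q:ℝ)-1)^2)
    (d n : ℕ) : colorCount q (1 - 1/(q:ℝ)) lam d n ≤ 1 := by
  apply csSup_le'
  rintro m ⟨k, hkn, G, hreg, heig, C, ⟨hprop, hdistinct⟩, rfl⟩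
  refine Finset.card_le_one.mpr ?_
  intro X hx Y hy
  by_contra hne
  have hd := hdistinct X hx Y hy hne
  rw [Fintype.card_fin] at hd
  exact key q hq lam hlam G hreg heig X Y (hprop X hx) (hprop Y hy) hne hd

lemma count_eq_one (q : ℕ) (hq : 3 ≤ q) (lam : ℝ) (hlam0 : 0 < lam)
    (hlam : lam < 1/((q:ℝ)-1)^2) (n : ℕ) :
    colorCount q (1 - 1/(q:ℝ)) lam 1 n = 1 := by
  refine le_antisymm (count_le_one q hq lam hlam 1 n) ?_
  have hmem : 1 ∈ {m : ℕ | ∃ k ≤ n, ∃ G : SimpleGraph (Fin k),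
      G.IsRegularOfDegree 1 ∧ normSecondEig 1 G ≤ lam ∧
      ∃ C : Finset (Fin k → Fin q), IsDistinctSet G (1 - 1/(q:ℝ)) C ∧ C.card = 1} := by
    refine ⟨0, Nat.zero_le n, ⊥, fun v => v.elim0, ?_, {fun v => v.elim0}, ⟨?_, ?_⟩,
      Finset.card_singleton _⟩
    · rw [normSecondEig, if_neg one_ne_zero]
      apply Real.sSup_le
      · rintro r ⟨x, hx, -, -⟩
        exact absurd (funext fun v => v.elim0) hx
      · exact le_of_lt hlam0
    · intro X _ u v hadj
      exact u.elim0
    · intro X _ Y _ hne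
      exact absurd (funext fun v => v.elim0) hne
  have hbdd : BddAbove {m : ℕ | ∃ k ≤ n, ∃ G : SimpleGraph (Fin k),
      G.IsRegularOfDegree 1 ∧ normSecondEig 1 G ≤ lam ∧
      ∃ C : Finset (Fin k → Fin q), IsDistinctSet G (1 - 1/(q:ℝ)) C ∧ C.card = m} := by
    refine ⟨1, ?_⟩
    rintro m ⟨k, hkn, G, hreg, heig, C, ⟨hprop, hdistinct⟩, rfl⟩
    refine Finset.card_le_one.mpr ?_
    intro X hx Y hy
    by_contra hne
    have hd := hdistinct X hx Y hy hne
    rw [Fintype.card_fin] at hd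
    exact key q hq lam hlam G hreg heig X Y (hprop X hx) (hprop Y hy) hne hd
  exact le_csSup hbdd hmem


/-- For every `ε > 0` (with `1/(q-1)² - ε` still a legitimate eigenvalue
bound, i.e. positive), the pair `(1 - 1/q, 1/(q-1)² - ε)` is in the unique regime. -/
theorem uniqueRegime_eigenvalue_threshold (q : ℕ) (hq : 3 ≤ q) :
    ∀ ε : ℝ, 0 < ε → ε < 1 / ((q : ℝ) - 1) ^ 2 →
      UniqueRegime q (1 - 1 / (q : ℝ)) (1 / ((q : ℝ) - 1) ^ 2 - ε) := by
  intro ε hε hε2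
  set lam : ℝ := 1 / ((q : ℝ) - 1) ^ 2 - ε with hlamdef
  have hlam0 : 0 < lam := by simp only [hlamdef]; linarith
  have hlam : lam < 1/((q:ℝ)-1)^2 := by simp only [hlamdef]; linarith
  rw [UniqueRegime]
  apply le_antisymm
  · apply iSup_le
    intro d
    have hle : ∀ n : ℕ, (colorCount q (1 - 1/(q:ℝ)) lam d n : ENNReal) ≤ 1 := by
      intro n
      have h := count_le_one q hq lam hlam d n
      exact_mod_cast h
    calc Filter.limsup (fun n : ℕ => (colorCount q (1 - 1/(q:ℝ)) lam d n : ENNReal))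
          Filter.atTop
        ≤ Filter.limsup (fun _ : ℕ => (1 : ENNReal)) Filter.atTop :=
          Filter.limsup_le_limsup (Filter.Eventually.of_forall hle)
      _ = 1 := Filter.limsup_const 1
  · refine le_iSup_of_le 1 ?_
    have heq : (fun n : ℕ => (colorCount q (1 - 1/(q:ℝ)) lam 1 n : ENNReal))
        = fun _ : ℕ => (1 : ENNReal) := by
      funext n
      rw [count_eq_one q hq lam hlam0 hlam n]
      simp
    rw [heq, Filter.limsup_const]
end

section
/- The pair (1 − 1/q, 1/(q−1)²) is not in the constant regime; that is, sup_{d≥0} limsup_{n→∞} f_{1−1/q, 1/(q−1)², d}(n) = ∞. -/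
open scoped Classical

open Finset

namespace NCR

noncomputable def QF (q t : ℕ) (x : (Fin t → Fin q) → ℝ) : ℝ :=
  ∑ u, ∑ v, (if ∀ i, u i ≠ v i then (1:ℝ) else 0) * x u * x v

lemma sum_pi_succ {q t : ℕ} (f : (Fin (t+1) → Fin q) → ℝ) :
    ∑ w, f w = ∑ a : Fin q, ∑ u : Fin t → Fin q, f (Fin.cons a u) := by
  rw [← (Fin.consEquiv (fun _ => Fin q)).sum_comp f, Fintype.sum_prod_type]
  rfl

lemma cons_ne_iff {q t : ℕ} (a b : Fin q) (u v : Fin t → Fin q) :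
    (∀ i, (Fin.cons a u : Fin (t+1) → Fin q) i ≠ (Fin.cons b v : Fin (t+1) → Fin q) i) ↔ (a ≠ b ∧ ∀ i, u i ≠ v i) := by
  rw [Fin.forall_fin_succ]
  simp

lemma sum_offdiag {α : Type*} [Fintype α] [DecidableEq α] (y z : α → ℝ) :
    ∑ u, ∑ v, (if u ≠ v then (1:ℝ) else 0) * y u * z v
      = (∑ u, y u) * (∑ v, z v) - ∑ u, y u * z u := by
  have h : ∀ u : α, ∑ v, (if u ≠ v then (1:ℝ) else 0) * y u * z v
      = y u * ∑ v, z v - y u * z u := by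
    intro u
    have h1 : ∀ v, (if u ≠ v then (1:ℝ) else 0) * y u * z v
        = y u * z v - (if u = v then y u * z v else 0) := by
      intro v; by_cases h : u = v <;> simp [h]
    rw [Finset.sum_congr rfl (fun v _ => h1 v), Finset.sum_sub_distrib,
      Finset.sum_ite_eq univ u (fun v => y u * z v), if_pos (mem_univ u), Finset.mul_sum]
  rw [Finset.sum_congr rfl (fun u _ => h u), Finset.sum_sub_distrib, ← Finset.sum_mul]

lemma QF_sum_inner {q t : ℕ} (F : Fin q → (Fin t → Fin q) → ℝ) :
    ∑ a, QF q t (F a)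
      = ∑ u, ∑ v, (if ∀ i, u i ≠ v i then (1:ℝ) else 0) * ∑ a, F a u * F a v := by
  unfold QF
  rw [Finset.sum_comm]
  refine Finset.sum_congr rfl fun u _ => ?_
  rw [Finset.sum_comm]
  refine Finset.sum_congr rfl fun v _ => ?_
  rw [Finset.mul_sum]
  exact Finset.sum_congr rfl fun a _ => by ring

lemma QF_succ {q t : ℕ} (x : (Fin (t+1) → Fin q) → ℝ) :
    QF q (t+1) x = QF q t (fun u => ∑ a, x (Fin.cons a u))
      - ∑ a : Fin q, QF q t (fun u => x (Fin.cons a u)) := by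
  rw [QF_sum_inner]
  unfold QF
  rw [sum_pi_succ]
  have : ∀ a : Fin q, ∀ u : Fin t → Fin q,
      ∑ w, (if ∀ i, (Fin.cons a u : Fin (t+1) → Fin q) i ≠ w i then (1:ℝ) else 0) * x (Fin.cons a u) * x w
      = ∑ b : Fin q, ∑ v, (if (a ≠ b ∧ ∀ i, u i ≠ v i) then (1:ℝ) else 0)
          * x (Fin.cons a u) * x (Fin.cons b v) := by
    intro a u
    rw [sum_pi_succ]
    refine Finset.sum_congr rfl fun b _ => Finset.sum_congr rfl fun v _ => ?_
    simp only [cons_ne_iff]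
  simp only [this]
  rw [← Finset.sum_sub_distrib]
  rw [Finset.sum_comm]
  refine Finset.sum_congr rfl fun u _ => ?_
  have swap : ∑ a : Fin q, ∑ b : Fin q, ∑ v, (if (a ≠ b ∧ ∀ i, u i ≠ v i) then (1:ℝ) else 0)
          * x (Fin.cons a u) * x (Fin.cons b v)
      = ∑ v, ∑ a : Fin q, ∑ b : Fin q, (if (a ≠ b ∧ ∀ i, u i ≠ v i) then (1:ℝ) else 0)
          * x (Fin.cons a u) * x (Fin.cons b v) := by
    refine Eq.trans (Finset.sum_congr rfl fun a _ => Finset.sum_comm) ?_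
    exact Finset.sum_comm
  rw [swap, ← Finset.sum_sub_distrib]
  refine Finset.sum_congr rfl fun v _ => ?_
  by_cases h : ∀ i, u i ≠ v i
  · have hs := sum_offdiag (fun a => x (Fin.cons a u)) (fun b => x (Fin.cons b v))
    have hsplit : ∀ a b : Fin q, (if a ≠ b ∧ ∀ i, u i ≠ v i then (1:ℝ) else 0)
        = if a ≠ b then 1 else 0 := fun a b => by by_cases hab : a ≠ b <;> simp [hab, h]
    rw [if_pos h]
    simp only [hsplit]
    rw [hs]
    ring
  · simp [h]

lemma scalar_dec {q : ℕ} (hq : (q:ℝ) ≠ 0) (p r : Fin q → ℝ) :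
    (q:ℝ) * ∑ a, p a * r a = (∑ a, p a) * (∑ a, r a)
      + (q:ℝ) * ∑ a, (p a - (∑ b, p b)/q) * (r a - (∑ b, r b)/q) := by
  have hexp : ∀ a : Fin q, (p a - (∑ b, p b)/q) * (r a - (∑ b, r b)/q)
      = p a * r a - p a * ((∑ b, r b)/q) - ((∑ b, p b)/q) * r a
        + ((∑ b, p b)/q) * ((∑ b, r b)/q) := fun a => by ring
  rw [Finset.sum_congr rfl fun a _ => hexp a]
  rw [Finset.sum_add_distrib, Finset.sum_sub_distrib, Finset.sum_sub_distrib,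
    ← Finset.sum_mul, ← Finset.mul_sum, Finset.sum_const, Finset.card_univ]
  simp only [Fintype.card_fin, nsmul_eq_mul]
  field_simp
  ring

lemma QF_split {q : ℕ} (hq : (q:ℝ) ≠ 0) (t : ℕ) (x : (Fin (t+1) → Fin q) → ℝ) :
    (q:ℝ) * QF q (t+1) x
      = ((q:ℝ) - 1) * QF q t (fun u => ∑ a, x (Fin.cons a u))
        - (q:ℝ) * ∑ a : Fin q, QF q t
            (fun u => x (Fin.cons a u) - (∑ b, x (Fin.cons b u)) / q) := by
  have key : (q:ℝ) * ∑ a : Fin q, QF q t (fun u => x (Fin.cons a u))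
      = QF q t (fun u => ∑ a, x (Fin.cons a u))
        + (q:ℝ) * ∑ a : Fin q, QF q t
            (fun u => x (Fin.cons a u) - (∑ b, x (Fin.cons b u)) / q) := by
    rw [QF_sum_inner, QF_sum_inner]
    show _ = QF q t _ + _
    unfold QF
    rw [Finset.mul_sum, Finset.mul_sum, ← Finset.sum_add_distrib]
    refine Finset.sum_congr rfl fun u _ => ?_
    rw [Finset.mul_sum, Finset.mul_sum, ← Finset.sum_add_distrib]
    refine Finset.sum_congr rfl fun v _ => ?_
    by_cases h : ∀ i, u i ≠ v i
    · simp only [if_pos h]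
      have := scalar_dec hq (fun a => x (Fin.cons a u)) (fun a => x (Fin.cons a v))
      simp only [one_mul]
      nlinarith [this]
    · simp [h]
  have hsucc := QF_succ (q := q) (t := t) x
  nlinarith [key, hsucc]

lemma NF_split {q : ℕ} (hq : (q:ℝ) ≠ 0) (t : ℕ) (x : (Fin (t+1) → Fin q) → ℝ) :
    (q:ℝ) * ∑ w, (x w)^2
      = (∑ u, (∑ a, x (Fin.cons a u))^2)
        + (q:ℝ) * ∑ a : Fin q, ∑ u, (x (Fin.cons a u) - (∑ b, x (Fin.cons b u)) / q)^2 := by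
  have per : ∀ u : Fin t → Fin q, (q:ℝ) * ∑ a, (x (Fin.cons a u))^2
      = (∑ a, x (Fin.cons a u))^2
        + (q:ℝ) * ∑ a, (x (Fin.cons a u) - (∑ b, x (Fin.cons b u)) / q)^2 := by
    intro u
    have h1 := scalar_dec hq (fun a => x (Fin.cons a u)) (fun a => x (Fin.cons a u))
    have h2 : ∑ a, x (Fin.cons a u) * x (Fin.cons a u) = ∑ a, (x (Fin.cons a u))^2 :=
      Finset.sum_congr rfl fun a _ => (pow_two _).symm
    have h3 : ∑ a, (x (Fin.cons a u) - (∑ b, x (Fin.cons b u))/q)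
          * (x (Fin.cons a u) - (∑ b, x (Fin.cons b u))/q)
        = ∑ a, (x (Fin.cons a u) - (∑ b, x (Fin.cons b u))/q)^2 :=
      Finset.sum_congr rfl fun a _ => (pow_two _).symm
    rw [h2, h3] at h1
    rw [h1]; ring
  calc (q:ℝ) * ∑ w, (x w)^2
      = (q:ℝ) * ∑ a, ∑ u, (x (Fin.cons a u))^2 := by
        rw [sum_pi_succ (fun w => (x w)^2)]
    _ = (q:ℝ) * ∑ u, ∑ a, (x (Fin.cons a u))^2 := by rw [Finset.sum_comm]
    _ = ∑ u, ((q:ℝ) * ∑ a, (x (Fin.cons a u))^2) := by rw [Finset.mul_sum]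
    _ = ∑ u, ((∑ a, x (Fin.cons a u))^2
        + (q:ℝ) * ∑ a, (x (Fin.cons a u) - (∑ b, x (Fin.cons b u)) / q)^2) :=
        Finset.sum_congr rfl fun u _ => per u
    _ = (∑ u, (∑ a, x (Fin.cons a u))^2)
        + (q:ℝ) * ∑ u, ∑ a, (x (Fin.cons a u) - (∑ b, x (Fin.cons b u)) / q)^2 := by
        rw [Finset.sum_add_distrib, Finset.mul_sum]
    _ = _ := by rw [Finset.sum_comm]

lemma sum_s {q t : ℕ} (x : (Fin (t+1) → Fin q) → ℝ) :
    ∑ u, ∑ a, x (Fin.cons a u) = ∑ w, x w := by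
  rw [sum_pi_succ x, Finset.sum_comm]

lemma QF_one {q : ℕ} (x : (Fin 1 → Fin q) → ℝ) :
    QF q 1 x = (∑ u, x u)^2 - ∑ u, (x u)^2 := by
  have hcond : ∀ u v : Fin 1 → Fin q, (∀ i, u i ≠ v i) ↔ u ≠ v := by
    intro u v
    constructor
    · intro h hne; exact h 0 (by rw [hne])
    · intro hne i he
      exact hne (funext fun j => by rw [Subsingleton.elim j i]; exact he)
  unfold QF
  have : ∀ u v : Fin 1 → Fin q,
      (if ∀ i, u i ≠ v i then (1:ℝ) else 0) * x u * x v
      = (if u ≠ v then (1:ℝ) else 0) * x u * x v := by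
    intro u v
    congr 1
    congr 1
    exact if_congr (hcond u v) rfl rfl
  rw [Finset.sum_congr rfl fun u _ => Finset.sum_congr rfl fun v _ => this u v]
  rw [sum_offdiag x x]
  have h2 : ∑ u, x u * x u = ∑ u, (x u)^2 :=
    Finset.sum_congr rfl fun a _ => (pow_two _).symm
  rw [h2]; ring

lemma sq_sum_le {q t : ℕ} (x : (Fin t → Fin q) → ℝ) :
    (∑ u, x u)^2 ≤ (q^t : ℝ) * ∑ u, (x u)^2 := by
  have := sq_sum_le_card_mul_sum_sq (s := (univ : Finset (Fin t → Fin q))) (f := x)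
  have hcard : ((univ : Finset (Fin t → Fin q)).card : ℝ) = (q^t : ℝ) := by
    simp [Finset.card_univ]
  calc (∑ u, x u)^2 ≤ ((univ : Finset (Fin t → Fin q)).card : ℝ) * ∑ u, (x u)^2 := by
        exact_mod_cast this
    _ = (q^t : ℝ) * ∑ u, (x u)^2 := by rw [hcard]

lemma P13 {q : ℕ} (hq : 3 ≤ q) : ∀ t, ∀ x : (Fin (t+1) → Fin q) → ℝ,
    -(((q:ℝ)-1)^(t+1)) * (∑ u, (x u)^2) ≤ ((q:ℝ)-1) * QF q (t+1) x
    ∧ QF q (t+1) x ≤ ((q:ℝ)-1)^(t+1) * (∑ u, (x u)^2) := by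
  have hq3 : (3:ℝ) ≤ (q:ℝ) := by exact_mod_cast hq
  have hq0 : (q:ℝ) ≠ 0 := by linarith
  have hqpos : (0:ℝ) < (q:ℝ) := by linarith
  have hc : (0:ℝ) < (q:ℝ) - 1 := by linarith
  intro t
  induction t with
  | zero =>
    intro x
    have h1 := QF_one x
    have h2 := sq_sum_le x
    have hq1 : ((q:ℕ):ℝ)^(1:ℕ) = (q:ℝ) := by norm_num
    rw [hq1] at h2
    have hN : 0 ≤ ∑ u : Fin 1 → Fin q, (x u)^2 := Finset.sum_nonneg fun u _ => sq_nonneg _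
    constructor
    · show -(((q:ℝ)-1)^(1:ℕ)) * (∑ u : Fin 1 → Fin q, (x u)^2) ≤ ((q:ℝ)-1) * QF q 1 x
      rw [h1, pow_one]
      nlinarith [sq_nonneg (∑ u : Fin 1 → Fin q, x u)]
    · show QF q 1 x ≤ (((q:ℝ)-1))^(1:ℕ) * (∑ u : Fin 1 → Fin q, (x u)^2)
      rw [h1, pow_one]
      nlinarith
  | succ t ih =>
    intro x
    have hsplitQ := QF_split hq0 (t+1) x
    have hsplitN := NF_split hq0 (t+1) x
    have hihs := ih (fun u => ∑ a, x (Fin.cons a u))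
    have hQz := fun a : Fin q => ih (fun u => x (Fin.cons a u) - (∑ b, x (Fin.cons b u)) / q)
    have hsumub : ∑ a : Fin q, QF q (t+1) (fun u => x (Fin.cons a u) - (∑ b, x (Fin.cons b u)) / q)
        ≤ ((q:ℝ)-1)^(t+1) * ∑ a : Fin q, ∑ u, (x (Fin.cons a u) - (∑ b, x (Fin.cons b u)) / q)^2 := by
      rw [Finset.mul_sum]
      exact Finset.sum_le_sum fun a _ => (hQz a).2
    have hsumlb : -(((q:ℝ)-1)^(t+1)) * (∑ a : Fin q, ∑ u, (x (Fin.cons a u) - (∑ b, x (Fin.cons b u)) / q)^2)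
        ≤ ((q:ℝ)-1) * ∑ a : Fin q, QF q (t+1) (fun u => x (Fin.cons a u) - (∑ b, x (Fin.cons b u)) / q) := by
      calc -(((q:ℝ)-1)^(t+1)) * (∑ a : Fin q, ∑ u, (x (Fin.cons a u) - (∑ b, x (Fin.cons b u)) / q)^2)
          = ∑ a : Fin q, (-(((q:ℝ)-1)^(t+1)) * ∑ u, (x (Fin.cons a u) - (∑ b, x (Fin.cons b u)) / q)^2) :=
            Finset.mul_sum _ _ _
        _ ≤ ∑ a : Fin q, (((q:ℝ)-1) * QF q (t+1) (fun u => x (Fin.cons a u) - (∑ b, x (Fin.cons b u)) / q)) :=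
            Finset.sum_le_sum fun a _ => (hQz a).1
        _ = ((q:ℝ)-1) * ∑ a : Fin q, QF q (t+1) (fun u => x (Fin.cons a u) - (∑ b, x (Fin.cons b u)) / q) :=
            (Finset.mul_sum _ _ _).symm
    have hNzsum : 0 ≤ ∑ a : Fin q, ∑ u, (x (Fin.cons a u) - (∑ b, x (Fin.cons b u)) / q)^2 :=
      Finset.sum_nonneg fun a _ => Finset.sum_nonneg fun u _ => sq_nonneg _
    have hnegsum : -(∑ a : Fin q, QF q (t+1) (fun u => x (Fin.cons a u) - (∑ b, x (Fin.cons b u)) / q))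
        ≤ ((q:ℝ)-1)^(t+1) * ∑ a : Fin q, ∑ u, (x (Fin.cons a u) - (∑ b, x (Fin.cons b u)) / q)^2 := by
      have hper : ∀ a : Fin q, -QF q (t+1) (fun u => x (Fin.cons a u) - (∑ b, x (Fin.cons b u)) / q)
          ≤ ((q:ℝ)-1)^(t+1) * ∑ u, (x (Fin.cons a u) - (∑ b, x (Fin.cons b u)) / q)^2 := by
        intro a
        have h := (hQz a).1
        have hNza : 0 ≤ ∑ u, (x (Fin.cons a u) - (∑ b, x (Fin.cons b u)) / q)^2 :=
          Finset.sum_nonneg fun u _ => sq_nonneg _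
        have h' : -QF q (t+1) (fun u => x (Fin.cons a u) - (∑ b, x (Fin.cons b u)) / q)
            ≤ (((q:ℝ)-1)^(t+1) * ∑ u, (x (Fin.cons a u) - (∑ b, x (Fin.cons b u)) / q)^2) / ((q:ℝ)-1) := by
          rw [le_div_iff₀ hc]; nlinarith [h]
        exact le_trans h' (div_le_self (mul_nonneg (pow_nonneg hc.le _) hNza) (by linarith))
      calc -(∑ a : Fin q, QF q (t+1) (fun u => x (Fin.cons a u) - (∑ b, x (Fin.cons b u)) / q))
          = ∑ a : Fin q, -QF q (t+1) (fun u => x (Fin.cons a u) - (∑ b, x (Fin.cons b u)) / q) := by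
            rw [← Finset.sum_neg_distrib]
        _ ≤ ∑ a : Fin q, ((q:ℝ)-1)^(t+1) * ∑ u, (x (Fin.cons a u) - (∑ b, x (Fin.cons b u)) / q)^2 :=
            Finset.sum_le_sum fun a _ => hper a
        _ = ((q:ℝ)-1)^(t+1) * ∑ a : Fin q, ∑ u, (x (Fin.cons a u) - (∑ b, x (Fin.cons b u)) / q)^2 :=
            (Finset.mul_sum _ _ _).symm
    constructor
    · refine (mul_le_mul_iff_right₀ hqpos).mp ?_
      calc (q:ℝ) * (-(((q:ℝ)-1)^(t+1+1)) * ∑ u, (x u)^2)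
          = -(((q:ℝ)-1)^(t+1)) * (((q:ℝ)-1) * ((q:ℝ) * ∑ u, (x u)^2)) := by
            rw [pow_succ (((q:ℝ)-1)) (t+1)]; ring
        _ = -(((q:ℝ)-1)^(t+1)) * (((q:ℝ)-1) * ((∑ u, (∑ a, x (Fin.cons a u))^2)
              + (q:ℝ) * ∑ a : Fin q, ∑ u, (x (Fin.cons a u) - (∑ b, x (Fin.cons b u)) / q)^2)) := by
            rw [hsplitN]
        _ ≤ ((q:ℝ)-1) * (((q:ℝ)-1) * QF q (t+1) (fun u => ∑ a, x (Fin.cons a u)))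
            - (q:ℝ) * (((q:ℝ)-1) * ∑ a : Fin q, QF q (t+1) (fun u => x (Fin.cons a u) - (∑ b, x (Fin.cons b u)) / q)) := by
            have h1 := mul_le_mul_of_nonneg_left hihs.1 hc.le
            have h2 := mul_le_mul_of_nonneg_left hsumub (le_of_lt (mul_pos hqpos hc))
            linarith
        _ = (q:ℝ) * (((q:ℝ)-1) * QF q (t+1+1) x) := by
            rw [show (q:ℝ) * (((q:ℝ)-1) * QF q (t+1+1) x)
                = ((q:ℝ)-1) * ((q:ℝ) * QF q (t+1+1) x) from by ring, hsplitQ]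
            ring
    · refine (mul_le_mul_iff_right₀ hqpos).mp ?_
      calc (q:ℝ) * QF q (t+1+1) x
          = ((q:ℝ) - 1) * QF q (t+1) (fun u => ∑ a, x (Fin.cons a u))
            - (q:ℝ) * ∑ a : Fin q, QF q (t+1)
                (fun u => x (Fin.cons a u) - (∑ b, x (Fin.cons b u)) / q) := hsplitQ
        _ ≤ ((q:ℝ) - 1) * (((q:ℝ)-1)^(t+1) * ∑ u, (∑ a, x (Fin.cons a u))^2)
            + (q:ℝ) * (((q:ℝ)-1)^(t+1) * ∑ a : Fin q, ∑ u, (x (Fin.cons a u) - (∑ b, x (Fin.cons b u)) / q)^2) := by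
            have h1 := mul_le_mul_of_nonneg_left hihs.2 hc.le
            have h2 := mul_le_mul_of_nonneg_left hnegsum hqpos.le
            linarith
        _ ≤ (q:ℝ) * (((q:ℝ)-1)^(t+1+1) * ∑ u, (x u)^2) := by
            have e : (q:ℝ) * (((q:ℝ)-1)^(t+1+1) * ∑ u, (x u)^2)
                = ((q:ℝ)-1)^(t+1) * (((q:ℝ)-1) * ((q:ℝ) * ∑ u, (x u)^2)) := by
              rw [pow_succ]; ring
            rw [e, hsplitN]
            have h0 : 0 ≤ ((q:ℝ)-2) * ((q:ℝ) * (((q:ℝ)-1)^(t+1)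
                * ∑ a : Fin q, ∑ u, (x (Fin.cons a u) - (∑ b, x (Fin.cons b u)) / q)^2)) :=
              mul_nonneg (by linarith) (mul_nonneg hqpos.le (mul_nonneg (pow_nonneg hc.le _) hNzsum))
            nlinarith [h0]

lemma P2 {q : ℕ} (hq : 3 ≤ q) : ∀ t, ∀ x : (Fin (t+2) → Fin q) → ℝ, (∑ w, x w) = 0 →
    ((q:ℝ)-1)^2 * QF q (t+2) x ≤ ((q:ℝ)-1)^(t+2) * ∑ w, (x w)^2 := by
  have hq3 : (3:ℝ) ≤ (q:ℝ) := by exact_mod_cast hq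
  have hq0 : (q:ℝ) ≠ 0 := by linarith
  have hqpos : (0:ℝ) < (q:ℝ) := by linarith
  have hc : (0:ℝ) < (q:ℝ) - 1 := by linarith
  intro t
  induction t with
  | zero =>
    intro x hx
    have hsplitQ := QF_split hq0 1 x
    have hsplitN := NF_split hq0 1 x
    have hssum : ∑ u, ∑ a, x (Fin.cons a u) = 0 := by rw [sum_s x, hx]
    have hQ1s := QF_one (q := q) (fun u => ∑ a, x (Fin.cons a u))
    rw [hssum] at hQ1s
    have hQz := fun a : Fin q => P13 hq 0 (fun u => x (Fin.cons a u) - (∑ b, x (Fin.cons b u)) / q)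
    have hNs : 0 ≤ ∑ u, (∑ a, x (Fin.cons a u))^2 := Finset.sum_nonneg fun u _ => sq_nonneg _
    have hnegsum : -(∑ a : Fin q, QF q 1 (fun u => x (Fin.cons a u) - (∑ b, x (Fin.cons b u)) / q))
        ≤ ∑ a : Fin q, ∑ u, (x (Fin.cons a u) - (∑ b, x (Fin.cons b u)) / q)^2 := by
      rw [← Finset.sum_neg_distrib]
      refine Finset.sum_le_sum fun a _ => ?_
      have h := (hQz a).1
      rw [pow_one] at h
      exact le_of_mul_le_mul_left (by linarith) hc
    rw [hQ1s] at hsplitQ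
    refine le_of_mul_le_mul_left ?_ hqpos
    have e1 : ((q:ℝ)-1)^2 * ((q:ℝ) * QF q (0+2) x)
        = ((q:ℝ)-1)^2 * (((q:ℝ) - 1) * ((0:ℝ)^2 - ∑ u, (∑ a, x (Fin.cons a u))^2)
          - (q:ℝ) * ∑ a : Fin q, QF q 1 (fun u => x (Fin.cons a u) - (∑ b, x (Fin.cons b u)) / q)) := by
      rw [hsplitQ]
    have e2 : ((q:ℝ)-1)^(0+2) * ((q:ℝ) * ∑ w, (x w)^2)
        = ((q:ℝ)-1)^(0+2) * ((∑ u, (∑ a, x (Fin.cons a u))^2)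
          + (q:ℝ) * ∑ a : Fin q, ∑ u, (x (Fin.cons a u) - (∑ b, x (Fin.cons b u)) / q)^2) := by
      rw [hsplitN]
    have h3 := mul_le_mul_of_nonneg_left hnegsum
      (le_of_lt (mul_pos hqpos (mul_pos hc hc)))
    have h0 : 0 ≤ (((q:ℝ)-1)^3 + ((q:ℝ)-1)^2) * ∑ u, (∑ a, x (Fin.cons a u))^2 :=
      mul_nonneg (by positivity) hNs
    linear_combination e1 - e2 + h3 + h0
  | succ t ih =>
    intro x hx
    have hsplitQ := QF_split hq0 (t+2) x
    have hsplitN := NF_split hq0 (t+2) x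
    have hssum : ∑ u, ∑ a, x (Fin.cons a u) = 0 := by rw [sum_s x, hx]
    have hIH := ih (fun u => ∑ a, x (Fin.cons a u)) hssum
    have hQz := fun a : Fin q => P13 hq (t+1) (fun u => x (Fin.cons a u) - (∑ b, x (Fin.cons b u)) / q)
    have hNzsum : 0 ≤ ∑ a : Fin q, ∑ u, (x (Fin.cons a u) - (∑ b, x (Fin.cons b u)) / q)^2 :=
      Finset.sum_nonneg fun a _ => Finset.sum_nonneg fun u _ => sq_nonneg _
    have hnegsum : -(∑ a : Fin q, QF q (t+2) (fun u => x (Fin.cons a u) - (∑ b, x (Fin.cons b u)) / q))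
        ≤ ((q:ℝ)-1)^(t+1) * ∑ a : Fin q, ∑ u, (x (Fin.cons a u) - (∑ b, x (Fin.cons b u)) / q)^2 := by
      calc -(∑ a : Fin q, QF q (t+2) (fun u => x (Fin.cons a u) - (∑ b, x (Fin.cons b u)) / q))
          = ∑ a : Fin q, -QF q (t+2) (fun u => x (Fin.cons a u) - (∑ b, x (Fin.cons b u)) / q) := by
            rw [← Finset.sum_neg_distrib]
        _ ≤ ∑ a : Fin q, ((q:ℝ)-1)^(t+1) * ∑ u, (x (Fin.cons a u) - (∑ b, x (Fin.cons b u)) / q)^2 := by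
            refine Finset.sum_le_sum fun a _ => ?_
            have h := (hQz a).1
            refine le_of_mul_le_mul_left ?_ hc
            rw [show ((q:ℝ)-1) * (((q:ℝ)-1)^(t+1) * ∑ u, (x (Fin.cons a u) - (∑ b, x (Fin.cons b u)) / q)^2)
              = ((q:ℝ)-1)^(t+1+1) * ∑ u, (x (Fin.cons a u) - (∑ b, x (Fin.cons b u)) / q)^2 from by
                rw [pow_succ]; ring]
            linarith [h]
        _ = ((q:ℝ)-1)^(t+1) * ∑ a : Fin q, ∑ u, (x (Fin.cons a u) - (∑ b, x (Fin.cons b u)) / q)^2 :=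
            (Finset.mul_sum _ _ _).symm
    refine le_of_mul_le_mul_left ?_ hqpos
    calc (q:ℝ) * (((q:ℝ)-1)^2 * QF q (t+1+2) x)
        = ((q:ℝ)-1)^2 * ((q:ℝ) * QF q (t+2+1) x) := by ring
      _ = ((q:ℝ)-1)^2 * (((q:ℝ) - 1) * QF q (t+2) (fun u => ∑ a, x (Fin.cons a u))
          - (q:ℝ) * ∑ a : Fin q, QF q (t+2) (fun u => x (Fin.cons a u) - (∑ b, x (Fin.cons b u)) / q)) := by
          rw [hsplitQ]
      _ = ((q:ℝ)-1) * (((q:ℝ)-1)^2 * QF q (t+2) (fun u => ∑ a, x (Fin.cons a u)))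
          + ((q:ℝ) * ((q:ℝ)-1)^2)
            * (-(∑ a : Fin q, QF q (t+2) (fun u => x (Fin.cons a u) - (∑ b, x (Fin.cons b u)) / q))) := by
          ring
      _ ≤ ((q:ℝ)-1) * (((q:ℝ)-1)^(t+2) * ∑ u, (∑ a, x (Fin.cons a u))^2)
          + ((q:ℝ) * ((q:ℝ)-1)^2)
            * (((q:ℝ)-1)^(t+1) * ∑ a : Fin q, ∑ u, (x (Fin.cons a u) - (∑ b, x (Fin.cons b u)) / q)^2) := by
          have h1 := mul_le_mul_of_nonneg_left hIH hc.le
          have h2 := mul_le_mul_of_nonneg_left hnegsum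
            (mul_nonneg hqpos.le (sq_nonneg ((q:ℝ)-1)))
          linarith
      _ = ((q:ℝ)-1)^(t+1+2) * ((∑ u, (∑ a, x (Fin.cons a u))^2)
          + (q:ℝ) * ∑ a : Fin q, ∑ u, (x (Fin.cons a u) - (∑ b, x (Fin.cons b u)) / q)^2) := by
          rw [show ((q:ℝ)-1)^(t+1+2) = ((q:ℝ)-1)^(t+1) * ((q:ℝ)-1)^2 from by rw [← pow_add],
            show ((q:ℝ)-1)^(t+2) = ((q:ℝ)-1)^(t+1) * ((q:ℝ)-1) from by rw [← pow_succ]]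
          ring
      _ = (q:ℝ) * (((q:ℝ)-1)^(t+1+2) * ∑ w, (x w)^2) := by
          rw [show (q:ℝ) * (((q:ℝ)-1)^(t+1+2) * ∑ w, (x w)^2)
            = ((q:ℝ)-1)^(t+1+2) * ((q:ℝ) * ∑ w, (x w)^2) from by ring, hsplitN]

lemma spectral {q : ℕ} (hq : 3 ≤ q) {t : ℕ} (ht : 2 ≤ t) (x : (Fin t → Fin q) → ℝ)
    (hx : ∑ w, x w = 0) :
    ((q:ℝ)-1)^2 * QF q t x ≤ ((q:ℝ)-1)^t * ∑ w, (x w)^2 := by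
  obtain ⟨k, rfl⟩ : ∃ k, t = k + 2 := ⟨t - 2, by omega⟩
  exact P2 hq k x hx

noncomputable def eqv (q t : ℕ) : (Fin t → Fin q) ≃ Fin (q^t) :=
  Fintype.equivFinOfCardEq (by simp)

def tG (q t : ℕ) (ht : t ≠ 0) : SimpleGraph (Fin (q^t)) where
  Adj i j := ∀ r, (eqv q t).symm i r ≠ (eqv q t).symm j r
  symm := by constructor; intro i j h r; exact (h r).symm
  loopless := by constructor; intro i h; exact h ⟨0, Nat.pos_of_ne_zero ht⟩ rfl

lemma card_filter_equiv {α β : Type*} [Fintype α] [Fintype β] (e : α ≃ β) (p : α → Prop) :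
    ((univ : Finset β).filter (fun b => p (e.symm b))).card
      = ((univ : Finset α).filter p).card := by
  refine Finset.card_bij (fun b _ => e.symm b) ?_ ?_ ?_
  · intro b hb; simp only [Finset.mem_filter, Finset.mem_univ, true_and] at hb ⊢; exact hb
  · intro b1 _ b2 _ h; exact e.symm.injective h
  · intro a ha
    simp only [Finset.mem_filter, Finset.mem_univ, true_and] at ha
    exact ⟨e a, by simp [ha], by simp⟩

lemma tG_regular {q t : ℕ} (hq : 3 ≤ q) (ht : t ≠ 0) :
    (tG q t ht).IsRegularOfDegree ((q-1)^t) := by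
  intro i
  rw [← SimpleGraph.card_neighborFinset_eq_degree]
  have h1 : (tG q t ht).neighborFinset i
      = (univ : Finset (Fin (q^t))).filter
          (fun j => ∀ r, (eqv q t).symm i r ≠ (eqv q t).symm j r) := by
    ext j
    simp only [SimpleGraph.mem_neighborFinset, Finset.mem_filter, Finset.mem_univ, true_and]
    exact Iff.rfl
  rw [h1]
  have h2 : ((univ : Finset (Fin (q^t))).filter
        (fun j => ∀ r, (eqv q t).symm i r ≠ (eqv q t).symm j r)).card
      = ((univ : Finset (Fin t → Fin q)).filter
          (fun v => ∀ r, (eqv q t).symm i r ≠ v r)).card := by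
    have := card_filter_equiv (eqv q t) (fun v => ∀ r, (eqv q t).symm i r ≠ v r)
    convert this using 3
  rw [h2]
  have h3 : (univ : Finset (Fin t → Fin q)).filter
        (fun v => ∀ r, (eqv q t).symm i r ≠ v r)
      = Fintype.piFinset (fun r => ({(eqv q t).symm i r}ᶜ : Finset (Fin q))) := by
    ext v
    simp [Fintype.mem_piFinset, ne_comm]
  rw [h3, Fintype.card_piFinset]
  simp [Finset.card_compl]

lemma tG_eig {q t : ℕ} (hq : 3 ≤ q) (ht : 2 ≤ t) :
    normSecondEig ((q-1)^t) (tG q t (by omega)) ≤ 1/((q:ℝ)-1)^2 := by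
  have hq3 : (3:ℝ) ≤ (q:ℝ) := by exact_mod_cast hq
  have hc : (0:ℝ) < (q:ℝ) - 1 := by linarith
  have hd0 : (q-1)^t ≠ 0 := pow_ne_zero _ (by omega)
  have hdcast : (((q-1)^t : ℕ) : ℝ) = ((q:ℝ)-1)^t := by
    push_cast [Nat.cast_sub (by omega : 1 ≤ q)]
    ring
  have hdpos : (0:ℝ) < (((q-1)^t : ℕ) : ℝ) := by rw [hdcast]; positivity
  rw [normSecondEig, if_neg hd0]
  apply Real.sSup_le
  · rintro r ⟨x, hx0, hxs, rfl⟩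
    set e := eqv q t with he
    set y : (Fin t → Fin q) → ℝ := fun u => x (e u) with hy
    have hAdj : ∀ u v : Fin t → Fin q,
        (tG q t (by omega)).Adj (e u) (e v) ↔ ∀ r, u r ≠ v r := by
      intro u v
      show (∀ r, e.symm (e u) r ≠ e.symm (e v) r) ↔ _
      simp
    have hnum : (∑ i, ∑ j, (if (tG q t (by omega : t ≠ 0)).Adj i j
          then (((q-1)^t : ℕ) : ℝ)⁻¹ else 0) * x i * x j)
        = (((q-1)^t : ℕ) : ℝ)⁻¹ * QF q t y := by
      rw [← Equiv.sum_comp e (fun i => ∑ j, (if (tG q t (by omega : t ≠ 0)).Adj i j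
          then (((q-1)^t : ℕ) : ℝ)⁻¹ else 0) * x i * x j)]
      unfold QF
      rw [Finset.mul_sum]
      refine Finset.sum_congr rfl fun u _ => ?_
      rw [← Equiv.sum_comp e (fun j => (if (tG q t (by omega : t ≠ 0)).Adj (e u) j
          then (((q-1)^t : ℕ) : ℝ)⁻¹ else 0) * x (e u) * x j)]
      rw [Finset.mul_sum]
      refine Finset.sum_congr rfl fun v _ => ?_
      rw [if_congr (hAdj u v) rfl rfl]
      by_cases h : ∀ r, u r ≠ v r
      · simp only [if_pos h]; ring
      · simp [h]
    have hden : (∑ i, (x i)^2) = ∑ u, (y u)^2 := by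
      rw [← Equiv.sum_comp e (fun i => (x i)^2)]
    have hys : ∑ u, y u = 0 := by
      rw [hy]
      rw [Equiv.sum_comp e x]
      exact hxs
    have hypos : 0 < ∑ u, (y u)^2 := by
      obtain ⟨i, hi⟩ : ∃ i, x i ≠ 0 := by
        by_contra hcon
        push_neg at hcon
        exact hx0 (funext hcon)
      refine Finset.sum_pos' (fun u _ => sq_nonneg _) ⟨e.symm i, Finset.mem_univ _, ?_⟩
      have : y (e.symm i) = x i := by rw [hy]; simp
      rw [this]
      exact lt_of_le_of_ne (sq_nonneg _) (Ne.symm (pow_ne_zero 2 hi))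
    rw [hnum, hden]
    have hspec := spectral hq ht y hys
    rw [div_le_iff₀ hypos]
    rw [hdcast]
    have hct : (0:ℝ) < ((q:ℝ)-1)^t := by positivity
    have hQle : QF q t y ≤ ((q:ℝ)-1)^t * (∑ u, (y u)^2) / ((q:ℝ)-1)^2 := by
      rw [le_div_iff₀ (by positivity : (0:ℝ) < ((q:ℝ)-1)^2)]
      nlinarith [hspec]
    calc (((q:ℝ)-1)^t)⁻¹ * QF q t y
        ≤ (((q:ℝ)-1)^t)⁻¹ * (((q:ℝ)-1)^t * (∑ u, (y u)^2) / ((q:ℝ)-1)^2) := by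
          exact mul_le_mul_of_nonneg_left hQle (by positivity)
      _ = 1/((q:ℝ)-1)^2 * ∑ u, (y u)^2 := by field_simp
  · positivity

noncomputable def colX (q t : ℕ) (r : Fin t) : Fin (q^t) → Fin q :=
  fun i => (eqv q t).symm i r

lemma colX_proper {q t : ℕ} (ht : t ≠ 0) (r : Fin t) :
    IsProperColoring (tG q t ht) (colX q t r) := by
  intro u v hAdj
  exact hAdj r

lemma colX_inj {q t : ℕ} (hq : 3 ≤ q) : Function.Injective (colX q t) := by
  intro r s h
  by_contra hrs
  set v : Fin t → Fin q := fun i => if i = r then ⟨1, by omega⟩ else ⟨0, by omega⟩ with hv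
  have h1 : colX q t r ((eqv q t) v) = colX q t s ((eqv q t) v) := by rw [h]
  unfold colX at h1
  simp only [Equiv.symm_apply_apply] at h1
  rw [hv] at h1
  simp only [if_pos rfl, if_neg (fun hsr : s = r => hrs hsr.symm)] at h1
  exact absurd (congrArg Fin.val h1) (by simp)

def resEquiv (q t : ℕ) (r s : Fin t) (hrs : r ≠ s) (σ : Equiv.Perm (Fin q)) :
    {v : Fin t → Fin q // v r = σ (v s)} ≃ ({i : Fin t // i ≠ r} → Fin q) where
  toFun v := fun i => v.1 i.1
  invFun w := ⟨fun i => if h : i = r then σ (w ⟨s, fun hsr => hrs hsr.symm⟩) else w ⟨i, h⟩, by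
    simp only [dif_pos]
    rw [dif_neg (fun hsr : s = r => hrs hsr.symm)]⟩
  left_inv v := by
    apply Subtype.ext
    funext i
    by_cases h : i = r
    · subst h
      simp only [dif_pos rfl]
      rw [← v.2]
      simp
    · simp [dif_neg h]
  right_inv w := by
    funext i
    simp [dif_neg i.2]

lemma agree_card {q t : ℕ} (hq : 3 ≤ q) (r s : Fin t) (hrs : r ≠ s) (σ : Equiv.Perm (Fin q)) :
    ((univ : Finset (Fin (q^t))).filter
      (fun i => colX q t r i = σ (colX q t s i))).card = q^(t-1) := by
  have h1 : ((univ : Finset (Fin (q^t))).filter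
        (fun i => colX q t r i = σ (colX q t s i))).card
      = ((univ : Finset (Fin t → Fin q)).filter (fun v => v r = σ (v s))).card := by
    have := card_filter_equiv (eqv q t) (fun v => v r = σ (v s))
    convert this using 3
    exact Iff.rfl
  rw [h1, ← Fintype.card_subtype]
  rw [Fintype.card_congr (resEquiv q t r s hrs σ)]
  rw [Fintype.card_fun]
  congr 1
  · simp
  · rw [Fintype.card_subtype_compl, Fintype.card_subtype_eq, Fintype.card_fin]

lemma ham_eq {q t : ℕ} (hq : 3 ≤ q) (r s : Fin t) (hrs : r ≠ s) (σ : Equiv.Perm (Fin q)) :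
    hammingDist (colX q t r) (σ ∘ colX q t s) = q^t - q^(t-1) := by
  have hag := agree_card hq r s hrs σ
  have hcard : (univ : Finset (Fin (q^t))).card = q^t := by simp
  unfold hammingDist
  have h1 : ({i | colX q t r i ≠ (σ ∘ colX q t s) i} : Finset (Fin (q^t)))
      = univ \ (univ.filter (fun i => colX q t r i = σ (colX q t s i))) := by
    ext i
    simp [Function.comp]
  rw [h1, Finset.card_sdiff_of_subset (Finset.filter_subset _ _), hag, hcard]

lemma colDist_ge {q t : ℕ} (hq : 3 ≤ q) (r s : Fin t) (hrs : r ≠ s) :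
    (q^t - q^(t-1) : ℕ) ≤ colDist (colX q t r) (colX q t s) := by
  unfold colDist
  exact le_ciInf fun σ => le_of_eq (ham_eq hq r s hrs σ).symm

lemma distinct_set {q t : ℕ} (hq : 3 ≤ q) (ht : 2 ≤ t) :
    ∃ C : Finset (Fin (q^t) → Fin q),
      IsDistinctSet (tG q t (by omega)) (1 - 1/(q:ℝ)) C ∧ C.card = t := by
  have hqR : (3:ℝ) ≤ (q:ℝ) := by exact_mod_cast hq
  refine ⟨Finset.image (fun r => colX q t r) univ, ⟨?_, ?_⟩, ?_⟩
  · intro X hX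
    obtain ⟨r, _, rfl⟩ := Finset.mem_image.mp hX
    exact colX_proper _ r
  · intro X hX Y hY hXY
    obtain ⟨r, _, rfl⟩ := Finset.mem_image.mp hX
    obtain ⟨s, _, rfl⟩ := Finset.mem_image.mp hY
    have hrs : r ≠ s := fun h => hXY (by rw [h])
    have hle := colDist_ge hq r s hrs
    have hcast : ((q^t - q^(t-1) : ℕ) : ℝ) = (q:ℝ)^t - (q:ℝ)^(t-1) := by
      rw [Nat.cast_sub (Nat.pow_le_pow_right (by omega) (by omega))]
      push_cast; ring
    have hcardV : ((Fintype.card (Fin (q^t)) : ℕ) : ℝ) = (q:ℝ)^t := by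
      simp
    rw [hcardV]
    have hpow : (q:ℝ)^t = (q:ℝ)^(t-1) * (q:ℝ) := by
      rw [← pow_succ]; congr 1; omega
    have key : (1 - 1/(q:ℝ)) * (q:ℝ)^t = (q:ℝ)^t - (q:ℝ)^(t-1) := by
      rw [sub_mul, one_mul]
      rw [show 1/(q:ℝ) * (q:ℝ)^t = (q:ℝ)^(t-1) from by
        rw [hpow]; field_simp]
    rw [key]
    calc (q:ℝ)^t - (q:ℝ)^(t-1) = ((q^t - q^(t-1) : ℕ) : ℝ) := hcast.symm
      _ ≤ (colDist (colX q t r) (colX q t s) : ℝ) := Nat.cast_le.mpr hle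
  · rw [Finset.card_image_of_injective _ (colX_inj hq)]; simp

lemma colorCount_ge {q : ℕ} (hq : 3 ≤ q) (t : ℕ) (ht : 2 ≤ t) (M : ℕ) (hM : M ≤ t)
    (n : ℕ) (hn : q^t ≤ n) :
    M ≤ colorCount q (1 - 1/(q:ℝ)) (1/((q:ℝ)-1)^2) ((q-1)^t) n := by
  obtain ⟨C, hC, hCcard⟩ := distinct_set hq ht
  obtain ⟨C', hC'sub, hC'card⟩ := Finset.exists_subset_card_eq
    (show M ≤ C.card by rw [hCcard]; exact hM)
  apply le_csSup
  · refine ⟨q^n, ?_⟩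
    rintro m ⟨k, hk, G, hreg, heig, C0, hC0, rfl⟩
    calc C0.card ≤ (univ : Finset (Fin k → Fin q)).card := Finset.card_le_univ C0
      _ = q^k := by simp [Finset.card_univ]
      _ ≤ q^n := Nat.pow_le_pow_right (by omega) hk
  · exact ⟨q^t, hn, tG q t (by omega), tG_regular hq (by omega), tG_eig hq ht,
      C', ⟨fun X hX => hC.1 X (hC'sub hX),
        fun X hX Y hY hXY => hC.2 X (hC'sub hX) Y (hC'sub hY) hXY⟩, hC'card⟩

end NCR

/-- The pair `(1 - 1/q, 1/(q-1)²)` is not in the constant regime: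
`sup_{d ≥ 0} limsup_{n → ∞} f_{1-1/q, 1/(q-1)², d}(n) = ∞`. -/
theorem not_constantRegime (q : ℕ) (hq : 3 ≤ q) :
    (⨆ d : ℕ, Filter.limsup
      (fun n : ℕ => (colorCount q (1 - 1 / (q : ℝ)) (1 / ((q : ℝ) - 1) ^ 2) d n : ENNReal))
      Filter.atTop) = ⊤ := by
  by_contra hne
  obtain ⟨M, hM⟩ := ENNReal.exists_nat_gt hne
  have hbound : (M : ENNReal) ≤ Filter.limsup
      (fun n : ℕ => (colorCount q (1 - 1 / (q : ℝ)) (1 / ((q : ℝ) - 1) ^ 2) ((q-1)^(M+2)) n : ENNReal))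
      Filter.atTop := by
    have hev : (fun _ : ℕ => (M:ENNReal)) ≤ᶠ[Filter.atTop]
        (fun n : ℕ => (colorCount q (1 - 1 / (q : ℝ)) (1 / ((q : ℝ) - 1) ^ 2) ((q-1)^(M+2)) n : ENNReal)) := by
      filter_upwards [Filter.eventually_ge_atTop (q^(M+2))] with n hn
      exact_mod_cast Nat.cast_le.mpr
        (NCR.colorCount_ge hq (M+2) (by omega) M (by omega) n hn)
    calc (M:ENNReal) = Filter.limsup (fun _ : ℕ => (M:ENNReal)) Filter.atTop :=
        (Filter.limsup_const _).symm
      _ ≤ _ := Filter.limsup_le_limsup hev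
  have hfin : (M : ENNReal) ≤ ⨆ d : ℕ, Filter.limsup
      (fun n : ℕ => (colorCount q (1 - 1 / (q : ℝ)) (1 / ((q : ℝ) - 1) ^ 2) d n : ENNReal))
      Filter.atTop :=
    hbound.trans (le_iSup (fun d : ℕ => Filter.limsup
      (fun n : ℕ => (colorCount q (1 - 1 / (q : ℝ)) (1 / ((q : ℝ) - 1) ^ 2) d n : ENNReal))
      Filter.atTop) ((q-1)^(M+2)))
  exact absurd hfin (not_le.mpr hM)
end

section
/- Let H be a 3-regular graph with normalized second eigenvalue λ₂(H) ≤ 2√2/3, and let G be the gadget-replacement graph of H. Then λ₂(G) ≤ 1 − 10⁻⁴. -/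
open scoped Classical

/-- The vertex set of the gadget-replacement graph of a graph `H` on `Fin N`:
the original vertices, together with, for each edge (represented as an ordered
pair `p` with `p.1 < p.2`), the six vertices of a copy of `K₃,₃⁻` (parts
`{0,1,2}` and `{3,4,5}`, with the edge `0–3` removed, so `u = 0` and `v = 3`). -/
abbrev GadgetVertex {N : ℕ} (H : SimpleGraph (Fin N)) : Type :=
  Fin N ⊕ ({p : Fin N × Fin N // p.1 < p.2 ∧ H.Adj p.1 p.2} × Fin 6)

/-- The gadget-replacement graph of a graph `H`: every edge `xy` of `H` (with `x < y`)
is deleted and replaced by a copy `K_{xy}` of `K₃,₃⁻`, adding the edges `x–u` and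
`y–v` where `u = 0` and `v = 3` are the endpoints of the removed edge of `K₃,₃⁻`. -/
def gadgetGraph {N : ℕ} (H : SimpleGraph (Fin N)) : SimpleGraph (GadgetVertex H) :=
  SimpleGraph.fromRel (fun a b =>
    match a, b with
    | Sum.inl x, Sum.inr (e, i) =>
        (e.val.1 = x ∧ i = (0 : Fin 6)) ∨ (e.val.2 = x ∧ i = (3 : Fin 6))
    | Sum.inr (e, i), Sum.inr (e', j) =>
        e = e' ∧ i.val < 3 ∧ 3 ≤ j.val ∧ ¬(i.val = 0 ∧ j.val = 3)
    | _, _ => False)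

namespace GadgetAux

def Cond (j k : Fin 6) : Prop :=
  (j.val < 3 ∧ 3 ≤ k.val ∧ ¬(j.val = 0 ∧ k.val = 3)) ∨
  (k.val < 3 ∧ 3 ≤ j.val ∧ ¬(k.val = 0 ∧ j.val = 3))

instance (j k : Fin 6) : Decidable (Cond j k) := by unfold Cond; exact inferInstance

variable {N : ℕ} {H : SimpleGraph (Fin N)}

abbrev GE (H : SimpleGraph (Fin N)) := {p : Fin N × Fin N // p.1 < p.2 ∧ H.Adj p.1 p.2}

lemma adj_inl_inl (v w : Fin N) : ¬ (gadgetGraph H).Adj (Sum.inl v) (Sum.inl w) := by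
  simp [gadgetGraph, SimpleGraph.fromRel_adj]

lemma adj_inl_inr (v : Fin N) (e : GE H) (k : Fin 6) :
    (gadgetGraph H).Adj (Sum.inl v) (Sum.inr (e, k)) ↔
      ((e.val.1 = v ∧ k = 0) ∨ (e.val.2 = v ∧ k = 3)) := by
  simp [gadgetGraph, SimpleGraph.fromRel_adj]

lemma adj_inr_inl (v : Fin N) (e : GE H) (k : Fin 6) :
    (gadgetGraph H).Adj (Sum.inr (e, k)) (Sum.inl v) ↔
      ((e.val.1 = v ∧ k = 0) ∨ (e.val.2 = v ∧ k = 3)) := by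
  rw [SimpleGraph.adj_comm]; exact adj_inl_inr v e k

lemma adj_inr_inr (e e' : GE H) (j k : Fin 6) :
    (gadgetGraph H).Adj (Sum.inr (e, j)) (Sum.inr (e', k)) ↔ (e = e' ∧ Cond j k) := by
  constructor
  · rintro ⟨hne, h | h⟩
    · exact ⟨h.1, Or.inl h.2⟩
    · exact ⟨h.1.symm, Or.inr h.2⟩
  · rintro ⟨rfl, hc⟩
    refine ⟨?_, ?_⟩
    · intro hh
      have : j = k := by simpa using hh
      subst this
      rcases hc with ⟨h1, h2, _⟩ | ⟨h1, h2, _⟩ <;> omega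
    · rcases hc with h | h
      · exact Or.inl ⟨rfl, h⟩
      · exact Or.inr ⟨rfl, h⟩

lemma sum_pick {α : Type*} [Fintype α] [DecidableEq α] (A B : α) (g : α → ℝ)
    (P Q : Prop) [Decidable P] [Decidable Q] (hPQ : ¬(P ∧ Q)) :
    ∑ v, (if (A = v ∧ P) ∨ (B = v ∧ Q) then g v else 0)
      = (if P then g A else 0) + (if Q then g B else 0) := by
  by_cases hP : P <;> by_cases hQ : Q
  · exact absurd ⟨hP, hQ⟩ hPQ
  · simp only [hP, hQ, and_true, and_false, or_false, if_true, if_false, add_zero]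
    rw [Finset.sum_ite_eq]
    simp
  · simp only [hP, hQ, and_true, and_false, false_or, if_true, if_false, zero_add]
    rw [Finset.sum_ite_eq]
    simp
  · simp [hP, hQ]

lemma decomp (x : GadgetVertex H → ℝ) (f : ℝ → ℝ → ℝ) :
    (∑ a, ∑ b, if (gadgetGraph H).Adj a b then f (x a) (x b) else 0)
      = ∑ e : GE H, (f (x (Sum.inl e.val.1)) (x (Sum.inr (e, 0)))
          + f (x (Sum.inr (e, 0))) (x (Sum.inl e.val.1))
          + f (x (Sum.inl e.val.2)) (x (Sum.inr (e, 3)))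
          + f (x (Sum.inr (e, 3))) (x (Sum.inl e.val.2))
          + ∑ j, ∑ k, if Cond j k then f (x (Sum.inr (e, j))) (x (Sum.inr (e, k))) else 0) := by
  rw [Fintype.sum_sum_type]
  have hB11 : ∀ v : Fin N, ∀ w : Fin N,
      (if (gadgetGraph H).Adj (Sum.inl v) (Sum.inl w) then f (x (Sum.inl v)) (x (Sum.inl w)) else 0) = 0 :=
    fun v w => if_neg (adj_inl_inl v w)
  have hsplit : ∀ a : GadgetVertex H,
      (∑ b, if (gadgetGraph H).Adj a b then f (x a) (x b) else 0)
        = (∑ w : Fin N, if (gadgetGraph H).Adj a (Sum.inl w) then f (x a) (x (Sum.inl w)) else 0)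
          + ∑ e : GE H, ∑ k : Fin 6,
              if (gadgetGraph H).Adj a (Sum.inr (e, k)) then f (x a) (x (Sum.inr (e, k))) else 0 := by
    intro a
    rw [Fintype.sum_sum_type]
    congr 1
    rw [Fintype.sum_prod_type]
  simp only [hsplit]
  rw [Finset.sum_add_distrib, Fintype.sum_prod_type]
  have h12 : (∑ v : Fin N, ∑ e : GE H, ∑ k : Fin 6,
        if (gadgetGraph H).Adj (Sum.inl v) (Sum.inr (e, k)) then f (x (Sum.inl v)) (x (Sum.inr (e, k))) else 0)
      = ∑ e : GE H, (f (x (Sum.inl e.val.1)) (x (Sum.inr (e, 0)))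
          + f (x (Sum.inl e.val.2)) (x (Sum.inr (e, 3)))) := by
    rw [Finset.sum_comm]
    refine Finset.sum_congr rfl fun e _ => ?_
    rw [Finset.sum_comm]
    have : ∀ k : Fin 6,
        (∑ v : Fin N, if (gadgetGraph H).Adj (Sum.inl v) (Sum.inr (e, k)) then f (x (Sum.inl v)) (x (Sum.inr (e, k))) else 0)
        = (if k = 0 then f (x (Sum.inl e.val.1)) (x (Sum.inr (e, k))) else 0)
          + (if k = 3 then f (x (Sum.inl e.val.2)) (x (Sum.inr (e, k))) else 0) := by
      intro k
      simp only [adj_inl_inr]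
      exact sum_pick e.val.1 e.val.2 (fun v => f (x (Sum.inl v)) (x (Sum.inr (e, k))))
        (k = 0) (k = 3) (by rintro ⟨rfl, h⟩; exact absurd h (by decide))
    simp only [this]
    rw [Finset.sum_add_distrib, Finset.sum_ite_eq', Finset.sum_ite_eq']
    simp
  have h21 : ∀ (e : GE H) (j : Fin 6),
      (∑ w : Fin N, if (gadgetGraph H).Adj (Sum.inr (e, j)) (Sum.inl w) then f (x (Sum.inr (e, j))) (x (Sum.inl w)) else 0)
      = (if j = 0 then f (x (Sum.inr (e, j))) (x (Sum.inl e.val.1)) else 0)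
        + (if j = 3 then f (x (Sum.inr (e, j))) (x (Sum.inl e.val.2)) else 0) := by
    intro e j
    simp only [adj_inr_inl]
    exact sum_pick e.val.1 e.val.2 (fun w => f (x (Sum.inr (e, j))) (x (Sum.inl w)))
      (j = 0) (j = 3) (by rintro ⟨rfl, h⟩; exact absurd h (by decide))
  have h22 : ∀ (e : GE H) (j : Fin 6),
      (∑ e' : GE H, ∑ k : Fin 6,
          if (gadgetGraph H).Adj (Sum.inr (e, j)) (Sum.inr (e', k)) then f (x (Sum.inr (e, j))) (x (Sum.inr (e', k))) else 0)
      = ∑ k : Fin 6, if Cond j k then f (x (Sum.inr (e, j))) (x (Sum.inr (e, k))) else 0 := by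
    intro e j
    rw [Finset.sum_comm]
    refine Finset.sum_congr rfl fun k _ => ?_
    simp only [adj_inr_inr, ite_and]
    rw [Finset.sum_ite_eq]
    simp
  simp only [h21, h22]
  rw [h12]
  simp only [hB11, Finset.sum_const_zero, zero_add]
  rw [← Finset.sum_add_distrib]
  refine Finset.sum_congr rfl fun e _ => ?_
  rw [Finset.sum_add_distrib, Finset.sum_add_distrib, Finset.sum_ite_eq', Finset.sum_ite_eq']
  simp only [Finset.mem_univ, if_true]
  ring

lemma pair_sum (f : Fin N × Fin N → ℝ) :
    (∑ p : Fin N × Fin N, if H.Adj p.1 p.2 then f p else 0)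
      = ∑ e : GE H, (f e.val + f e.val.swap) := by
  have hsplit : ∀ p : Fin N × Fin N,
      (if H.Adj p.1 p.2 then f p else 0)
        = (if p.1 < p.2 ∧ H.Adj p.1 p.2 then f p else 0)
          + (if p.2 < p.1 ∧ H.Adj p.1 p.2 then f p else 0) := by
    intro p
    by_cases h : H.Adj p.1 p.2
    · rcases h.ne.lt_or_gt with h1 | h1
      · simp [h, h1, lt_asymm h1]
      · simp [h, h1, lt_asymm h1]
    · simp [h]
  simp only [hsplit]
  rw [Finset.sum_add_distrib, Finset.sum_add_distrib]
  congr 1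
  · rw [← Finset.sum_filter]
    exact (Finset.sum_subtype (p := fun p : Fin N × Fin N => p.1 < p.2 ∧ H.Adj p.1 p.2)
      (Finset.univ.filter (fun p : Fin N × Fin N => p.1 < p.2 ∧ H.Adj p.1 p.2))
      (fun x => by simp) f)
  · have := Fintype.sum_equiv (Equiv.prodComm (Fin N) (Fin N))
      (fun p : Fin N × Fin N => if p.2 < p.1 ∧ H.Adj p.1 p.2 then f p else 0)
      (fun q : Fin N × Fin N => if q.1 < q.2 ∧ H.Adj q.1 q.2 then f q.swap else 0)
      (by intro p
          simp only [Equiv.prodComm_apply]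
          by_cases h : p.2 < p.1 ∧ H.Adj p.1 p.2
          · rw [if_pos h]
            simp [h.1, h.2.symm]
          · rw [if_neg h]; refine (if_neg ?_).symm
            intro hc
            exact h ⟨hc.1, hc.2.symm⟩)
    rw [this, ← Finset.sum_filter]
    exact (Finset.sum_subtype (p := fun p : Fin N × Fin N => p.1 < p.2 ∧ H.Adj p.1 p.2)
      (Finset.univ.filter (fun p : Fin N × Fin N => p.1 < p.2 ∧ H.Adj p.1 p.2))
      (fun x => by simp) (fun q => f q.swap))

lemma deg_sum (hreg : H.IsRegularOfDegree 3) (a : Fin N) (C : ℝ) :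
    (∑ b, if H.Adj a b then C else 0) = 3 * C := by
  rw [← Finset.sum_filter, Finset.sum_const]
  have h3 : (Finset.univ.filter (fun b => H.Adj a b)).card = 3 := by
    have := hreg a
    rw [← this, SimpleGraph.degree, SimpleGraph.neighborFinset_eq_filter]
  rw [h3]
  simp [mul_comm]

lemma deg_sum' (hreg : H.IsRegularOfDegree 3) (a : Fin N) (C : ℝ) :
    (∑ b, if H.Adj b a then C else 0) = 3 * C := by
  refine (Finset.sum_congr rfl fun b _ => ?_).trans (deg_sum hreg a C)
  exact if_congr (H.adj_comm b a) rfl rfl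

lemma sum_endpoints (hreg : H.IsRegularOfDegree 3) (g : Fin N → ℝ) :
    (∑ e : GE H, (g e.val.1 + g e.val.2)) = 3 * ∑ v, g v := by
  have := (pair_sum (H := H) (fun p => g p.1)).symm
  simp only [Prod.fst_swap] at this
  rw [this, Fintype.sum_prod_type]
  have h1 : ∀ a : Fin N, (∑ b, if H.Adj a b then g a else 0) = 3 * g a :=
    fun a => deg_sum hreg a (g a)
  rw [Finset.sum_congr rfl fun a _ => h1 a, Finset.mul_sum]

lemma sum_sq_pos {V : Type*} [Fintype V] {x : V → ℝ} (h0 : x ≠ 0) :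
    0 < ∑ i, x i ^ 2 := by
  obtain ⟨i, hi⟩ := Function.ne_iff.mp h0
  have hi' : x i ≠ 0 := by simpa using hi
  exact Finset.sum_pos' (fun j _ => sq_nonneg _)
    ⟨i, Finset.mem_univ i, by positivity⟩

lemma QH_eq (hreg : H.IsRegularOfDegree 3) (y : Fin N → ℝ) :
    (∑ i, ∑ j, (if H.Adj i j then ((3:ℕ) : ℝ)⁻¹ else 0) * y i * y j)
      = (∑ i, y i ^ 2) - (∑ i, ∑ j, if H.Adj i j then (y i - y j) ^ 2 else 0) / 6 := by
  have hterm : ∀ i j, (if H.Adj i j then ((3:ℕ) : ℝ)⁻¹ else 0) * y i * y j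
      = ((if H.Adj i j then y i ^ 2 / 6 else 0) + (if H.Adj i j then y j ^ 2 / 6 else 0))
        - (if H.Adj i j then (y i - y j) ^ 2 / 6 else 0) := by
    intro i j
    by_cases h : H.Adj i j
    · simp only [h, if_true]; push_cast; ring
    · simp [h]
  simp only [hterm, Finset.sum_sub_distrib, Finset.sum_add_distrib]
  have e1 : (∑ i, ∑ j, if H.Adj i j then y i ^ 2 / 6 else 0) = (∑ i, y i ^ 2) / 2 := by
    rw [Finset.sum_congr rfl fun i _ => deg_sum hreg i (y i ^ 2 / 6), Finset.sum_div]
    exact Finset.sum_congr rfl fun i _ => by ring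
  have e2 : (∑ i, ∑ j, if H.Adj i j then y j ^ 2 / 6 else 0) = (∑ i, y i ^ 2) / 2 := by
    rw [Finset.sum_comm]
    rw [Finset.sum_congr rfl fun j _ => deg_sum' hreg j (y j ^ 2 / 6), Finset.sum_div]
    exact Finset.sum_congr rfl fun i _ => by ring
  have e3 : (∑ i, ∑ j, if H.Adj i j then (y i - y j) ^ 2 / 6 else 0)
      = (∑ i, ∑ j, if H.Adj i j then (y i - y j) ^ 2 else 0) / 6 := by
    rw [Finset.sum_div]
    refine Finset.sum_congr rfl fun i _ => ?_
    rw [Finset.sum_div]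
    refine Finset.sum_congr rfl fun j _ => ?_
    by_cases h : H.Adj i j <;> simp [h]
  rw [e1, e2, e3]
  ring

lemma sqrt2_bound : 2 * Real.sqrt 2 / 3 ≤ 943 / 1000 := by
  nlinarith [Real.sq_sqrt (show (0:ℝ) ≤ 2 by norm_num), Real.sqrt_nonneg 2]

lemma spec (hreg : H.IsRegularOfDegree 3) (hH : normSecondEig 3 H ≤ 2 * Real.sqrt 2 / 3)
    (y : Fin N → ℝ) (hy : (∑ v, y v) = 0) :
    (342 / 1000) * (∑ v, y v ^ 2) ≤ ∑ i, ∑ j, if H.Adj i j then (y i - y j) ^ 2 else 0 := by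
  by_cases h0 : y = 0
  · subst h0
    simp
  · have hS : 0 < ∑ i, y i ^ 2 := sum_sq_pos h0
    have key : (∑ i, ∑ j, (if H.Adj i j then ((3:ℕ) : ℝ)⁻¹ else 0) * y i * y j) / (∑ i, y i ^ 2)
        ≤ 2 * Real.sqrt 2 / 3 := by
      refine le_trans ?_ hH
      rw [normSecondEig, if_neg (by norm_num)]
      refine le_csSup ⟨1, ?_⟩ ⟨y, h0, hy, rfl⟩
      rintro r ⟨x, hx0, hxs, rfl⟩
      have hSx : 0 < ∑ i, x i ^ 2 := sum_sq_pos hx0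
      have hQ := QH_eq hreg x
      have hLnn : (0:ℝ) ≤ ∑ i, ∑ j, if H.Adj i j then (x i - x j) ^ 2 else 0 := by
        refine Finset.sum_nonneg fun i _ => Finset.sum_nonneg fun j _ => ?_
        by_cases h : H.Adj i j <;> simp [h, sq_nonneg]
      rw [div_le_one hSx, hQ]
      linarith
    have hQle : (∑ i, ∑ j, (if H.Adj i j then ((3:ℕ) : ℝ)⁻¹ else 0) * y i * y j)
        ≤ (943 / 1000) * ∑ i, y i ^ 2 := by
      rw [div_le_iff₀ hS] at key
      calc _ ≤ 2 * Real.sqrt 2 / 3 * ∑ i, y i ^ 2 := key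
        _ ≤ (943 / 1000) * ∑ i, y i ^ 2 := mul_le_mul_of_nonneg_right sqrt2_bound hS.le
    have hQ := QH_eq hreg y
    linarith

lemma cond_expand (w : Fin 6 → ℝ) (f : ℝ → ℝ → ℝ) :
    (∑ j, ∑ k, if Cond j k then f (w j) (w k) else 0)
      = (f (w 0) (w 4) + f (w 0) (w 5) + f (w 1) (w 3) + f (w 1) (w 4) + f (w 1) (w 5)
        + f (w 2) (w 3) + f (w 2) (w 4) + f (w 2) (w 5))
        + (f (w 4) (w 0) + f (w 5) (w 0) + f (w 3) (w 1) + f (w 4) (w 1) + f (w 5) (w 1)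
        + f (w 3) (w 2) + f (w 4) (w 2) + f (w 5) (w 2)) := by
  simp only [Fin.sum_univ_six]
  norm_num [Cond, show ((0:Fin 6).val) = 0 from rfl, show ((1:Fin 6).val) = 1 from rfl,
    show ((2:Fin 6).val) = 2 from rfl, show ((3:Fin 6).val) = 3 from rfl,
    show ((4:Fin 6).val) = 4 from rfl, show ((5:Fin 6).val) = 5 from rfl]
  ring

lemma gadget_core (a b w0 w1 w2 w3 w4 w5 : ℝ) :
    (a - b) ^ 2 + ((w0 - (a+b)/2) ^ 2 + (w1 - (a+b)/2) ^ 2 + (w2 - (a+b)/2) ^ 2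
        + (w3 - (a+b)/2) ^ 2 + (w4 - (a+b)/2) ^ 2 + (w5 - (a+b)/2) ^ 2)
      ≤ 50 * ((a - w0) ^ 2 + (b - w3) ^ 2 + (w0 - w4) ^ 2 + (w0 - w5) ^ 2 + (w1 - w3) ^ 2
        + (w1 - w4) ^ 2 + (w1 - w5) ^ 2 + (w2 - w3) ^ 2 + (w2 - w4) ^ 2 + (w2 - w5) ^ 2) := by
  have t1 : (0:ℝ) ≤ (w0 - w5)^2 := sq_nonneg _
  have t2 : (0:ℝ) ≤ (w1 - w5)^2 := sq_nonneg _
  have t3 : (0:ℝ) ≤ (w2 - w3)^2 := sq_nonneg _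
  have t4 : (0:ℝ) ≤ (w2 - w4)^2 := sq_nonneg _
  have t5 : (0:ℝ) ≤ (w2 - w5)^2 := sq_nonneg _
  have t6 : (0:ℝ) ≤ (b - w3)^2 := sq_nonneg _
  have t7 : (0:ℝ) ≤ (w1 - w3)^2 := sq_nonneg _
  have t8 : (0:ℝ) ≤ (w1 - w4)^2 := sq_nonneg _
  have t9 : (0:ℝ) ≤ (w0 - w4)^2 := sq_nonneg _
  have t10 : (0:ℝ) ≤ (a - w0)^2 := sq_nonneg _
  have c0 : (w0 - a) ^ 2 ≤ (a - w0) ^ 2 := le_of_eq (by ring)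
  have c4 : (w4 - a) ^ 2 ≤ 2 * (a - w0) ^ 2 + 2 * (w0 - w4) ^ 2 := by
    linarith [sq_nonneg (w4 - 2*w0 + a)]
  have c5 : (w5 - a) ^ 2 ≤ 2 * (a - w0) ^ 2 + 2 * (w0 - w5) ^ 2 := by
    linarith [sq_nonneg (w5 - 2*w0 + a)]
  have c1 : (w1 - a) ^ 2 ≤ 3 * ((a - w0) ^ 2 + (w0 - w4) ^ 2 + (w1 - w4) ^ 2) := by
    linarith [sq_nonneg (w1 - 2*w4 + w0), sq_nonneg (w4 - 2*w0 + a), sq_nonneg (w1 - w4 - w0 + a)]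
  have c2 : (w2 - a) ^ 2 ≤ 3 * ((a - w0) ^ 2 + (w0 - w4) ^ 2 + (w2 - w4) ^ 2) := by
    linarith [sq_nonneg (w2 - 2*w4 + w0), sq_nonneg (w4 - 2*w0 + a), sq_nonneg (w2 - w4 - w0 + a)]
  have c3 : (w3 - a) ^ 2 ≤ 4 * ((a - w0) ^ 2 + (w0 - w4) ^ 2 + (w1 - w4) ^ 2 + (w1 - w3) ^ 2) := by
    linarith [sq_nonneg (w3 - 2*w1 + w4), sq_nonneg (w3 - w1 - w4 + w0),
      sq_nonneg (w3 - w1 - w0 + a), sq_nonneg (w1 - 2*w4 + w0), sq_nonneg (w1 - w4 - w0 + a),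
      sq_nonneg (w4 - 2*w0 + a)]
  have cb : (a - b) ^ 2 ≤ 5 * ((a - w0) ^ 2 + (w0 - w4) ^ 2 + (w1 - w4) ^ 2 + (w1 - w3) ^ 2
      + (b - w3) ^ 2) := by
    linarith [sq_nonneg (b - 2*w3 + w1), sq_nonneg (b - w3 - w1 + w4),
      sq_nonneg (b - w3 - w4 + w0), sq_nonneg (b - w3 - w0 + a),
      sq_nonneg (w3 - 2*w1 + w4), sq_nonneg (w3 - w1 - w4 + w0), sq_nonneg (w3 - w1 - w0 + a),
      sq_nonneg (w1 - 2*w4 + w0), sq_nonneg (w1 - w4 - w0 + a), sq_nonneg (w4 - 2*w0 + a)]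
  have e0 : (w0 - (a+b)/2) ^ 2 ≤ 2 * (w0 - a) ^ 2 + (a - b) ^ 2 / 2 := by
    linarith [sq_nonneg (w0 - 3*a/2 + b/2)]
  have e1 : (w1 - (a+b)/2) ^ 2 ≤ 2 * (w1 - a) ^ 2 + (a - b) ^ 2 / 2 := by
    linarith [sq_nonneg (w1 - 3*a/2 + b/2)]
  have e2 : (w2 - (a+b)/2) ^ 2 ≤ 2 * (w2 - a) ^ 2 + (a - b) ^ 2 / 2 := by
    linarith [sq_nonneg (w2 - 3*a/2 + b/2)]
  have e3 : (w3 - (a+b)/2) ^ 2 ≤ 2 * (w3 - a) ^ 2 + (a - b) ^ 2 / 2 := by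
    linarith [sq_nonneg (w3 - 3*a/2 + b/2)]
  have e4 : (w4 - (a+b)/2) ^ 2 ≤ 2 * (w4 - a) ^ 2 + (a - b) ^ 2 / 2 := by
    linarith [sq_nonneg (w4 - 3*a/2 + b/2)]
  have e5 : (w5 - (a+b)/2) ^ 2 ≤ 2 * (w5 - a) ^ 2 + (a - b) ^ 2 / 2 := by
    linarith [sq_nonneg (w5 - 3*a/2 + b/2)]
  linarith

end GadgetAux

open GadgetAux

set_option maxHeartbeats 2000000

/-- If `H` is a 3-regular graph with normalized second eigenvalue at most
`2√2/3`, then the gadget-replacement graph `G` of `H` has normalized second eigenvalue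
at most `1 - 10⁻⁴`. -/
theorem gadgetGraph_secondEig_le {N : ℕ} (H : SimpleGraph (Fin N))
    (hreg : H.IsRegularOfDegree 3)
    (hH : normSecondEig 3 H ≤ 2 * Real.sqrt 2 / 3) :
    normSecondEig 3 (gadgetGraph H) ≤ 1 - (10 : ℝ)⁻¹ ^ 4 := by
  rw [normSecondEig, if_neg (by norm_num)]
  refine Real.sSup_le ?_ (by norm_num)
  rintro r ⟨x, hx0, hxsum, rfl⟩
  have hS : 0 < ∑ i, x i ^ 2 := sum_sq_pos hx0
  rw [div_le_iff₀ hS]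
  -- basic abbreviations (as plain expressions)
  have hN : 0 < N := by
    obtain ⟨i, hi⟩ := Function.ne_iff.mp hx0
    rcases i with v | ⟨e, k⟩
    · exact v.pos
    · exact e.val.1.pos
  have hNR : (0:ℝ) < (N:ℝ) := by exact_mod_cast hN
  set m : ℝ := (∑ v, x (Sum.inl v)) / (N:ℝ) with hm
  -- decomposition of the total sum of x
  have hxsum' : (∑ v, x (Sum.inl v)) + (∑ e : GE H, ∑ k : Fin 6, x (Sum.inr (e, k))) = 0 := by
    rw [← hxsum, Fintype.sum_sum_type, Fintype.sum_prod_type]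
  have hxsq : (∑ i, x i ^ 2)
      = (∑ v, x (Sum.inl v) ^ 2) + (∑ e : GE H, ∑ k : Fin 6, x (Sum.inr (e, k)) ^ 2) := by
    rw [Fintype.sum_sum_type, Fintype.sum_prod_type]
  -- W identity
  have hW : (∑ a, ∑ b, if (gadgetGraph H).Adj a b then (x a ^ 2 + x b ^ 2) / 6 else 0)
      = (∑ v, x (Sum.inl v) ^ 2) + (∑ e : GE H, ∑ k : Fin 6, x (Sum.inr (e, k)) ^ 2) := by
    rw [decomp x (fun s t => (s ^ 2 + t ^ 2) / 6)]
    have key : ∀ e : GE H,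
        ((x (Sum.inl e.val.1) ^ 2 + x (Sum.inr (e, 0)) ^ 2) / 6
          + (x (Sum.inr (e, 0)) ^ 2 + x (Sum.inl e.val.1) ^ 2) / 6
          + (x (Sum.inl e.val.2) ^ 2 + x (Sum.inr (e, 3)) ^ 2) / 6
          + (x (Sum.inr (e, 3)) ^ 2 + x (Sum.inl e.val.2) ^ 2) / 6
          + ∑ j, ∑ k, if Cond j k then (x (Sum.inr (e, j)) ^ 2 + x (Sum.inr (e, k)) ^ 2) / 6 else 0)
        = (x (Sum.inl e.val.1) ^ 2 / 3 + x (Sum.inl e.val.2) ^ 2 / 3)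
            + ∑ k : Fin 6, x (Sum.inr (e, k)) ^ 2 := by
      intro e
      rw [cond_expand (fun k => x (Sum.inr (e, k))) (fun s t => (s ^ 2 + t ^ 2) / 6),
        Fin.sum_univ_six]
      ring
    rw [Finset.sum_congr rfl fun e _ => key e, Finset.sum_add_distrib,
      sum_endpoints hreg (fun v => x (Sum.inl v) ^ 2 / 3), ← Finset.sum_div]
    ring
  have hB : (∑ a, ∑ b, if (gadgetGraph H).Adj a b then (x a - x b) ^ 2 / 6 else 0)
      = (∑ a, ∑ b, if (gadgetGraph H).Adj a b then (x a - x b) ^ 2 else 0) / 6 := by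
    rw [Finset.sum_div]
    refine Finset.sum_congr rfl fun a _ => ?_
    rw [Finset.sum_div]
    refine Finset.sum_congr rfl fun b _ => ?_
    by_cases h : (gadgetGraph H).Adj a b <;> simp [h]
  have hQ : (∑ i, ∑ j, (if (gadgetGraph H).Adj i j then ((3:ℕ) : ℝ)⁻¹ else 0) * x i * x j)
      = ((∑ v, x (Sum.inl v) ^ 2) + (∑ e : GE H, ∑ k : Fin 6, x (Sum.inr (e, k)) ^ 2))
        - (∑ a, ∑ b, if (gadgetGraph H).Adj a b then (x a - x b) ^ 2 else 0) / 6 := by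
    have hterm : ∀ i j : GadgetVertex H,
        (if (gadgetGraph H).Adj i j then ((3:ℕ) : ℝ)⁻¹ else 0) * x i * x j
          = (if (gadgetGraph H).Adj i j then (x i ^ 2 + x j ^ 2) / 6 else 0)
            - (if (gadgetGraph H).Adj i j then (x i - x j) ^ 2 / 6 else 0) := by
      intro i j
      by_cases h : (gadgetGraph H).Adj i j
      · simp only [h, if_true]; push_cast; ring
      · simp [h]
    simp only [hterm, Finset.sum_sub_distrib]
    rw [hW, hB]
  rw [hQ, hxsq]
  -- gadget lower bound for L
  have hL : (1/25) * ((∑ e : GE H, (x (Sum.inl e.val.1) - x (Sum.inl e.val.2)) ^ 2)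
        + ∑ e : GE H, ∑ k : Fin 6,
            (x (Sum.inr (e, k)) - (x (Sum.inl e.val.1) + x (Sum.inl e.val.2)) / 2) ^ 2)
      ≤ ∑ a, ∑ b, if (gadgetGraph H).Adj a b then (x a - x b) ^ 2 else 0 := by
    rw [decomp x (fun s t => (s - t) ^ 2), ← Finset.sum_add_distrib, Finset.mul_sum]
    refine Finset.sum_le_sum fun e _ => ?_
    rw [cond_expand (fun k => x (Sum.inr (e, k))) (fun s t => (s - t) ^ 2), Fin.sum_univ_six]
    have hg := gadget_core (x (Sum.inl e.val.1)) (x (Sum.inl e.val.2)) (x (Sum.inr (e, 0)))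
      (x (Sum.inr (e, 1))) (x (Sum.inr (e, 2))) (x (Sum.inr (e, 3))) (x (Sum.inr (e, 4)))
      (x (Sum.inr (e, 5)))
    linarith
  -- spectral bound
  have hyb : (∑ v, (x (Sum.inl v) - m)) = 0 := by
    rw [Finset.sum_sub_distrib, Finset.sum_const, Finset.card_univ, Fintype.card_fin,
      nsmul_eq_mul, hm]
    field_simp
    ring
  have hspec := spec hreg hH (fun v => x (Sum.inl v) - m) hyb
  have hcon : (∑ i, ∑ j, if H.Adj i j then ((x (Sum.inl i) - m) - (x (Sum.inl j) - m)) ^ 2 else 0)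
      = ∑ i, ∑ j, if H.Adj i j then (x (Sum.inl i) - x (Sum.inl j)) ^ 2 else 0 :=
    Finset.sum_congr rfl fun i _ => Finset.sum_congr rfl fun j _ => if_congr Iff.rfl (by ring) rfl
  rw [hcon] at hspec
  have hpair := pair_sum (H := H) (fun p => (x (Sum.inl p.1) - x (Sum.inl p.2)) ^ 2)
  rw [Fintype.sum_prod_type] at hpair
  simp only [Prod.fst_swap, Prod.snd_swap] at hpair
  have h2P : (∑ e : GE H, ((x (Sum.inl e.val.1) - x (Sum.inl e.val.2)) ^ 2
        + (x (Sum.inl e.val.2) - x (Sum.inl e.val.1)) ^ 2))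
      = 2 * ∑ e : GE H, (x (Sum.inl e.val.1) - x (Sum.inl e.val.2)) ^ 2 := by
    rw [Finset.mul_sum]
    exact Finset.sum_congr rfl fun e _ => by ring
  have hP : (342/1000) * (∑ v, (x (Sum.inl v) - m) ^ 2)
      ≤ 2 * ∑ e : GE H, (x (Sum.inl e.val.1) - x (Sum.inl e.val.2)) ^ 2 := by
    rw [← h2P, ← hpair]
    exact hspec
  -- Cauchy–Schwarz: D controls the mean
  have hsum1 : (∑ e : GE H, ∑ k : Fin 6,
        (x (Sum.inr (e, k)) - (x (Sum.inl e.val.1) + x (Sum.inl e.val.2)) / 2))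
      = -10 * ∑ v, x (Sum.inl v) := by
    have per_e : ∀ e : GE H, (∑ k : Fin 6,
          (x (Sum.inr (e, k)) - (x (Sum.inl e.val.1) + x (Sum.inl e.val.2)) / 2))
        = (∑ k : Fin 6, x (Sum.inr (e, k)))
          - (3 * x (Sum.inl e.val.1) + 3 * x (Sum.inl e.val.2)) := by
      intro e
      rw [Finset.sum_sub_distrib, Finset.sum_const]
      simp only [Finset.card_univ, Fintype.card_fin, nsmul_eq_mul]
      push_cast
      ring
    rw [Finset.sum_congr rfl fun e _ => per_e e, Finset.sum_sub_distrib]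
    have h3 : (∑ e : GE H, (3 * x (Sum.inl e.val.1) + 3 * x (Sum.inl e.val.2)))
        = 3 * ∑ v, 3 * x (Sum.inl v) := sum_endpoints hreg (fun v => 3 * x (Sum.inl v))
    rw [h3, ← Finset.mul_sum]
    linarith [hxsum']
  have hcardE : 2 * ((Fintype.card (GE H)) : ℝ) = 3 * (N:ℝ) := by
    have h1 : (∑ e : GE H, ((1:ℝ) + 1)) = 3 * ∑ _v : Fin N, (1:ℝ) :=
      sum_endpoints hreg (fun _ => (1:ℝ))
    simp only [Finset.sum_const, Finset.card_univ, Fintype.card_fin, nsmul_eq_mul] at h1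
    linarith
  have hcs := sq_sum_le_card_mul_sum_sq (s := (Finset.univ : Finset (GE H × Fin 6)))
    (f := fun q => x (Sum.inr q) - (x (Sum.inl q.1.val.1) + x (Sum.inl q.1.val.2)) / 2)
  simp only [Fintype.sum_prod_type] at hcs
  rw [hsum1] at hcs
  have hcard9 : (((Finset.univ : Finset (GE H × Fin 6)).card) : ℝ) = 9 * (N:ℝ) := by
    rw [Finset.card_univ, Fintype.card_prod, Fintype.card_fin]
    push_cast
    linarith [hcardE]
  rw [hcard9] at hcs
  have hms : (N:ℝ) * m = ∑ v, x (Sum.inl v) := by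
    rw [hm]
    field_simp
  have hD : 100 * ((N:ℝ) * m ^ 2) ≤ 9 * ∑ e : GE H, ∑ k : Fin 6,
      (x (Sum.inr (e, k)) - (x (Sum.inl e.val.1) + x (Sum.inl e.val.2)) / 2) ^ 2 := by
    refine (mul_le_mul_iff_of_pos_left hNR).mp ?_
    calc (N:ℝ) * (100 * ((N:ℝ) * m ^ 2)) = 100 * ((N:ℝ) * m) ^ 2 := by ring
      _ = (-10 * ∑ v, x (Sum.inl v)) ^ 2 := by rw [hms]; ring
      _ ≤ 9 * (N:ℝ) * ∑ e : GE H, ∑ k : Fin 6,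
            (x (Sum.inr (e, k)) - (x (Sum.inl e.val.1) + x (Sum.inl e.val.2)) / 2) ^ 2 := hcs
      _ = (N:ℝ) * (9 * ∑ e : GE H, ∑ k : Fin 6,
            (x (Sum.inr (e, k)) - (x (Sum.inl e.val.1) + x (Sum.inl e.val.2)) / 2) ^ 2) := by ring
  -- Z bound
  have hZle : (∑ e : GE H, ∑ k : Fin 6, x (Sum.inr (e, k)) ^ 2)
      ≤ 10 * (∑ e : GE H, ∑ k : Fin 6,
          (x (Sum.inr (e, k)) - (x (Sum.inl e.val.1) + x (Sum.inl e.val.2)) / 2) ^ 2)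
        + 10 * ∑ v, x (Sum.inl v) ^ 2 := by
    have per_e : ∀ e : GE H, (∑ k : Fin 6, x (Sum.inr (e, k)) ^ 2)
        ≤ 10 * (∑ k : Fin 6,
            (x (Sum.inr (e, k)) - (x (Sum.inl e.val.1) + x (Sum.inl e.val.2)) / 2) ^ 2)
          + ((10/3) * x (Sum.inl e.val.1) ^ 2 + (10/3) * x (Sum.inl e.val.2) ^ 2) := by
      intro e
      rw [Fin.sum_univ_six, Fin.sum_univ_six]
      have hab := sq_nonneg (x (Sum.inl e.val.1) - x (Sum.inl e.val.2))
      linarith [sq_nonneg (3*(x (Sum.inr (e,0)) - (x (Sum.inl e.val.1) + x (Sum.inl e.val.2))/2) - (x (Sum.inl e.val.1) + x (Sum.inl e.val.2))/6),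
        sq_nonneg (3*(x (Sum.inr (e,1)) - (x (Sum.inl e.val.1) + x (Sum.inl e.val.2))/2) - (x (Sum.inl e.val.1) + x (Sum.inl e.val.2))/6),
        sq_nonneg (3*(x (Sum.inr (e,2)) - (x (Sum.inl e.val.1) + x (Sum.inl e.val.2))/2) - (x (Sum.inl e.val.1) + x (Sum.inl e.val.2))/6),
        sq_nonneg (3*(x (Sum.inr (e,3)) - (x (Sum.inl e.val.1) + x (Sum.inl e.val.2))/2) - (x (Sum.inl e.val.1) + x (Sum.inl e.val.2))/6),
        sq_nonneg (3*(x (Sum.inr (e,4)) - (x (Sum.inl e.val.1) + x (Sum.inl e.val.2))/2) - (x (Sum.inl e.val.1) + x (Sum.inl e.val.2))/6),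
        sq_nonneg (3*(x (Sum.inr (e,5)) - (x (Sum.inl e.val.1) + x (Sum.inl e.val.2))/2) - (x (Sum.inl e.val.1) + x (Sum.inl e.val.2))/6)]
    calc (∑ e : GE H, ∑ k : Fin 6, x (Sum.inr (e, k)) ^ 2)
        ≤ ∑ e : GE H, (10 * (∑ k : Fin 6,
            (x (Sum.inr (e, k)) - (x (Sum.inl e.val.1) + x (Sum.inl e.val.2)) / 2) ^ 2)
          + ((10/3) * x (Sum.inl e.val.1) ^ 2 + (10/3) * x (Sum.inl e.val.2) ^ 2)) :=
          Finset.sum_le_sum fun e _ => per_e e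
      _ = 10 * (∑ e : GE H, ∑ k : Fin 6,
            (x (Sum.inr (e, k)) - (x (Sum.inl e.val.1) + x (Sum.inl e.val.2)) / 2) ^ 2)
          + 3 * ∑ v, (10/3) * x (Sum.inl v) ^ 2 := by
          rw [Finset.sum_add_distrib, ← Finset.mul_sum,
            sum_endpoints hreg (fun v => (10/3) * x (Sum.inl v) ^ 2)]
      _ = 10 * (∑ e : GE H, ∑ k : Fin 6,
            (x (Sum.inr (e, k)) - (x (Sum.inl e.val.1) + x (Sum.inl e.val.2)) / 2) ^ 2)
          + 10 * ∑ v, x (Sum.inl v) ^ 2 := by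
          rw [← Finset.mul_sum, ← mul_assoc]
          norm_num
  -- T identity
  have hT : (∑ v, x (Sum.inl v) ^ 2)
      = (∑ v, (x (Sum.inl v) - m) ^ 2) + (N:ℝ) * m ^ 2 := by
    have key : ∀ v : Fin N, x (Sum.inl v) ^ 2
        = (x (Sum.inl v) - m) ^ 2 + 2 * m * (x (Sum.inl v) - m) + m ^ 2 := fun v => by ring
    rw [Finset.sum_congr rfl fun v _ => key v, Finset.sum_add_distrib, Finset.sum_add_distrib,
      ← Finset.mul_sum, hyb, Finset.sum_const, Finset.card_univ, Fintype.card_fin, nsmul_eq_mul]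
    ring
  -- nonnegativity facts
  have hDnn : (0:ℝ) ≤ ∑ e : GE H, ∑ k : Fin 6,
      (x (Sum.inr (e, k)) - (x (Sum.inl e.val.1) + x (Sum.inl e.val.2)) / 2) ^ 2 :=
    Finset.sum_nonneg fun e _ => Finset.sum_nonneg fun k _ => sq_nonneg _
  have hYbnn : (0:ℝ) ≤ ∑ v, (x (Sum.inl v) - m) ^ 2 :=
    Finset.sum_nonneg fun v _ => sq_nonneg _
  have hqnn : (0:ℝ) ≤ (N:ℝ) * m ^ 2 := by positivity
  have heps : ((10:ℝ)⁻¹) ^ 4 = 1 / 10000 := by norm_num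
  rw [heps]
  linarith
end

section
/- Let G = (V,E) be a d-regular graph with normalized second eigenvalue λ₂, and let A, B ⊆ V be disjoint vertex subsets with w(A) ≥ γ, w(B) ≥ γ, and e(A,B) ≤ ξ, where γ > 0. Then e(A ∪ B) ≤ 3·max{λ₂, ξ}/γ. -/
open scoped Classical

/-- `w(A) = |A| / |V|`: the fraction of vertices lying in `A`. -/
noncomputable def wFrac {V : Type*} [Fintype V] (A : Finset V) : ℝ :=
  (A.card : ℝ) / (Fintype.card V : ℝ)

/-- The number of ordered pairs of adjacent vertices of `G`, i.e. `2|E|`. -/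
noncomputable def dartCount {V : Type*} [Fintype V] (G : SimpleGraph V) : ℕ :=
  (Finset.univ.filter fun p : V × V => G.Adj p.1 p.2).card

/-- `e(A) = |E(A)| / |E|`: the fraction of edges having both endpoints in `A`
(the number of ordered adjacent pairs with both entries in `A` is `2|E(A)|`). -/
noncomputable def eFracIn {V : Type*} [Fintype V] (G : SimpleGraph V) (A : Finset V) : ℝ :=
  ((Finset.univ.filter fun p : V × V => G.Adj p.1 p.2 ∧ p.1 ∈ A ∧ p.2 ∈ A).card : ℝ) /
    (dartCount G : ℝ)

/-- `e(A, B) = |E(A, B)| / |E|` for disjoint `A, B`: the fraction of edges having one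
endpoint in `A` and the other in `B` (each such edge is counted by exactly one ordered
pair with first entry in `A` and second entry in `B`). -/
noncomputable def eFracBetween {V : Type*} [Fintype V] (G : SimpleGraph V)
    (A B : Finset V) : ℝ :=
  2 * ((Finset.univ.filter fun p : V × V => G.Adj p.1 p.2 ∧ p.1 ∈ A ∧ p.2 ∈ B).card : ℝ) /
    (dartCount G : ℝ)

/- ----------------------------------------------------------------------- -/
/- Auxiliary lemmas                                                          -/
/- ----------------------------------------------------------------------- -/

lemma dsum_ite {V : Type*} [Fintype V] (P : V → V → Prop) [∀ i j, Decidable (P i j)]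
    (c : ℝ) :
    ∑ i, ∑ j, (if P i j then c else 0)
      = c * ((Finset.univ.filter fun p : V × V => P p.1 p.2).card : ℝ) := by
  rw [← Finset.sum_product', Finset.univ_product_univ]
  rw [Finset.sum_ite, Finset.sum_const, Finset.sum_const, smul_zero, add_zero,
    nsmul_eq_mul, mul_comm]

lemma sum_ind {V : Type*} [Fintype V] (A : Finset V) :
    ∑ i, (if i ∈ A then (1:ℝ) else 0) = (A.card : ℝ) := by
  simp [Finset.sum_boole]

lemma ite_and3 {P Q R : Prop} [Decidable P] [Decidable Q] [Decidable R]
    [Decidable (P ∧ Q ∧ R)] (c : ℝ) :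
    (if P ∧ Q ∧ R then c else 0)
      = (if P then c else 0) * (if Q then (1:ℝ) else 0) * (if R then (1:ℝ) else 0) := by
  by_cases hP : P <;> by_cases hQ : Q <;> by_cases hR : R <;> simp [hP, hQ, hR]

lemma row_sum_one {V : Type*} [Fintype V] {d : ℕ} {G : SimpleGraph V}
    (hreg : G.IsRegularOfDegree d) (hd : d ≠ 0) (i : V) :
    ∑ j, (if G.Adj i j then (d:ℝ)⁻¹ else 0) = 1 := by
  have h1 : ∑ j, (if G.Adj i j then (d:ℝ)⁻¹ else 0)
      = (d:ℝ)⁻¹ * ∑ j, (if G.Adj i j then (1:ℝ) else 0) := by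
    rw [Finset.mul_sum]; congr 1; funext j; by_cases h : G.Adj i j <;> simp [h]
  rw [h1]
  have h2 : ∑ j, (if G.Adj i j then (1:ℝ) else 0)
      = ((Finset.univ.filter fun j => G.Adj i j).card : ℝ) := by simp [Finset.sum_boole]
  rw [h2]
  classical
  have h3 : (Finset.univ.filter fun j => G.Adj i j).card = G.degree i := by
    rw [← SimpleGraph.neighborFinset_eq_filter]
    rfl
  rw [h3, hreg i]
  field_simp

lemma row_sum_card {V : Type*} [Fintype V] {d : ℕ} {G : SimpleGraph V}
    (hreg : G.IsRegularOfDegree d) (i : V) :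
    ∑ j, (if G.Adj i j then (1:ℝ) else 0) = (d : ℝ) := by
  have h2 : ∑ j, (if G.Adj i j then (1:ℝ) else 0)
      = ((Finset.univ.filter fun j => G.Adj i j).card : ℝ) := by simp [Finset.sum_boole]
  rw [h2]
  classical
  have h3 : (Finset.univ.filter fun j => G.Adj i j).card = G.degree i := by
    rw [← SimpleGraph.neighborFinset_eq_filter]
    rfl
  rw [h3, hreg i]

lemma quad_le_sumsq {V : Type*} [Fintype V] {d : ℕ} {G : SimpleGraph V}
    (hreg : G.IsRegularOfDegree d) (hd : d ≠ 0) (y : V → ℝ) :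
    (∑ i, ∑ j, (if G.Adj i j then (d:ℝ)⁻¹ else 0) * y i * y j) ≤ ∑ i, (y i) ^ 2 := by
  have col : ∀ j, ∑ i, (if G.Adj i j then (d:ℝ)⁻¹ else 0) = 1 := by
    intro j
    have : ∀ i, (if G.Adj i j then (d:ℝ)⁻¹ else 0) = (if G.Adj j i then (d:ℝ)⁻¹ else 0) := by
      intro i; rw [G.adj_comm]
    simp_rw [this]
    exact row_sum_one hreg hd j
  have step1 : (∑ i, ∑ j, (if G.Adj i j then (d:ℝ)⁻¹ else 0) * y i * y j)
      ≤ ∑ i, ∑ j, (if G.Adj i j then (d:ℝ)⁻¹ else 0) * ((y i)^2 + (y j)^2) / 2 := by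
    apply Finset.sum_le_sum; intro i _
    apply Finset.sum_le_sum; intro j _
    have hc : (0:ℝ) ≤ (if G.Adj i j then (d:ℝ)⁻¹ else 0) := by positivity
    nlinarith [sq_nonneg (y i - y j)]
  have step2 : ∑ i, ∑ j, (if G.Adj i j then (d:ℝ)⁻¹ else 0) * ((y i)^2 + (y j)^2) / 2
      = ∑ i, (y i)^2 := by
    have expand : ∀ i j, (if G.Adj i j then (d:ℝ)⁻¹ else 0) * ((y i)^2 + (y j)^2) / 2
        = (if G.Adj i j then (d:ℝ)⁻¹ else 0) * (y i)^2 / 2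
          + (if G.Adj i j then (d:ℝ)⁻¹ else 0) * (y j)^2 / 2 := by
      intro i j; ring
    simp_rw [expand, Finset.sum_add_distrib]
    have e1 : ∑ i, ∑ j, (if G.Adj i j then (d:ℝ)⁻¹ else 0) * (y i)^2 / 2
        = ∑ i, (y i)^2 / 2 := by
      congr 1; funext i
      rw [show ∀ (f : V → ℝ), ∑ j, f j * (y i)^2 / 2 = (∑ j, f j) * (y i)^2/2 from
        fun f => by rw [← Finset.sum_div, ← Finset.sum_mul], row_sum_one hreg hd i, one_mul]
    have e2 : ∑ i, ∑ j, (if G.Adj i j then (d:ℝ)⁻¹ else 0) * (y j)^2 / 2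
        = ∑ j, (y j)^2 / 2 := by
      rw [Finset.sum_comm]
      congr 1; funext j
      rw [show ∀ (f : V → ℝ), ∑ i, f i * (y j)^2 / 2 = (∑ i, f i) * (y j)^2/2 from
        fun f => by rw [← Finset.sum_div, ← Finset.sum_mul], col j, one_mul]
    rw [e1, e2, ← Finset.sum_add_distrib]
    congr 1; funext i; ring
  linarith

lemma rayleigh_le {V : Type*} [Fintype V] {d : ℕ} {G : SimpleGraph V}
    (hreg : G.IsRegularOfDegree d) (hd : d ≠ 0) (x : V → ℝ) (hx : x ≠ 0)
    (hsum : (∑ i, x i) = 0) :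
    (∑ i, ∑ j, (if G.Adj i j then (d:ℝ)⁻¹ else 0) * x i * x j) / (∑ i, (x i) ^ 2)
      ≤ normSecondEig d G := by
  rw [normSecondEig, if_neg hd]
  apply le_csSup
  · refine ⟨1, ?_⟩
    rintro r ⟨y, hy, -, rfl⟩
    have hpos : 0 < ∑ i, (y i)^2 := by
      obtain ⟨i, hi⟩ := Function.ne_iff.mp hy
      exact Finset.sum_pos' (fun j _ => sq_nonneg _)
        ⟨i, Finset.mem_univ i, pow_two_pos_of_ne_zero hi⟩
    rw [div_le_one hpos]
    exact quad_le_sumsq hreg hd y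
  · exact ⟨x, hx, hsum, rfl⟩


lemma arith_chain (γ n a b dd NAA NBB NAB lam M ξ : ℝ)
    (hγ : 0 < γ) (hγ1 : γ ≤ 1) (hn0 : 0 < n) (ha0 : 0 < a) (hb0 : 0 < b)
    (habn : a + b ≤ n) (hdd : 0 < dd)
    (hNAA0 : 0 ≤ NAA) (hNBB0 : 0 ≤ NBB) (hNAB0 : 0 ≤ NAB)
    (s1 : γ * a ≤ b) (s2 : γ * b ≤ a)
    (hkey : b^2*NAA + a^2*NBB - 2*a*b*NAB ≤ lam * (b^2*a + a^2*b) * dd)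
    (hxi : 2*NAB ≤ ξ * (n*dd)) (hlamM : lam ≤ M) (hxiM : ξ ≤ M) (hM0 : 0 ≤ M) :
    (NAA + NBB + NAB + NAB) * γ ≤ 3 * M * (n * dd) := by
  have hint1 : 0 ≤ (b*NAA)*(b - γ*a) :=
    mul_nonneg (mul_nonneg hb0.le hNAA0) (sub_nonneg.2 s1)
  have hint2 : 0 ≤ (a*NBB)*(a - γ*b) :=
    mul_nonneg (mul_nonneg ha0.le hNBB0) (sub_nonneg.2 s2)
  have step3 : γ * (a*b) * (NAA + NBB) ≤ lam * (a*b*(a+b)) * dd + 2*(a*b)*NAB := by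
    nlinarith [hkey, hint1, hint2]
  have hab : (0:ℝ) < a * b := mul_pos ha0 hb0
  have step4 : γ * (NAA + NBB) ≤ lam * ((a+b) * dd) + 2*NAB := by
    have h2 : (a*b) * (γ * (NAA + NBB)) ≤ (a*b) * (lam * ((a+b) * dd) + 2*NAB) := by
      calc (a*b) * (γ * (NAA + NBB)) = γ * (a*b) * (NAA + NBB) := by ring
        _ ≤ lam * (a*b*(a+b)) * dd + 2*(a*b)*NAB := step3
        _ = (a*b) * (lam * ((a+b) * dd) + 2*NAB) := by ring
    exact le_of_mul_le_mul_left h2 hab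
  have step5 : lam * ((a+b) * dd) ≤ M * (n * dd) := by
    have h1 : lam * ((a+b) * dd) ≤ M * ((a+b) * dd) :=
      mul_le_mul_of_nonneg_right hlamM (mul_nonneg (by linarith) hdd.le)
    have h2 : M * ((a+b) * dd) ≤ M * (n * dd) :=
      mul_le_mul_of_nonneg_left (mul_le_mul_of_nonneg_right habn hdd.le) hM0
    linarith
  have step6 : 2 * NAB ≤ M * (n * dd) := by
    have h1 : ξ * (n*dd) ≤ M * (n*dd) :=
      mul_le_mul_of_nonneg_right hxiM (mul_nonneg hn0.le hdd.le)
    linarith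
  have hγ2 : γ * (2 * NAB) ≤ 1 * (2 * NAB) :=
    mul_le_mul_of_nonneg_right hγ1 (by linarith)
  linarith [step4, step5, step6]

lemma swap_card {V : Type*} [Fintype V] (G : SimpleGraph V) (A B : Finset V) :
    ((Finset.univ.filter fun p : V × V => G.Adj p.1 p.2 ∧ p.1 ∈ B ∧ p.2 ∈ A).card : ℝ)
    = ((Finset.univ.filter fun p : V × V => G.Adj p.1 p.2 ∧ p.1 ∈ A ∧ p.2 ∈ B).card : ℝ) := by
  norm_cast
  apply Finset.card_bij' (fun p _ => p.swap) (fun p _ => p.swap) <;>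
    intro p hp <;>
    simp only [Finset.mem_filter, Finset.mem_univ, true_and, Prod.fst_swap, Prod.snd_swap,
      Prod.swap_swap] at hp ⊢ <;>
    first
      | rfl
      | exact ⟨hp.1.symm, hp.2.2, hp.2.1⟩

/-- In a `d`-regular graph `G` with normalized second eigenvalue `λ₂`,
if `A, B` are disjoint vertex subsets with `w(A), w(B) ≥ γ > 0` and `e(A, B) ≤ ξ`,
then `e(A ∪ B) ≤ 3 max{λ₂, ξ} / γ`. -/
theorem nearly_independent_union {V : Type*} [Fintype V] (d : ℕ) (G : SimpleGraph V)
    (hreg : G.IsRegularOfDegree d) (A B : Finset V) (hAB : Disjoint A B)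
    (γ ξ : ℝ) (hγ : 0 < γ) (hA : γ ≤ wFrac A) (hB : γ ≤ wFrac B)
    (hξ : eFracBetween G A B ≤ ξ) :
    eFracIn G (A ∪ B) ≤ 3 * max (normSecondEig d G) ξ / γ := by
  by_cases hd : d = 0
  · -- degenerate case: no edges at all
    have hadj : ∀ i j : V, ¬ G.Adj i j := by
      intro i j h
      have h1 := hreg i
      rw [hd] at h1
      have hmem : j ∈ G.neighborFinset i := (SimpleGraph.mem_neighborFinset G i j).2 h
      exact Finset.card_ne_zero_of_mem hmem h1
    have h0 : eFracIn G (A ∪ B) = 0 := by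
      rw [eFracIn]
      simp [hadj]
    rw [h0, normSecondEig, if_pos hd]
    have hm : (1:ℝ) ≤ max 1 ξ := le_max_left _ _
    have hnum : (0:ℝ) ≤ 3 * max 1 ξ := by linarith
    positivity
  · -- main case
    set n : ℝ := (Fintype.card V : ℝ) with hn
    set a : ℝ := (A.card : ℝ) with hacard
    set b : ℝ := (B.card : ℝ) with hbcard
    have hn0 : (0:ℝ) < n := by
      rcases Nat.eq_zero_or_pos (Fintype.card V) with h | h
      · exfalso
        rw [wFrac, h] at hA
        simp at hA
        linarith
      · rw [hn]; exact_mod_cast h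
    have ha : γ * n ≤ a := by
      rw [wFrac] at hA
      exact (le_div_iff₀ hn0).mp hA
    have hb : γ * n ≤ b := by
      rw [wFrac] at hB
      exact (le_div_iff₀ hn0).mp hB
    have ha0 : 0 < a := lt_of_lt_of_le (by positivity) ha
    have hb0 : 0 < b := lt_of_lt_of_le (by positivity) hb
    have han : a ≤ n := by
      rw [hacard, hn]
      exact_mod_cast Finset.card_le_univ A
    have hbn : b ≤ n := by
      rw [hbcard, hn]
      exact_mod_cast Finset.card_le_univ B
    have habn : a + b ≤ n := by
      have h := Finset.card_le_univ (A ∪ B)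
      rw [Finset.card_union_of_disjoint hAB] at h
      rw [hacard, hbcard, hn]
      exact_mod_cast h
    have hγ1 : γ ≤ 1 := by
      have h1 : γ * n ≤ 1 * n := by linarith
      exact le_of_mul_le_mul_right h1 hn0
    have hd0 : (0:ℝ) < (d:ℝ) := by exact_mod_cast Nat.pos_of_ne_zero hd
    -- dart count
    have hD : ((dartCount G : ℕ) : ℝ) = n * d := by
      have h1 : ∑ i : V, ∑ j : V, (if G.Adj i j then (1:ℝ) else 0)
          = 1 * ((Finset.univ.filter fun p : V × V => G.Adj p.1 p.2).card : ℝ) :=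
        dsum_ite (fun i j => G.Adj i j) 1
      have h2 : ∑ i : V, ∑ j : V, (if G.Adj i j then (1:ℝ) else 0) = ∑ _i : V, (d:ℝ) := by
        congr 1; funext i; exact row_sum_card hreg i
      rw [dartCount]
      rw [one_mul] at h1
      rw [← h1, h2, Finset.sum_const, Finset.card_univ, nsmul_eq_mul, hn]
    have hDpos : (0:ℝ) < ((dartCount G : ℕ) : ℝ) := by rw [hD]; positivity
    -- the counts
    set NAA : ℝ := ((Finset.univ.filter fun p : V × V =>
      G.Adj p.1 p.2 ∧ p.1 ∈ A ∧ p.2 ∈ A).card : ℝ) with hNAA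
    set NBB : ℝ := ((Finset.univ.filter fun p : V × V =>
      G.Adj p.1 p.2 ∧ p.1 ∈ B ∧ p.2 ∈ B).card : ℝ) with hNBB
    set NAB : ℝ := ((Finset.univ.filter fun p : V × V =>
      G.Adj p.1 p.2 ∧ p.1 ∈ A ∧ p.2 ∈ B).card : ℝ) with hNAB
    set NBA : ℝ := ((Finset.univ.filter fun p : V × V =>
      G.Adj p.1 p.2 ∧ p.1 ∈ B ∧ p.2 ∈ A).card : ℝ) with hNBA
    set NSS : ℝ := ((Finset.univ.filter fun p : V × V =>
      G.Adj p.1 p.2 ∧ p.1 ∈ A ∪ B ∧ p.2 ∈ A ∪ B).card : ℝ) with hNSS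
    have hNAA0 : 0 ≤ NAA := by rw [hNAA]; positivity
    have hNBB0 : 0 ≤ NBB := by rw [hNBB]; positivity
    have hNAB0 : 0 ≤ NAB := by rw [hNAB]; positivity
    have hswap : NBA = NAB := swap_card G A B
    -- decomposition of the union count
    have hunion : NSS = NAA + NBB + NAB + NBA := by
      have e : ∀ i j : V, (if G.Adj i j ∧ i ∈ A ∪ B ∧ j ∈ A ∪ B then (1:ℝ) else 0)
          = (if G.Adj i j ∧ i ∈ A ∧ j ∈ A then (1:ℝ) else 0)
            + (if G.Adj i j ∧ i ∈ B ∧ j ∈ B then (1:ℝ) else 0)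
            + (if G.Adj i j ∧ i ∈ A ∧ j ∈ B then (1:ℝ) else 0)
            + (if G.Adj i j ∧ i ∈ B ∧ j ∈ A then (1:ℝ) else 0) := by
        intro i j
        by_cases h2 : i ∈ A <;> by_cases h3 : i ∈ B
        · exact absurd h3 (Finset.disjoint_left.mp hAB h2)
        all_goals by_cases h4 : j ∈ A <;> by_cases h5 : j ∈ B
        all_goals first
          | exact absurd h5 (Finset.disjoint_left.mp hAB h4)
          | (by_cases h1 : G.Adj i j <;>
              simp [h1, h2, h3, h4, h5, Finset.mem_union])
      calc NSS = ∑ i : V, ∑ j : V,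
            (if G.Adj i j ∧ i ∈ A ∪ B ∧ j ∈ A ∪ B then (1:ℝ) else 0) := by
              rw [dsum_ite (fun i j => G.Adj i j ∧ i ∈ A ∪ B ∧ j ∈ A ∪ B) 1, one_mul, hNSS]
        _ = NAA + NBB + NAB + NBA := by
              simp_rw [e, Finset.sum_add_distrib]
              rw [dsum_ite (fun i j => G.Adj i j ∧ i ∈ A ∧ j ∈ A) 1,
                dsum_ite (fun i j => G.Adj i j ∧ i ∈ B ∧ j ∈ B) 1,
                dsum_ite (fun i j => G.Adj i j ∧ i ∈ A ∧ j ∈ B) 1,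
                dsum_ite (fun i j => G.Adj i j ∧ i ∈ B ∧ j ∈ A) 1]
              rw [one_mul, one_mul, one_mul, one_mul, ← hNAA, ← hNBB, ← hNAB, ← hNBA]
    -- the test vector
    set x : V → ℝ := fun i => b * (if i ∈ A then (1:ℝ) else 0)
        - a * (if i ∈ B then (1:ℝ) else 0) with hx
    have hxsum : (∑ i, x i) = 0 := by
      simp only [hx]
      rw [Finset.sum_sub_distrib, ← Finset.mul_sum, ← Finset.mul_sum]
      rw [sum_ind A, sum_ind B, ← hacard, ← hbcard]
      ring
    have hxne : x ≠ 0 := by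
      have hApos : 0 < A.card := by
        rw [hacard] at ha0
        exact_mod_cast ha0
      obtain ⟨i, hi⟩ := Finset.card_pos.mp hApos
      have hiB : i ∉ B := Finset.disjoint_left.mp hAB hi
      intro hcon
      have hxi : x i = 0 := by rw [hcon]; rfl
      rw [hx] at hxi
      simp only [hi, hiB, if_pos, if_neg, not_false_iff, mul_one, mul_zero, sub_zero] at hxi
      exact hb0.ne' hxi
    have hxsumsq : ∑ i, (x i) ^ 2 = b^2 * a + a^2 * b := by
      have e : ∀ i, (x i)^2 = b^2 * (if i ∈ A then (1:ℝ) else 0)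
          + a^2 * (if i ∈ B then (1:ℝ) else 0) := by
        intro i
        simp only [hx]
        by_cases h2 : i ∈ A <;> by_cases h3 : i ∈ B
        · exact absurd h3 (Finset.disjoint_left.mp hAB h2)
        all_goals simp [h2, h3]
      simp_rw [e]
      rw [Finset.sum_add_distrib, ← Finset.mul_sum, ← Finset.mul_sum]
      rw [sum_ind A, sum_ind B, ← hacard, ← hbcard]
    have hquad : ∑ i, ∑ j, (if G.Adj i j then (d:ℝ)⁻¹ else 0) * x i * x j
        = (d:ℝ)⁻¹ * (b^2 * NAA + a^2 * NBB - a*b*NAB - a*b*NBA) := by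
      have e : ∀ i j, (if G.Adj i j then (d:ℝ)⁻¹ else 0) * x i * x j
          = b^2 * (if G.Adj i j ∧ i ∈ A ∧ j ∈ A then (d:ℝ)⁻¹ else 0)
            + a^2 * (if G.Adj i j ∧ i ∈ B ∧ j ∈ B then (d:ℝ)⁻¹ else 0)
            - a*b * (if G.Adj i j ∧ i ∈ A ∧ j ∈ B then (d:ℝ)⁻¹ else 0)
            - a*b * (if G.Adj i j ∧ i ∈ B ∧ j ∈ A then (d:ℝ)⁻¹ else 0) := by
        intro i j
        simp only [hx]
        rw [ite_and3, ite_and3, ite_and3, ite_and3]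
        ring
      simp_rw [e]
      simp only [Finset.sum_sub_distrib, Finset.sum_add_distrib, ← Finset.mul_sum]
      rw [dsum_ite (fun i j => G.Adj i j ∧ i ∈ A ∧ j ∈ A) (d:ℝ)⁻¹,
        dsum_ite (fun i j => G.Adj i j ∧ i ∈ B ∧ j ∈ B) (d:ℝ)⁻¹,
        dsum_ite (fun i j => G.Adj i j ∧ i ∈ A ∧ j ∈ B) (d:ℝ)⁻¹,
        dsum_ite (fun i j => G.Adj i j ∧ i ∈ B ∧ j ∈ A) (d:ℝ)⁻¹]
      rw [← hNAA, ← hNBB, ← hNAB, ← hNBA]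
      ring
    -- the key spectral inequality
    set lam : ℝ := normSecondEig d G with hlam
    have hkey : b^2 * NAA + a^2 * NBB - 2*a*b*NAB ≤ lam * (b^2*a + a^2*b) * d := by
      have h := rayleigh_le hreg hd x hxne hxsum
      rw [hquad, hxsumsq] at h
      have hS : (0:ℝ) < b^2*a + a^2*b := by positivity
      rw [div_le_iff₀ hS] at h
      rw [hswap] at h
      have h2 := mul_le_mul_of_nonneg_right h (le_of_lt hd0)
      calc b^2 * NAA + a^2 * NBB - 2*a*b*NAB
          = (d:ℝ)⁻¹ * (b^2 * NAA + a^2 * NBB - a*b*NAB - a*b*NAB) * d := by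
            field_simp
            ring
        _ ≤ lam * (b^2*a + a^2*b) * d := h2
    -- from hξ
    have hxi : 2 * NAB ≤ ξ * (n * d) := by
      rw [eFracBetween, ← hNAB] at hξ
      rw [div_le_iff₀ hDpos] at hξ
      rw [hD] at hξ
      exact hξ
    have hxi0 : 0 ≤ ξ := by
      by_contra hcon
      push_neg at hcon
      have : ξ * (n*d) < 0 := mul_neg_of_neg_of_pos hcon (by positivity)
      linarith
    clear_value n a b x NAA NBB NAB NBA NSS lam
    have hM0 : 0 ≤ max lam ξ := le_trans hxi0 (le_max_right _ _)
    have s1 : γ * a ≤ b := by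
      have := mul_le_mul_of_nonneg_left han hγ.le
      linarith
    have s2 : γ * b ≤ a := by
      have := mul_le_mul_of_nonneg_left hbn hγ.le
      linarith
    rw [eFracIn, ← hNSS, div_le_div_iff₀ hDpos hγ, hD, hunion, hswap]
    exact arith_chain γ n a b d NAA NBB NAB lam (max lam ξ) ξ hγ hγ1 hn0 ha0 hb0 habn
      hd0 hNAA0 hNBB0 hNAB0 s1 s2 hkey hxi (le_max_left _ _) (le_max_right _ _) hM0
end

section
/- Any pair (δ, λ) ∈ [1 − 1/(q−1), 1 − 1/q] × (0, 1] satisfying (q−1)(1−δ)² + (1 − (q−1)(1−δ))² < 1 − (1 − 1/(q−1))/(1 − λ) is in the unique regime. -/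
open scoped Classical

open Finset
set_option maxHeartbeats 1000000

private lemma fiber_card_eq {q : ℕ} (y x₁ x₂ : Fin q) :
    #(univ.filter fun σ : Equiv.Perm (Fin q) => σ y = x₁)
      = #(univ.filter fun σ : Equiv.Perm (Fin q) => σ y = x₂) := by
  apply Finset.card_equiv (Equiv.mulLeft (Equiv.swap x₁ x₂))
  intro σ
  simp only [mem_filter, mem_univ, true_and, Equiv.coe_mulLeft, Equiv.Perm.mul_apply]
  constructor
  · intro hσ; rw [hσ, Equiv.swap_apply_left]
  · intro hσ
    have h2 : Equiv.swap x₁ x₂ (σ y) = Equiv.swap x₁ x₂ x₁ := by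
      rw [hσ, Equiv.swap_apply_left]
    exact (Equiv.swap x₁ x₂).injective h2

private lemma card_fiber1 {q : ℕ} (hq : 0 < q) (y x : Fin q) :
    #(univ.filter fun σ : Equiv.Perm (Fin q) => σ y = x) * q = q.factorial := by
  have h := Finset.card_eq_sum_card_fiberwise
    (s := (univ : Finset (Equiv.Perm (Fin q)))) (t := univ) (f := fun σ => σ y)
    (fun _ _ => mem_univ _)
  rw [card_univ, Fintype.card_perm, Fintype.card_fin] at h
  rw [Finset.sum_congr rfl (fun b _ => fiber_card_eq y b x)] at h
  rw [Finset.sum_const, card_univ, Fintype.card_fin, smul_eq_mul] at h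
  rw [h, mul_comm]

private lemma card_fiber1' {q : ℕ} (hq : 0 < q) (y x : Fin q) :
    #(univ.filter fun σ : Equiv.Perm (Fin q) => σ y = x) = (q - 1).factorial := by
  have h := card_fiber1 hq y x
  have hfac : q.factorial = (q - 1).factorial * q := by
    rcases q with _ | m
    · omega
    · simp [Nat.factorial_succ, mul_comm]
  rw [hfac] at h
  exact Nat.eq_of_mul_eq_mul_right hq h

private lemma card_fiber2 {q : ℕ} (hq : 2 ≤ q) {y₁ y₂ x₁ x₂ : Fin q}
    (hy : y₁ ≠ y₂) (hx : x₁ ≠ x₂) :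
    #(univ.filter fun σ : Equiv.Perm (Fin q) => σ y₁ = x₁ ∧ σ y₂ = x₂)
      = (q - 2).factorial := by
  have hfib : ∀ x x' : Fin q, x ≠ x₁ → x' ≠ x₁ →
      #(univ.filter fun σ : Equiv.Perm (Fin q) => σ y₁ = x₁ ∧ σ y₂ = x)
        = #(univ.filter fun σ : Equiv.Perm (Fin q) => σ y₁ = x₁ ∧ σ y₂ = x') := by
    intro x x' hxne hx'ne
    apply Finset.card_equiv (Equiv.mulLeft (Equiv.swap x x'))
    intro σ
    simp only [mem_filter, mem_univ, true_and, Equiv.coe_mulLeft, Equiv.Perm.mul_apply]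
    have hfix : Equiv.swap x x' x₁ = x₁ :=
      Equiv.swap_apply_of_ne_of_ne (Ne.symm hxne) (Ne.symm hx'ne)
    constructor
    · rintro ⟨h1, h2⟩
      exact ⟨by rw [h1, hfix], by rw [h2, Equiv.swap_apply_left]⟩
    · rintro ⟨h1, h2⟩
      constructor
      · apply (Equiv.swap x x').injective
        rw [h1, hfix]
      · apply (Equiv.swap x x').injective
        rw [h2, Equiv.swap_apply_left]
  have hq0 : 0 < q := by omega
  have hsum : ∑ b : Fin q, #(univ.filter fun σ : Equiv.Perm (Fin q) => σ y₁ = x₁ ∧ σ y₂ = b)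
      = (q - 1).factorial := by
    rw [← card_fiber1' hq0 y₁ x₁]
    simp only [Finset.card_filter]
    rw [Finset.sum_comm]
    refine Finset.sum_congr rfl fun σ _ => ?_
    by_cases h1 : σ y₁ = x₁
    · simp only [h1, true_and]
      rw [Finset.sum_ite_eq]
      simp
    · simp [h1]
  rw [← Finset.add_sum_erase _ _ (mem_univ x₁)] at hsum
  have hzero : #(univ.filter fun σ : Equiv.Perm (Fin q) => σ y₁ = x₁ ∧ σ y₂ = x₁) = 0 := by
    rw [Finset.card_eq_zero, Finset.filter_eq_empty_iff]
    rintro σ - ⟨h1, h2⟩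
    exact hy (σ.injective (h1.trans h2.symm))
  rw [hzero, zero_add] at hsum
  rw [Finset.sum_congr rfl (fun b hb => hfib b x₂ (Finset.mem_erase.mp hb).1 hx.symm)] at hsum
  rw [Finset.sum_const, Finset.card_erase_of_mem (mem_univ x₁), card_univ, Fintype.card_fin,
    smul_eq_mul] at hsum
  have hfac : (q - 1).factorial = (q - 1) * (q - 2).factorial := by
    conv_lhs => rw [show q - 1 = (q - 2) + 1 by omega]
    rw [Nat.factorial_succ]
    congr 2
    omega
  rw [hfac] at hsum
  exact (Nat.eq_of_mul_eq_mul_left (by omega) hsum)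

private lemma rowsum {k d : ℕ} (G : SimpleGraph (Fin k)) (hreg : G.IsRegularOfDegree d)
    (hd : d ≠ 0) (u : Fin k) :
    ∑ v, (if G.Adj u v then (d : ℝ)⁻¹ else 0) = 1 := by
  rw [Finset.sum_ite, Finset.sum_const, Finset.sum_const_zero, add_zero]
  have hfil : (univ.filter fun v => G.Adj u v) = G.neighborFinset u := by
    ext v; simp [SimpleGraph.mem_neighborFinset]
  rw [hfil, SimpleGraph.card_neighborFinset_eq_degree, hreg u, nsmul_eq_mul]
  field_simp

private lemma quad_le {k d : ℕ} (G : SimpleGraph (Fin k)) (hreg : G.IsRegularOfDegree d)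
    (hd : d ≠ 0) (x : Fin k → ℝ) :
    (∑ i, ∑ j, (if G.Adj i j then (d : ℝ)⁻¹ else 0) * x i * x j) ≤ ∑ i, x i ^ 2 := by
  have hA : ∀ i j, (0 : ℝ) ≤ (if G.Adj i j then (d : ℝ)⁻¹ else 0) := by
    intro i j
    split
    · positivity
    · exact le_rfl
  have hsym : ∀ i j, (if G.Adj i j then (d : ℝ)⁻¹ else 0) = (if G.Adj j i then (d : ℝ)⁻¹ else 0) := by
    intro i j; simp [SimpleGraph.adj_comm]
  have Sa : ∑ i, ∑ j, (if G.Adj i j then (d : ℝ)⁻¹ else 0) * x i ^ 2 = ∑ i, x i ^ 2 := by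
    refine Finset.sum_congr rfl fun i _ => ?_
    rw [← Finset.sum_mul, rowsum G hreg hd i, one_mul]
  have Sb : ∑ i, ∑ j, (if G.Adj i j then (d : ℝ)⁻¹ else 0) * x j ^ 2 = ∑ i, x i ^ 2 := by
    rw [Finset.sum_comm]
    refine Finset.sum_congr rfl fun j _ => ?_
    rw [Finset.sum_congr rfl (fun i _ => by rw [hsym i j]), ← Finset.sum_mul,
      rowsum G hreg hd j, one_mul]
  have key : ∑ i, ∑ j, (2 * ((if G.Adj i j then (d : ℝ)⁻¹ else 0) * x i * x j))
      ≤ ∑ i, ∑ j, ((if G.Adj i j then (d : ℝ)⁻¹ else 0) * x i ^ 2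
          + (if G.Adj i j then (d : ℝ)⁻¹ else 0) * x j ^ 2) := by
    refine Finset.sum_le_sum fun i _ => Finset.sum_le_sum fun j _ => ?_
    nlinarith [mul_nonneg (hA i j) (sq_nonneg (x i - x j))]
  have hl : ∑ i, ∑ j, (2 * ((if G.Adj i j then (d : ℝ)⁻¹ else 0) * x i * x j))
      = 2 * ∑ i, ∑ j, (if G.Adj i j then (d : ℝ)⁻¹ else 0) * x i * x j := by
    simp [Finset.mul_sum]
  have hr : ∑ i, ∑ j, ((if G.Adj i j then (d : ℝ)⁻¹ else 0) * x i ^ 2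
      + (if G.Adj i j then (d : ℝ)⁻¹ else 0) * x j ^ 2)
      = (∑ i, ∑ j, (if G.Adj i j then (d : ℝ)⁻¹ else 0) * x i ^ 2)
        + ∑ i, ∑ j, (if G.Adj i j then (d : ℝ)⁻¹ else 0) * x j ^ 2 := by
    simp [Finset.sum_add_distrib]
  rw [hl, hr, Sa, Sb] at key
  linarith

private lemma rayleigh {k d : ℕ} (G : SimpleGraph (Fin k)) (hreg : G.IsRegularOfDegree d)
    (hd : d ≠ 0) {lam : ℝ} (heig : normSecondEig d G ≤ lam)
    (x : Fin k → ℝ) (hsum : ∑ i, x i = 0) :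
    (∑ i, ∑ j, (if G.Adj i j then (d : ℝ)⁻¹ else 0) * x i * x j) ≤ lam * ∑ i, x i ^ 2 := by
  by_cases hx : x = 0
  · subst hx; simp
  · have hpos : 0 < ∑ i, x i ^ 2 := by
      rcases Function.ne_iff.mp hx with ⟨i, hi⟩
      refine Finset.sum_pos' (fun j _ => sq_nonneg _) ⟨i, mem_univ i, ?_⟩
      exact lt_of_le_of_ne (sq_nonneg _) (Ne.symm (pow_ne_zero 2 hi))
    have hbdd : BddAbove {r : ℝ | ∃ y : Fin k → ℝ, y ≠ 0 ∧ (∑ i, y i) = 0 ∧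
        r = (∑ i, ∑ j, (if G.Adj i j then (d : ℝ)⁻¹ else 0) * y i * y j) / ∑ i, (y i) ^ 2} := by
      refine ⟨1, ?_⟩
      rintro r ⟨y, hy, -, rfl⟩
      have hypos : 0 < ∑ i, y i ^ 2 := by
        rcases Function.ne_iff.mp hy with ⟨i, hi⟩
        refine Finset.sum_pos' (fun j _ => sq_nonneg _) ⟨i, mem_univ i, ?_⟩
        exact lt_of_le_of_ne (sq_nonneg _) (Ne.symm (pow_ne_zero 2 hi))
      rw [div_le_one hypos]
      exact quad_le G hreg hd y
    have hmem : (∑ i, ∑ j, (if G.Adj i j then (d : ℝ)⁻¹ else 0) * x i * x j) / ∑ i, (x i) ^ 2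
        ∈ {r : ℝ | ∃ y : Fin k → ℝ, y ≠ 0 ∧ (∑ i, y i) = 0 ∧
        r = (∑ i, ∑ j, (if G.Adj i j then (d : ℝ)⁻¹ else 0) * y i * y j) / ∑ i, (y i) ^ 2} :=
      ⟨x, hx, hsum, rfl⟩
    have hle : (∑ i, ∑ j, (if G.Adj i j then (d : ℝ)⁻¹ else 0) * x i * x j) / ∑ i, (x i) ^ 2
        ≤ lam := by
      refine le_trans (le_csSup hbdd hmem) ?_
      unfold normSecondEig at heig
      rwa [if_neg hd] at heig
    rw [div_le_iff₀ hpos] at hle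
    linarith [hle]

private lemma set_bound {k d : ℕ} (G : SimpleGraph (Fin k)) (hreg : G.IsRegularOfDegree d)
    (hd : d ≠ 0) {lam : ℝ} (heig : normSecondEig d G ≤ lam) (hk : 0 < k)
    (S : Finset (Fin k)) :
    (∑ i, ∑ j, (if G.Adj i j then (d : ℝ)⁻¹ else 0) * (if i ∈ S then (1:ℝ) else 0)
        * (if j ∈ S then (1:ℝ) else 0))
      ≤ (#S : ℝ) ^ 2 / (k : ℝ) + lam * ((#S : ℝ) - (#S : ℝ) ^ 2 / (k : ℝ)) := by
  have hkR : (0:ℝ) < (k:ℝ) := by exact_mod_cast hk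
  set c : ℝ := (#S : ℝ) / (k : ℝ) with hc
  have hind : ∑ v, (if v ∈ S then (1:ℝ) else 0) = (#S : ℝ) := by
    rw [Finset.sum_ite_mem, Finset.univ_inter, Finset.sum_const, nsmul_eq_mul, mul_one]
  have hsum : ∑ v, ((if v ∈ S then (1:ℝ) else 0) - c) = 0 := by
    rw [Finset.sum_sub_distrib, hind, Finset.sum_const, card_univ, Fintype.card_fin,
      nsmul_eq_mul, hc]
    field_simp
    ring
  have hray := rayleigh G hreg hd heig (fun v => (if v ∈ S then (1:ℝ) else 0) - c) hsum
  have htot : ∑ i : Fin k, ∑ j, (if G.Adj i j then (d : ℝ)⁻¹ else 0) = (k : ℝ) := by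
    rw [Finset.sum_congr rfl (fun i _ => rowsum G hreg hd i), Finset.sum_const, card_univ,
      Fintype.card_fin, nsmul_eq_mul, mul_one]
  have hrowS : ∑ i, ∑ j, (if G.Adj i j then (d : ℝ)⁻¹ else 0) * (if i ∈ S then (1:ℝ) else 0)
      = (#S : ℝ) := by
    have hrow : ∀ i : Fin k, ∑ j, (if G.Adj i j then (d : ℝ)⁻¹ else 0)
        * (if i ∈ S then (1:ℝ) else 0) = (if i ∈ S then (1:ℝ) else 0) := by
      intro i
      rw [← Finset.sum_mul, rowsum G hreg hd i, one_mul]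
    rw [Finset.sum_congr rfl (fun i _ => hrow i), hind]
  have hsym : ∀ i j : Fin k, (if G.Adj i j then (d : ℝ)⁻¹ else 0)
      = (if G.Adj j i then (d : ℝ)⁻¹ else 0) := by
    intro i j; simp [SimpleGraph.adj_comm]
  have hcolS : ∑ i, ∑ j, (if G.Adj i j then (d : ℝ)⁻¹ else 0) * (if j ∈ S then (1:ℝ) else 0)
      = (#S : ℝ) := by
    rw [Finset.sum_comm]
    have hcol : ∀ j : Fin k, ∑ i, (if G.Adj i j then (d : ℝ)⁻¹ else 0)
        * (if j ∈ S then (1:ℝ) else 0) = (if j ∈ S then (1:ℝ) else 0) := by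
      intro j
      rw [Finset.sum_congr rfl (fun i _ => by rw [hsym i j]), ← Finset.sum_mul,
        rowsum G hreg hd j, one_mul]
    rw [Finset.sum_congr rfl (fun j _ => hcol j), hind]
  have hQ : (∑ i, ∑ j, (if G.Adj i j then (d : ℝ)⁻¹ else 0)
        * ((if i ∈ S then (1:ℝ) else 0) - c) * ((if j ∈ S then (1:ℝ) else 0) - c))
      = (∑ i, ∑ j, (if G.Adj i j then (d : ℝ)⁻¹ else 0) * (if i ∈ S then (1:ℝ) else 0)
        * (if j ∈ S then (1:ℝ) else 0)) - 2 * c * (#S : ℝ) + c ^ 2 * (k : ℝ) := by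
    calc (∑ i, ∑ j, (if G.Adj i j then (d : ℝ)⁻¹ else 0)
        * ((if i ∈ S then (1:ℝ) else 0) - c) * ((if j ∈ S then (1:ℝ) else 0) - c))
        = ∑ i, ∑ j, ((if G.Adj i j then (d : ℝ)⁻¹ else 0) * (if i ∈ S then (1:ℝ) else 0)
            * (if j ∈ S then (1:ℝ) else 0)
          - c * ((if G.Adj i j then (d : ℝ)⁻¹ else 0) * (if i ∈ S then (1:ℝ) else 0))
          - c * ((if G.Adj i j then (d : ℝ)⁻¹ else 0) * (if j ∈ S then (1:ℝ) else 0))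
          + c ^ 2 * (if G.Adj i j then (d : ℝ)⁻¹ else 0)) := by
          refine Finset.sum_congr rfl fun i _ => Finset.sum_congr rfl fun j _ => by ring
      _ = (∑ i, ∑ j, (if G.Adj i j then (d : ℝ)⁻¹ else 0) * (if i ∈ S then (1:ℝ) else 0)
            * (if j ∈ S then (1:ℝ) else 0))
          - c * (∑ i, ∑ j, (if G.Adj i j then (d : ℝ)⁻¹ else 0) * (if i ∈ S then (1:ℝ) else 0))
          - c * (∑ i, ∑ j, (if G.Adj i j then (d : ℝ)⁻¹ else 0) * (if j ∈ S then (1:ℝ) else 0))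
          + c ^ 2 * (∑ i, ∑ j, (if G.Adj i j then (d : ℝ)⁻¹ else 0)) := by
          simp [Finset.sum_add_distrib, Finset.sum_sub_distrib, Finset.mul_sum]
      _ = _ := by rw [hrowS, hcolS, htot]; ring
  have hX2 : ∑ v, ((if v ∈ S then (1:ℝ) else 0) - c) ^ 2
      = (#S : ℝ) - 2 * c * (#S : ℝ) + c ^ 2 * (k : ℝ) := by
    have hexp : ∀ v : Fin k, ((if v ∈ S then (1:ℝ) else 0) - c) ^ 2
        = (if v ∈ S then (1:ℝ) else 0) - 2 * c * (if v ∈ S then (1:ℝ) else 0) + c ^ 2 := by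
      intro v
      split <;> ring
    rw [Finset.sum_congr rfl (fun v _ => hexp v)]
    simp only [Finset.sum_add_distrib, Finset.sum_sub_distrib, hind, ← Finset.mul_sum,
      Finset.sum_const, card_univ, Fintype.card_fin, nsmul_eq_mul, mul_one]
    ring
  rw [hQ, hX2] at hray
  have hc2 : c * (k : ℝ) = (#S : ℝ) := by
    rw [hc]; field_simp
  have hcS : c * (#S : ℝ) = (#S : ℝ) ^ 2 / (k : ℝ) := by
    rw [hc]
    field_simp
  have hc3 : c ^ 2 * (k : ℝ) = (#S : ℝ) ^ 2 / (k : ℝ) := by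
    rw [pow_two, mul_assoc, hc2, hcS]
  have hcSl : lam * (c * (#S : ℝ)) = lam * ((#S : ℝ) ^ 2 / (k : ℝ)) := by rw [hcS]
  have hc3l : lam * (c ^ 2 * (k : ℝ)) = lam * ((#S : ℝ) ^ 2 / (k : ℝ)) := by rw [hc3]
  nlinarith [hray, hc2, hcS, hc3, hcSl, hc3l]

private lemma aux_ite_mul_ite {P Q : Prop} [Decidable P] [Decidable Q] :
    (if P then (1:ℝ) else 0) * (if Q then (1:ℝ) else 0) = if P ∧ Q then (1:ℝ) else 0 := by
  by_cases hP : P <;> by_cases hQ : Q <;> simp [hP, hQ]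

private lemma core_card {q : ℕ} (hq : 3 ≤ q) {δ lam : ℝ} (hlam2 : lam ≤ 1)
    (h : (1 - lam) * (((q : ℝ) - 1) * (1 - δ) ^ 2 + (1 - ((q : ℝ) - 1) * (1 - δ)) ^ 2)
      < (1 - lam) - (1 - 1 / ((q : ℝ) - 1)))
    {k d : ℕ} (G : SimpleGraph (Fin k)) (hreg : G.IsRegularOfDegree d)
    (heig : normSecondEig d G ≤ lam) (C : Finset (Fin k → Fin q)) (hC : IsDistinctSet G δ C) :
    C.card ≤ 1 := by
  by_contra hcard
  push_neg at hcard
  obtain ⟨X, hX, Y, hY, hXY⟩ := Finset.one_lt_card.mp hcard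
  have hqR : (3:ℝ) ≤ (q:ℝ) := by exact_mod_cast hq
  have hq1 : (0:ℝ) < (q:ℝ) - 1 := by linarith
  have hdivle : 1 / ((q:ℝ) - 1) ≤ 1 := by rw [div_le_one hq1]; linarith
  have hdiv : ((q:ℝ) - 1) * (1 / ((q:ℝ) - 1)) = 1 := by field_simp
  rcases Nat.eq_zero_or_pos k with hk0 | hk
  · subst hk0
    exact hXY (funext fun v => v.elim0)
  rcases Nat.eq_zero_or_pos d with hd0 | hd
  · subst hd0
    unfold normSecondEig at heig
    rw [if_pos rfl] at heig
    have hlam1 : lam = 1 := le_antisymm hlam2 heig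
    rw [hlam1] at h
    nlinarith [h]
  have hd' : d ≠ 0 := hd.ne'
  haveI : NeZero q := ⟨by omega⟩
  have hkR : (0:ℝ) < (k:ℝ) := by exact_mod_cast hk
  obtain ⟨hprop, hdist⟩ := hC
  have hXp := hprop X hX
  have hYp := hprop Y hY
  have hdXY : δ * (k:ℝ) ≤ (colDist X Y : ℝ) := by
    have := hdist X hX Y hY hXY
    simpa [Fintype.card_fin] using this
  set ε : ℝ := 1 - δ with hε
  set β : ℝ := 1 - ((q:ℝ) - 1) * ε with hβ
  -- upper bound on each agreement set
  have hham : ∀ σ : Equiv.Perm (Fin q),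
      (#(univ.filter fun v => σ (Y v) = X v) : ℝ) ≤ ε * (k:ℝ) := by
    intro σ
    have h1 : (colDist X Y : ℕ) ≤ hammingDist X (σ ∘ Y) :=
      ciInf_le (OrderBot.bddBelow _) σ
    have h2 : hammingDist X (σ ∘ Y)
        = #(univ.filter fun v => ¬ (σ (Y v) = X v)) := by
      rw [hammingDist]
      apply congrArg
      apply Finset.filter_congr
      intro v _
      simp only [Function.comp_apply]
      exact ⟨fun hne he => hne he.symm, fun hne he => hne he.symm⟩
    have h3 := Finset.card_filter_add_card_filter_not
      (s := (univ : Finset (Fin k))) (p := fun v => σ (Y v) = X v)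
    rw [card_univ, Fintype.card_fin] at h3
    have h4 : δ * (k:ℝ) ≤ (hammingDist X (σ ∘ Y) : ℝ) := by
      refine le_trans hdXY ?_
      exact_mod_cast h1
    rw [h2] at h4
    have h5 : (#(univ.filter fun v => σ (Y v) = X v) : ℝ)
        + (#(univ.filter fun v => ¬ (σ (Y v) = X v)) : ℝ) = (k:ℝ) := by
      exact_mod_cast congrArg (Nat.cast : ℕ → ℝ) h3
    rw [hε]
    linarith
  -- lower bound on each agreement set
  have hlow : ∀ σ : Equiv.Perm (Fin q),
      β * (k:ℝ) ≤ (#(univ.filter fun v => σ (Y v) = X v) : ℝ) := by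
    intro σ
    have hswap : ∀ v : Fin k,
        (∑ t : Fin q, if (σ.trans (Equiv.addRight t)) (Y v) = X v then (1:ℕ) else 0) = 1 := by
      intro v
      have hcond : ∀ t : Fin q,
          ((σ.trans (Equiv.addRight t)) (Y v) = X v) ↔ (t = X v - σ (Y v)) := by
        intro t
        rw [Equiv.trans_apply]
        simp only [Equiv.coe_addRight]
        constructor
        · intro ht; rw [← ht]; exact (add_sub_cancel_left (σ (Y v)) t).symm
        · intro ht
          rw [ht]
          first
          | rw [add_comm, sub_add_cancel]
          | rw [add_comm, sub_add_cancel_right]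
          | abel
      rw [Finset.sum_congr rfl (fun t _ => if_congr (hcond t) rfl rfl)]
      rw [Finset.sum_ite_eq' univ (X v - σ (Y v)) (fun _ => (1:ℕ))]
      simp
    have htott : ∑ t : Fin q,
        #(univ.filter fun v => (σ.trans (Equiv.addRight t)) (Y v) = X v) = k := by
      simp only [Finset.card_filter]
      rw [Finset.sum_comm]
      rw [Finset.sum_congr rfl (fun v _ => hswap v), Finset.sum_const, card_univ,
        Fintype.card_fin, smul_eq_mul, mul_one]
    rw [← Finset.add_sum_erase _ _ (mem_univ (0 : Fin q))] at htott
    have h0 : (univ.filter fun v => (σ.trans (Equiv.addRight (0 : Fin q))) (Y v) = X v)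
        = (univ.filter fun v => σ (Y v) = X v) := by
      apply Finset.filter_congr
      intro v _
      simp [Equiv.trans_apply]
    rw [h0] at htott
    have hbound : ((∑ t ∈ (univ.erase (0 : Fin q)),
        #(univ.filter fun v => (σ.trans (Equiv.addRight t)) (Y v) = X v) : ℕ) : ℝ)
        ≤ ((q:ℝ) - 1) * (ε * (k:ℝ)) := by
      push_cast
      calc (∑ t ∈ (univ.erase (0 : Fin q)),
          (#(univ.filter fun v => (σ.trans (Equiv.addRight t)) (Y v) = X v) : ℝ))
          ≤ ∑ t ∈ (univ.erase (0 : Fin q)), ε * (k:ℝ) :=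
            Finset.sum_le_sum fun t _ => hham _
        _ = ((q:ℝ) - 1) * (ε * (k:ℝ)) := by
            rw [Finset.sum_const, Finset.card_erase_of_mem (mem_univ _), card_univ,
              Fintype.card_fin, nsmul_eq_mul]
            congr 1
            have : (1:ℕ) ≤ q := by omega
            push_cast [Nat.cast_sub this]
            ring
    have hcast : (#(univ.filter fun v => σ (Y v) = X v) : ℝ)
        + ((∑ t ∈ (univ.erase (0 : Fin q)),
          #(univ.filter fun v => (σ.trans (Equiv.addRight t)) (Y v) = X v) : ℕ) : ℝ) = (k:ℝ) := by
      exact_mod_cast congrArg (Nat.cast : ℕ → ℝ) htott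
    rw [hβ]
    linarith
  -- spectral bound for each agreement set
  have hE : ∀ σ : Equiv.Perm (Fin q),
      (∑ i, ∑ j, (if G.Adj i j then (d : ℝ)⁻¹ else 0)
          * (if σ (Y i) = X i then (1:ℝ) else 0) * (if σ (Y j) = X j then (1:ℝ) else 0))
        ≤ (#(univ.filter fun v => σ (Y v) = X v) : ℝ) ^ 2 / (k : ℝ)
          + lam * ((#(univ.filter fun v => σ (Y v) = X v) : ℝ)
            - (#(univ.filter fun v => σ (Y v) = X v) : ℝ) ^ 2 / (k : ℝ)) := by
    intro σ
    have hb := set_bound G hreg hd' heig hk (univ.filter fun v => σ (Y v) = X v)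
    simpa only [Finset.mem_filter, Finset.mem_univ, true_and] using hb
  -- total over σ of the quadratic forms
  have htotA : ∑ i : Fin k, ∑ j, (if G.Adj i j then (d : ℝ)⁻¹ else 0) = (k : ℝ) := by
    rw [Finset.sum_congr rfl (fun i _ => rowsum G hreg hd' i), Finset.sum_const, card_univ,
      Fintype.card_fin, nsmul_eq_mul, mul_one]
  have hEsum : ∑ σ : Equiv.Perm (Fin q), (∑ i, ∑ j, (if G.Adj i j then (d : ℝ)⁻¹ else 0)
      * (if σ (Y i) = X i then (1:ℝ) else 0) * (if σ (Y j) = X j then (1:ℝ) else 0))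
      = ((q - 2).factorial : ℝ) * (k : ℝ) := by
    rw [Finset.sum_comm]
    have hinner : ∀ i : Fin k, (∑ σ : Equiv.Perm (Fin q), ∑ j : Fin k,
        (if G.Adj i j then (d : ℝ)⁻¹ else 0) * (if σ (Y i) = X i then (1:ℝ) else 0)
          * (if σ (Y j) = X j then (1:ℝ) else 0))
        = ∑ j : Fin k, (if G.Adj i j then (d : ℝ)⁻¹ else 0) * ((q - 2).factorial : ℝ) := by
      intro i
      rw [Finset.sum_comm]
      refine Finset.sum_congr rfl fun j _ => ?_
      have hexp : ∀ σ : Equiv.Perm (Fin q),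
          (if G.Adj i j then (d : ℝ)⁻¹ else 0) * (if σ (Y i) = X i then (1:ℝ) else 0)
            * (if σ (Y j) = X j then (1:ℝ) else 0)
          = (if G.Adj i j then (d : ℝ)⁻¹ else 0)
            * (if σ (Y i) = X i ∧ σ (Y j) = X j then (1:ℝ) else 0) := by
        intro σ
        rw [mul_assoc, aux_ite_mul_ite]
      by_cases hadj : G.Adj i j
      · rw [Finset.sum_congr rfl (fun σ _ => hexp σ), ← Finset.mul_sum, Finset.sum_boole]
        congr 1
        exact_mod_cast congrArg (Nat.cast : ℕ → ℝ)
          (card_fiber2 (by omega) (hYp hadj) (hXp hadj))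
      · simp [hadj]
    rw [Finset.sum_congr rfl (fun i _ => hinner i)]
    have hpull : ∑ i : Fin k, ∑ j, (if G.Adj i j then (d : ℝ)⁻¹ else 0) * ((q - 2).factorial : ℝ)
        = (∑ i : Fin k, ∑ j, (if G.Adj i j then (d : ℝ)⁻¹ else 0)) * ((q - 2).factorial : ℝ) := by
      simp [Finset.sum_mul]
    rw [hpull, htotA, mul_comm]
  -- total over σ of the agreement counts
  have hρsum : (∑ σ : Equiv.Perm (Fin q), (#(univ.filter fun v => σ (Y v) = X v) : ℝ))
      = ((q - 1).factorial : ℝ) * (k : ℝ) := by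
    have hnat : ∑ σ : Equiv.Perm (Fin q), #(univ.filter fun v => σ (Y v) = X v)
        = (q - 1).factorial * k := by
      simp only [Finset.card_filter]
      rw [Finset.sum_comm]
      have hv : ∀ v : Fin k, (∑ σ : Equiv.Perm (Fin q),
          if σ (Y v) = X v then (1:ℕ) else 0) = (q - 1).factorial := by
        intro v
        rw [← Finset.card_filter]
        exact card_fiber1' (by omega) (Y v) (X v)
      rw [Finset.sum_congr rfl (fun v _ => hv v), Finset.sum_const, card_univ,
        Fintype.card_fin, smul_eq_mul, mul_comm]
    exact_mod_cast congrArg (Nat.cast : ℕ → ℝ) hnat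
  -- sum of squares bound
  have hsq : ∀ σ : Equiv.Perm (Fin q),
      (#(univ.filter fun v => σ (Y v) = X v) : ℝ) ^ 2
        ≤ (ε + β) * (k:ℝ) * (#(univ.filter fun v => σ (Y v) = X v) : ℝ)
          - ε * β * (k:ℝ) ^ 2 := by
    intro σ
    nlinarith [mul_nonneg (sub_nonneg.mpr (hham σ)) (sub_nonneg.mpr (hlow σ))]
  have hR2 : (∑ σ : Equiv.Perm (Fin q), (#(univ.filter fun v => σ (Y v) = X v) : ℝ) ^ 2)
      ≤ (ε + β) * (k:ℝ) * (((q - 1).factorial : ℝ) * (k:ℝ))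
        - ε * β * (k:ℝ) ^ 2 * (q.factorial : ℝ) := by
    calc (∑ σ : Equiv.Perm (Fin q), (#(univ.filter fun v => σ (Y v) = X v) : ℝ) ^ 2)
        ≤ ∑ σ : Equiv.Perm (Fin q), ((ε + β) * (k:ℝ)
            * (#(univ.filter fun v => σ (Y v) = X v) : ℝ) - ε * β * (k:ℝ) ^ 2) :=
          Finset.sum_le_sum fun σ _ => hsq σ
      _ = (ε + β) * (k:ℝ) * (∑ σ : Equiv.Perm (Fin q),
            (#(univ.filter fun v => σ (Y v) = X v) : ℝ))
          - ε * β * (k:ℝ) ^ 2 * (q.factorial : ℝ) := by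
          rw [Finset.sum_sub_distrib, ← Finset.mul_sum, Finset.sum_const, card_univ,
            Fintype.card_perm, Fintype.card_fin, nsmul_eq_mul]
          ring
      _ = _ := by rw [hρsum]
  -- summed spectral inequality
  have hs := Finset.sum_le_sum (fun (σ : Equiv.Perm (Fin q)) (_ : σ ∈ univ) => hE σ)
  rw [hEsum] at hs
  have hrhs : ∑ σ : Equiv.Perm (Fin q),
      ((#(univ.filter fun v => σ (Y v) = X v) : ℝ) ^ 2 / (k : ℝ)
        + lam * ((#(univ.filter fun v => σ (Y v) = X v) : ℝ)
          - (#(univ.filter fun v => σ (Y v) = X v) : ℝ) ^ 2 / (k : ℝ)))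
      = (∑ σ : Equiv.Perm (Fin q), (#(univ.filter fun v => σ (Y v) = X v) : ℝ) ^ 2) / (k:ℝ)
        + lam * (((q - 1).factorial : ℝ) * (k:ℝ))
        - lam * ((∑ σ : Equiv.Perm (Fin q),
            (#(univ.filter fun v => σ (Y v) = X v) : ℝ) ^ 2) / (k:ℝ)) := by
    rw [← hρsum]
    simp only [mul_sub]
    rw [Finset.sum_add_distrib, Finset.sum_sub_distrib, ← Finset.sum_div, ← Finset.mul_sum,
      ← Finset.mul_sum, ← Finset.sum_div]
    ring
  rw [hrhs] at hs
  -- put everything together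
  have h1m : (0:ℝ) ≤ 1 - lam := by linarith
  have e2 : (1 - lam) * ((∑ σ : Equiv.Perm (Fin q),
        (#(univ.filter fun v => σ (Y v) = X v) : ℝ) ^ 2) / (k:ℝ))
      ≤ (1 - lam) * ((ε + β) * (((q - 1).factorial : ℝ) * (k:ℝ))
          - ε * β * (k:ℝ) * (q.factorial : ℝ)) := by
    refine mul_le_mul_of_nonneg_left ?_ h1m
    rw [div_le_iff₀ hkR]
    exact hR2.trans_eq (by ring)
  have hF2pos : (0:ℝ) < ((q - 2).factorial : ℝ) := by exact_mod_cast (q - 2).factorial_pos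
  have hF1 : ((q - 1).factorial : ℝ) = ((q:ℝ) - 1) * ((q - 2).factorial : ℝ) := by
    have hn : (q - 1).factorial = (q - 1) * (q - 2).factorial := by
      obtain ⟨m, rfl⟩ : ∃ m, q = m + 2 := ⟨q - 2, by omega⟩
      simp [Nat.factorial_succ]
    rw [hn]
    push_cast [Nat.cast_sub (show 1 ≤ q by omega)]
    ring
  have hF0 : (q.factorial : ℝ) = (q:ℝ) * (((q:ℝ) - 1) * ((q - 2).factorial : ℝ)) := by
    have hn0 : q.factorial = q * (q - 1).factorial := by
      rcases q with _ | m
      · omega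
      · simp [Nat.factorial_succ]
    rw [hn0, ← hF1]
    push_cast
    ring
  have hprev : ((q - 2).factorial : ℝ) * (k:ℝ)
      ≤ lam * (((q - 1).factorial : ℝ) * (k:ℝ))
        + (1 - lam) * ((ε + β) * (((q - 1).factorial : ℝ) * (k:ℝ))
          - ε * β * (k:ℝ) * (q.factorial : ℝ)) := by
    calc ((q - 2).factorial : ℝ) * (k:ℝ)
        ≤ (∑ σ : Equiv.Perm (Fin q),
              (#(univ.filter fun v => σ (Y v) = X v) : ℝ) ^ 2) / (k:ℝ)
            + lam * (((q - 1).factorial : ℝ) * (k:ℝ))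
            - lam * ((∑ σ : Equiv.Perm (Fin q),
              (#(univ.filter fun v => σ (Y v) = X v) : ℝ) ^ 2) / (k:ℝ)) := hs
      _ = lam * (((q - 1).factorial : ℝ) * (k:ℝ))
            + (1 - lam) * ((∑ σ : Equiv.Perm (Fin q),
              (#(univ.filter fun v => σ (Y v) = X v) : ℝ) ^ 2) / (k:ℝ)) := by ring
      _ ≤ _ := by linarith [e2]
  rw [hF1, hF0] at hprev
  have hfin : (1:ℝ) ≤ ((q:ℝ) - 1) * (lam + (1 - lam) * (ε + β - (q:ℝ) * ε * β)) := by
    have hpos : (0:ℝ) < ((q - 2).factorial : ℝ) * (k:ℝ) := mul_pos hF2pos hkR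
    have hbig : ((q - 2).factorial : ℝ) * (k:ℝ) * 1
        ≤ ((q - 2).factorial : ℝ) * (k:ℝ)
          * (((q:ℝ) - 1) * (lam + (1 - lam) * (ε + β - (q:ℝ) * ε * β))) := by
      calc ((q - 2).factorial : ℝ) * (k:ℝ) * 1 = ((q - 2).factorial : ℝ) * (k:ℝ) := by ring
        _ ≤ _ := hprev.trans_eq (by ring)
    exact le_of_mul_le_mul_left hbig hpos
  have hAe : ε + β - (q:ℝ) * ε * β = ((q:ℝ) - 1) * ε ^ 2 + β ^ 2 := by
    rw [hβ]
    ring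
  rw [hAe] at hfin
  have hmul := mul_lt_mul_of_pos_left h hq1
  clear_value ε β
  nlinarith [hfin, hmul, hdiv, hq1]

/-- Any `(δ, lam) ∈ [1 - 1/(q-1), 1 - 1/q] × (0, 1]` satisfying
`(q-1)(1-δ)² + (1 - (q-1)(1-δ))² < 1 - (1 - 1/(q-1))/(1 - lam)` is in the unique
regime.  (The inequality is stated multiplied through by `1 - lam ≥ 0`, which is
equivalent on the domain `lam ∈ (0, 1]`.) -/
theorem strong_uniqueRegime (q : ℕ) (hq : 3 ≤ q) (δ lam : ℝ)
    (hδ1 : 1 - 1 / ((q : ℝ) - 1) ≤ δ) (hδ2 : δ ≤ 1 - 1 / (q : ℝ))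
    (hlam1 : 0 < lam) (hlam2 : lam ≤ 1)
    (h : (1 - lam) * (((q : ℝ) - 1) * (1 - δ) ^ 2 + (1 - ((q : ℝ) - 1) * (1 - δ)) ^ 2)
      < (1 - lam) - (1 - 1 / ((q : ℝ) - 1))) :
    UniqueRegime q δ lam := by
  have hub : ∀ d n : ℕ, colorCount q δ lam d n ≤ 1 := by
    intro d n
    apply csSup_le'
    rintro m ⟨k, hk, G, hreg, heig, C, hC, rfl⟩
    exact core_card hq hlam2 h G hreg heig C hC
  have hlb : ∀ n : ℕ, 1 ≤ colorCount q δ lam 1 n := by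
    intro n
    have hmem : 1 ∈ {m : ℕ | ∃ k ≤ n, ∃ G : SimpleGraph (Fin k),
        G.IsRegularOfDegree 1 ∧ normSecondEig 1 G ≤ lam ∧
        ∃ C : Finset (Fin k → Fin q), IsDistinctSet G δ C ∧ C.card = m} := by
      refine ⟨0, Nat.zero_le n, ⊥, fun v => v.elim0, ?_, Finset.univ, ⟨?_, ?_⟩, ?_⟩
      · unfold normSecondEig
        rw [if_neg one_ne_zero]
        have hgen : ∀ s : Set ℝ, (∀ r ∈ s, False) → sSup s ≤ lam := by
          intro s hs
          have hse : s = ∅ := Set.eq_empty_iff_forall_notMem.mpr fun r hr => hs r hr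
          rw [hse, Real.sSup_empty]
          exact hlam1.le
        apply hgen
        rintro r ⟨x, hx, -⟩
        exact hx (funext fun v => v.elim0)
      · intro Z _ u v hadj
        exact u.elim0
      · intro Z _ W _ hZW
        exact absurd (funext fun v : Fin 0 => v.elim0) hZW
      · rw [Finset.card_univ, Fintype.card_fun, Fintype.card_fin, Fintype.card_fin, pow_zero]
    have hbdd : BddAbove {m : ℕ | ∃ k ≤ n, ∃ G : SimpleGraph (Fin k),
        G.IsRegularOfDegree 1 ∧ normSecondEig 1 G ≤ lam ∧
        ∃ C : Finset (Fin k → Fin q), IsDistinctSet G δ C ∧ C.card = m} := by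
      refine ⟨q ^ n, ?_⟩
      rintro m ⟨k, hk, G, -, -, C, -, rfl⟩
      calc C.card ≤ Fintype.card (Fin k → Fin q) := Finset.card_le_univ C
        _ = q ^ k := by simp
        _ ≤ q ^ n := Nat.pow_le_pow_right (by omega) hk
    exact le_csSup hbdd hmem
  have hone : ∀ n : ℕ, colorCount q δ lam 1 n = 1 := fun n => le_antisymm (hub 1 n) (hlb n)
  unfold UniqueRegime
  apply le_antisymm
  · apply iSup_le
    intro d
    refine Filter.limsup_le_of_le (by isBoundedDefault)
      (Filter.Eventually.of_forall fun n => ?_)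
    exact_mod_cast hub d n
  · have hconst : (fun n : ℕ => ((colorCount q δ lam 1 n : ℕ) : ENNReal)) = fun _ => (1 : ENNReal) := by
      funext n
      rw [hone n]
      norm_num
    refine le_trans ?_ (le_iSup (fun d : ℕ => Filter.limsup
      (fun n : ℕ => ((colorCount q δ lam d n : ℕ) : ENNReal)) Filter.atTop) 1)
    rw [hconst, Filter.limsup_const]
end
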